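/- arXiv:math/0512202 — 5 statements merged into one kernel-verified Lean document; each statement's English description precedes it below -/
import Mathlib

section
/- Let R be a finite-dimensional G-graded algebra over a field F that is graded simple (R² ≠ 0 and R has no nontrivial proper graded ideals), and let I be a minimal graded right ideal of R. Then I = aR for some homogeneous idempotent a ∈ I. -/
/-- Key computation: multiplying by a homogeneous element shifts components. -/
theorem decompose_mul_left_aux {G : Type*} [Group G] [DecidableEq G] {F : Type*} [Field F]
    {R : Type*} [NonUnitalRing R] [Module F R] [SMulCommClass F R R] [IsScalarTower F R R]
    (ℬ : G → Submodule F R) [DirectSum.Decomposition ℬ]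
    (hmul : ∀ g h : G, ∀ x ∈ ℬ g, ∀ y ∈ ℬ h, x * y ∈ ℬ (g * h))
    {g : G} {b : R} (hb : b ∈ ℬ g) (h : G) (x : R) :
    ((DirectSum.decompose ℬ (b * x)) (g * h) : R) = b * ((DirectSum.decompose ℬ x) h : R) := by
  induction x using DirectSum.Decomposition.inductionOn ℬ with
  | zero => simp
  | @homogeneous i m =>
    by_cases hik : h = i
    · subst hik
      rw [DirectSum.decompose_of_mem_same ℬ m.2,
        DirectSum.decompose_of_mem_same ℬ (hmul g h b hb m m.2)]
    · rw [DirectSum.decompose_of_mem_ne ℬ m.2 (Ne.symm hik),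
        DirectSum.decompose_of_mem_ne ℬ (hmul g _ b hb m m.2)
          (fun hc => hik (mul_left_cancel hc).symm), mul_zero]
  | add m m' hm hm' =>
    rw [mul_add, DirectSum.decompose_add, DirectSum.decompose_add, DirectSum.add_apply,
      DirectSum.add_apply, Submodule.coe_add, Submodule.coe_add, mul_add, hm, hm']

/-- In a finite-dimensional graded simple algebra, every minimal graded right ideal
is of the form `aR` for a homogeneous idempotent `a` belonging to it. -/
theorem stmt_0 {G : Type*} [Group G] [DecidableEq G] {F : Type*} [Field F]
    {R : Type*} [NonUnitalRing R] [Module F R] [SMulCommClass F R R] [IsScalarTower F R R]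
    [FiniteDimensional F R]
    (ℬ : G → Submodule F R) [DirectSum.Decomposition ℬ]
    (hmul : ∀ g h : G, ∀ x ∈ ℬ g, ∀ y ∈ ℬ h, x * y ∈ ℬ (g * h))
    -- `R` is graded simple:
    (hR2 : ∃ x y : R, x * y ≠ 0)
    (hsimple : ∀ J : TwoSidedIdeal R,
      (∀ x ∈ J, ∀ g : G, ((DirectSum.decompose ℬ x) g : R) ∈ J) → J = ⊥ ∨ J = ⊤)
    -- `I` is a graded right ideal:
    (I : Submodule F R)
    (hIr : ∀ x ∈ I, ∀ r : R, x * r ∈ I)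
    (hIgr : ∀ x ∈ I, ∀ g : G, ((DirectSum.decompose ℬ x) g : R) ∈ I)
    (hIne : I ≠ ⊥)
    -- `I` is minimal among nonzero graded right ideals:
    (hImin : ∀ J : Submodule F R, (∀ x ∈ J, ∀ r : R, x * r ∈ J) →
      (∀ x ∈ J, ∀ g : G, ((DirectSum.decompose ℬ x) g : R) ∈ J) → J ≠ ⊥ → J ≤ I → J = I) :
    ∃ a ∈ I, (∃ g : G, a ∈ ℬ g) ∧ a * a = a ∧ ∀ x : R, x ∈ I ↔ ∃ r : R, x = a * r := by
  classical
  have L : ∀ {g : G} {b : R}, b ∈ ℬ g → ∀ (h : G) (x : R),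
      ((DirectSum.decompose ℬ (b * x)) (g * h) : R) = b * ((DirectSum.decompose ℬ x) h : R) :=
    fun hb h x => decompose_mul_left_aux ℬ hmul hb h x
  -- Step 1: there is a homogeneous `b ∈ I` with `b * I ≠ 0`.
  have hex : ∃ (g : G) (b : R), b ∈ ℬ g ∧ b ∈ I ∧ ∃ c ∈ I, b * c ≠ 0 := by
    by_contra hcon
    push_neg at hcon
    have hII : ∀ x ∈ I, ∀ c ∈ I, x * c = 0 := by
      intro x hx c hc
      conv_lhs => rw [← DirectSum.sum_support_decompose ℬ x]
      rw [Finset.sum_mul]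
      exact Finset.sum_eq_zero fun g _ =>
        hcon g _ ((DirectSum.decompose ℬ x g).2) (hIgr x hx g) c hc
    -- the graded two-sided ideal `K = I + R*I`
    set S : Set R := {y | ∃ r : R, ∃ x ∈ I, y = r * x} with hS
    set K : Submodule F R := I ⊔ Submodule.span F S with hK
    have hSK : Submodule.span F S ≤ K := le_sup_right
    have hIK : I ≤ K := le_sup_left
    have hleft : ∀ r : R, ∀ v ∈ K, r * v ∈ K := by
      intro r v hv
      obtain ⟨i, hi, s, hs, rfl⟩ := Submodule.mem_sup.1 hv
      rw [mul_add]
      refine K.add_mem (hSK (Submodule.subset_span ⟨r, i, hi, rfl⟩)) (hSK ?_)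
      refine Submodule.span_induction (fun y hy => ?_) (by simp) ?_ ?_ hs
      · obtain ⟨r', x, hx, rfl⟩ := hy
        exact Submodule.subset_span ⟨r * r', x, hx, (mul_assoc r r' x).symm⟩
      · intro y z _ _ hy hz
        rw [mul_add]; exact Submodule.add_mem _ hy hz
      · intro c y _ hy
        rw [mul_smul_comm]; exact Submodule.smul_mem _ c hy
    have hright : ∀ v ∈ K, ∀ r : R, v * r ∈ K := by
      intro v hv r
      obtain ⟨i, hi, s, hs, rfl⟩ := Submodule.mem_sup.1 hv
      rw [add_mul]
      refine K.add_mem (hIK (hIr i hi r)) (hSK ?_)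
      refine Submodule.span_induction (fun y hy => ?_) (by simp) ?_ ?_ hs
      · obtain ⟨r', x, hx, rfl⟩ := hy
        exact Submodule.subset_span ⟨r', x * r, hIr x hx r, mul_assoc r' x r⟩
      · intro y z _ _ hy hz
        rw [add_mul]; exact Submodule.add_mem _ hy hz
      · intro c y _ hy
        rw [smul_mul_assoc]; exact Submodule.smul_mem _ c hy
    set Kt : TwoSidedIdeal R := TwoSidedIdeal.mk' (K : Set R) K.zero_mem
      (fun ha hb => K.add_mem ha hb) (fun ha => K.neg_mem ha)
      (fun {x y} hy => hleft x y hy) (fun {x y} hx => hright x hx y) with hKt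
    have hmemKt : ∀ x : R, x ∈ Kt ↔ x ∈ K := fun x => TwoSidedIdeal.mem_mk' _ _ _ _ _ _ x
    -- gradedness of K
    have hKgr : ∀ x ∈ K, ∀ g : G, ((DirectSum.decompose ℬ x) g : R) ∈ K := by
      intro x hx g
      obtain ⟨i, hi, s, hs, rfl⟩ := Submodule.mem_sup.1 hx
      rw [DirectSum.decompose_add, DirectSum.add_apply, Submodule.coe_add]
      refine K.add_mem (hIK (hIgr i hi g)) ?_
      refine Submodule.span_induction (p := fun y _ => ∀ g : G,
          ((DirectSum.decompose ℬ y) g : R) ∈ K) (fun y hy => ?_) (by simp) ?_ ?_ hs g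
      · obtain ⟨r, x', hx', rfl⟩ := hy
        intro g
        rw [show r * x' = ∑ k ∈ (DirectSum.decompose ℬ r).support,
          ((DirectSum.decompose ℬ r k : R) * x') by
            rw [← Finset.sum_mul, DirectSum.sum_support_decompose]]
        rw [DirectSum.decompose_sum, DFinsupp.finset_sum_apply, AddSubmonoidClass.coe_finset_sum]
        refine K.sum_mem fun k _ => ?_
        have := L (DirectSum.decompose ℬ r k).2 (k⁻¹ * g) x'
        rw [mul_inv_cancel_left] at this
        rw [this]
        exact hSK (Submodule.subset_span ⟨_, _, hIgr x' hx' (k⁻¹ * g), rfl⟩)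
      · intro y z _ _ hy hz g
        rw [DirectSum.decompose_add, DirectSum.add_apply, Submodule.coe_add]
        exact K.add_mem (hy g) (hz g)
      · intro c y _ hy g
        rw [DirectSum.decompose_smul, DirectSum.smul_apply, Submodule.coe_smul]
        exact K.smul_mem c (hy g)
    rcases hsimple Kt (fun x hx g => (hmemKt _).2 (hKgr x ((hmemKt x).1 hx) g)) with hbot | htop
    · obtain ⟨x, hxI, hxne⟩ := Submodule.exists_mem_ne_zero_of_ne_bot hIne
      exact hxne ((TwoSidedIdeal.mem_bot _).1 (hbot ▸ (hmemKt x).2 (hIK hxI)))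
    · -- K = R, but K * K = 0
      have hA : ∀ v ∈ K, ∀ x ∈ I, x * v = 0 := by
        intro v hv x hx
        obtain ⟨i, hi, s, hs, rfl⟩ := Submodule.mem_sup.1 hv
        rw [mul_add, hII x hx i hi, zero_add]
        refine Submodule.span_induction (p := fun y _ => x * y = 0) (fun y hy => ?_)
          (by simp) ?_ ?_ hs
        · obtain ⟨r, x', hx', rfl⟩ := hy
          rw [← mul_assoc]
          exact hII (x * r) (hIr x hx r) x' hx'
        · intro y z _ _ hy hz; rw [mul_add, hy, hz, add_zero]
        · intro c y _ hy; rw [mul_smul_comm, hy, smul_zero]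
      have hB : ∀ u ∈ K, ∀ v ∈ K, u * v = 0 := by
        intro u hu v hv
        obtain ⟨i, hi, s, hs, rfl⟩ := Submodule.mem_sup.1 hu
        rw [add_mul, hA v hv i hi, zero_add]
        refine Submodule.span_induction (p := fun y _ => y * v = 0) (fun y hy => ?_)
          (by simp) ?_ ?_ hs
        · obtain ⟨r, x', hx', rfl⟩ := hy
          rw [mul_assoc, hA v hv x' hx', mul_zero]
        · intro y z _ _ hy hz; rw [add_mul, hy, hz, add_zero]
        · intro c y _ hy; rw [smul_mul_assoc, hy, smul_zero]
      obtain ⟨x, y, hxy⟩ := hR2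
      exact hxy (hB x ((hmemKt x).1 (htop ▸ trivial)) y ((hmemKt y).1 (htop ▸ trivial)))
  obtain ⟨g, b, hbg, hbI, c, hcI, hbc⟩ := hex
  have hbne : b ≠ 0 := fun h => hbc (by simp [h])
  -- Step 2: `bI = I`
  set J : Submodule F R := I.map (LinearMap.mulLeft F b) with hJdef
  have hJmem : ∀ y : R, y ∈ J ↔ ∃ x ∈ I, b * x = y := by
    intro y; simp [hJdef, Submodule.mem_map, LinearMap.mulLeft_apply]
  have hJ : J = I := by
    refine hImin J ?_ ?_ ?_ ?_
    · intro y hy r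
      obtain ⟨x, hx, rfl⟩ := (hJmem y).1 hy
      exact (hJmem _).2 ⟨x * r, hIr x hx r, (mul_assoc b x r).symm⟩
    · intro y hy h
      obtain ⟨x, hx, rfl⟩ := (hJmem y).1 hy
      have := L hbg (g⁻¹ * h) x
      rw [mul_inv_cancel_left] at this
      rw [this]
      exact (hJmem _).2 ⟨_, hIgr x hx (g⁻¹ * h), rfl⟩
    · intro hbot
      have : b * c ∈ J := (hJmem _).2 ⟨c, hcI, rfl⟩
      rw [hbot, Submodule.mem_bot] at this
      exact hbc this
    · intro y hy
      obtain ⟨x, hx, rfl⟩ := (hJmem y).1 hy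
      exact hIr b hbI x
  obtain ⟨a', ha'I, hba'⟩ := (hJmem b).1 (hJ ▸ hbI)
  set a : R := ((DirectSum.decompose ℬ a') 1 : R) with hadef
  have ha1 : a ∈ ℬ 1 := (DirectSum.decompose ℬ a' 1).2
  have haI : a ∈ I := hIgr a' ha'I 1
  have hba : b * a = b := by
    have := L hbg 1 a'
    rw [hba', mul_one, DirectSum.decompose_of_mem_same ℬ hbg] at this
    exact this.symm
  have hane : a ≠ 0 := fun h => hbne (by rw [← hba, h, mul_zero])
  -- Step 3: annihilator of b in I is ⊥, so a is idempotent
  set J2 : Submodule F R := I ⊓ LinearMap.ker (LinearMap.mulLeft F b) with hJ2def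
  have hJ2mem : ∀ y : R, y ∈ J2 ↔ y ∈ I ∧ b * y = 0 := by
    intro y; simp [hJ2def, LinearMap.mem_ker, LinearMap.mulLeft_apply]
  have hJ2bot : J2 = ⊥ := by
    by_contra hne
    have hJ2I : J2 = I := by
      refine hImin J2 ?_ ?_ hne inf_le_left
      · intro y hy r
        obtain ⟨hyI, hy0⟩ := (hJ2mem y).1 hy
        exact (hJ2mem _).2 ⟨hIr y hyI r, by rw [← mul_assoc, hy0, zero_mul]⟩
      · intro y hy h
        obtain ⟨hyI, hy0⟩ := (hJ2mem y).1 hy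
        refine (hJ2mem _).2 ⟨hIgr y hyI h, ?_⟩
        have := L hbg h y
        rw [hy0] at this
        simpa using this.symm
    have := ((hJ2mem a).1 (hJ2I ▸ haI)).2
    rw [hba] at this
    exact hbne this
  have haa : a * a = a := by
    have h1 : a * a - a ∈ J2 := (hJ2mem _).2 ⟨I.sub_mem (hIr a haI a) haI,
      by rw [mul_sub, ← mul_assoc, hba, hba, sub_self]⟩
    rw [hJ2bot, Submodule.mem_bot] at h1
    exact sub_eq_zero.1 h1
  -- Step 4: aR = I
  set K3 : Submodule F R := LinearMap.range (LinearMap.mulLeft F a) with hK3def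
  have hK3mem : ∀ y : R, y ∈ K3 ↔ ∃ r : R, a * r = y := by
    intro y; simp [hK3def, LinearMap.mem_range, LinearMap.mulLeft_apply]
  have hK3 : K3 = I := by
    refine hImin K3 ?_ ?_ ?_ ?_
    · intro y hy r
      obtain ⟨r', rfl⟩ := (hK3mem y).1 hy
      exact (hK3mem _).2 ⟨r' * r, (mul_assoc a r' r).symm⟩
    · intro y hy h
      obtain ⟨r, rfl⟩ := (hK3mem y).1 hy
      have := L ha1 h r
      rw [one_mul] at this
      rw [this]
      exact (hK3mem _).2 ⟨_, rfl⟩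
    · intro hbot
      have : a ∈ K3 := (hK3mem a).2 ⟨a, haa⟩
      rw [hbot, Submodule.mem_bot] at this
      exact hane this
    · intro y hy
      obtain ⟨r, rfl⟩ := (hK3mem y).1 hy
      exact hIr a haI r
  refine ⟨a, haI, ⟨1, ha1⟩, haa, fun x => ?_⟩
  rw [← hK3]
  simp only [hK3mem]
  exact ⟨fun ⟨r, h⟩ => ⟨r, h.symm⟩, fun ⟨r, h⟩ => ⟨r, h.symm⟩⟩
end

section
/- Let C be a finite-dimensional graded simple algebra over an arbitrary field F with dim C_e = 1. Then C is a graded division algebra, i.e., every nonzero homogeneous element of C is invertible. -/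
set_option linter.unusedSectionVars false
set_option linter.unnecessarySimpa false

section aux

variable {G : Type*} [Group G] [DecidableEq G] {F : Type*} [Field F]
    {C : Type*} [NonUnitalRing C] [Module F C] [SMulCommClass F C C] [IsScalarTower F C C]
    (ℬ : G → Submodule F C) [DirectSum.Decomposition ℬ]

private lemma aux_ne {x : C} {g g' : G} (hx : x ∈ ℬ g) (hx' : x ∈ ℬ g') (h : g ≠ g') :
    x = 0 := by
  rw [← DirectSum.decompose_of_mem_same ℬ hx', DirectSum.decompose_of_mem_ne ℬ hx h]

private lemma aux_mul_right (hmul : ∀ g h : G, ∀ x ∈ ℬ g, ∀ y ∈ ℬ h, x * y ∈ ℬ (g * h))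
    {c : C} {k : G} (hc : c ∈ ℬ k) (z : C) (g : G) :
    ((DirectSum.decompose ℬ (z * c)) (g * k) : C) = ((DirectSum.decompose ℬ z) g : C) * c := by
  refine DirectSum.Decomposition.inductionOn ℬ
    (motive := fun z => ((DirectSum.decompose ℬ (z * c)) (g * k) : C)
      = ((DirectSum.decompose ℬ z) g : C) * c) ?_ ?_ ?_ z
  · simp
  · intro i m
    by_cases hi : i = g
    · subst hi
      rw [DirectSum.decompose_of_mem_same ℬ (hmul i k _ m.2 _ hc),
        DirectSum.decompose_of_mem_same ℬ m.2]
    · rw [DirectSum.decompose_of_mem_ne ℬ (hmul i k _ m.2 _ hc)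
        (fun H => hi (mul_right_cancel H)),
        DirectSum.decompose_of_mem_ne ℬ m.2 hi, zero_mul]
  · intro m m' hm hm'
    rw [add_mul, DirectSum.decompose_add, DirectSum.add_apply, Submodule.coe_add, hm, hm',
      DirectSum.decompose_add, DirectSum.add_apply, Submodule.coe_add, add_mul]

private lemma aux_mul_left (hmul : ∀ g h : G, ∀ x ∈ ℬ g, ∀ y ∈ ℬ h, x * y ∈ ℬ (g * h))
    {c : C} {k : G} (hc : c ∈ ℬ k) (z : C) (g : G) :
    ((DirectSum.decompose ℬ (c * z)) (k * g) : C) = c * ((DirectSum.decompose ℬ z) g : C) := by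
  refine DirectSum.Decomposition.inductionOn ℬ
    (motive := fun z => ((DirectSum.decompose ℬ (c * z)) (k * g) : C)
      = c * ((DirectSum.decompose ℬ z) g : C)) ?_ ?_ ?_ z
  · simp
  · intro i m
    by_cases hi : i = g
    · subst hi
      rw [DirectSum.decompose_of_mem_same ℬ (hmul k i _ hc _ m.2),
        DirectSum.decompose_of_mem_same ℬ m.2]
    · rw [DirectSum.decompose_of_mem_ne ℬ (hmul k i _ hc _ m.2)
        (fun H => hi (mul_left_cancel H)),
        DirectSum.decompose_of_mem_ne ℬ m.2 hi, mul_zero]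
  · intro m m' hm hm'
    rw [mul_add, DirectSum.decompose_add, DirectSum.add_apply, Submodule.coe_add, hm, hm',
      DirectSum.decompose_add, DirectSum.add_apply, Submodule.coe_add, mul_add]

private lemma aux_span_comp (S : Set C) (hS : ∀ s ∈ S, ∃ g, s ∈ ℬ g) {z : C}
    (hz : z ∈ Submodule.span F S) (g : G) :
    ((DirectSum.decompose ℬ z) g : C) ∈ Submodule.span F {s | s ∈ S ∧ s ∈ ℬ g} := by
  induction hz using Submodule.span_induction with
  | mem s hs =>
    obtain ⟨g', hg'⟩ := hS s hs
    by_cases hgg : g' = g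
    · subst hgg
      rw [DirectSum.decompose_of_mem_same ℬ hg']
      exact Submodule.subset_span ⟨hs, hg'⟩
    · rw [DirectSum.decompose_of_mem_ne ℬ hg' hgg]
      exact Submodule.zero_mem _
  | zero => rw [DirectSum.decompose_zero]; simpa using Submodule.zero_mem _
  | add x y hx hy ihx ihy =>
    rw [DirectSum.decompose_add, DirectSum.add_apply, Submodule.coe_add]
    exact Submodule.add_mem _ ihx ihy
  | smul a x hx ihx =>
    rw [DirectSum.decompose_smul, DirectSum.smul_apply, Submodule.coe_smul]
    exact Submodule.smul_mem _ _ ihx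

private lemma aux_left_closed (S : Set C)
    (hL : ∀ s ∈ S, ∀ (k : G) (c : C), c ∈ ℬ k → c * s ∈ Submodule.span F S) :
    ∀ z ∈ Submodule.span F S, ∀ c : C, c * z ∈ Submodule.span F S := by
  intro z hz c
  induction hz using Submodule.span_induction with
  | mem s hs =>
    refine DirectSum.Decomposition.inductionOn ℬ
      (motive := fun c => c * s ∈ Submodule.span F S) ?_ ?_ ?_ c
    · simp
    · intro i m; exact hL s hs i _ m.2
    · intro m m' hm hm'; rw [add_mul]; exact Submodule.add_mem _ hm hm'
  | zero => rw [mul_zero]; exact Submodule.zero_mem _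
  | add x y hx hy ihx ihy => rw [mul_add]; exact Submodule.add_mem _ ihx ihy
  | smul a x hx ihx => rw [mul_smul_comm]; exact Submodule.smul_mem _ _ ihx

private lemma aux_right_closed (S : Set C)
    (hR : ∀ s ∈ S, ∀ (k : G) (c : C), c ∈ ℬ k → s * c ∈ Submodule.span F S) :
    ∀ z ∈ Submodule.span F S, ∀ c : C, z * c ∈ Submodule.span F S := by
  intro z hz c
  induction hz using Submodule.span_induction with
  | mem s hs =>
    refine DirectSum.Decomposition.inductionOn ℬ
      (motive := fun c => s * c ∈ Submodule.span F S) ?_ ?_ ?_ c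
    · simp
    · intro i m; exact hR s hs i _ m.2
    · intro m m' hm hm'; rw [mul_add]; exact Submodule.add_mem _ hm hm'
  | zero => rw [zero_mul]; exact Submodule.zero_mem _
  | add x y hx hy ihx ihy => rw [add_mul]; exact Submodule.add_mem _ ihx ihy
  | smul a x hx ihx => rw [smul_mul_assoc]; exact Submodule.smul_mem _ _ ihx

private lemma aux_cases (hmul : ∀ g h : G, ∀ x ∈ ℬ g, ∀ y ∈ ℬ h, x * y ∈ ℬ (g * h))
    (hsimple : ∀ I : TwoSidedIdeal C,
      (∀ x ∈ I, ∀ g : G, ((DirectSum.decompose ℬ x) g : C) ∈ I) → I = ⊥ ∨ I = ⊤)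
    (S : Set C) (hS : ∀ s ∈ S, ∃ g, s ∈ ℬ g)
    (hL : ∀ s ∈ S, ∀ (k : G) (c : C), c ∈ ℬ k → c * s ∈ Submodule.span F S)
    (hR : ∀ s ∈ S, ∀ (k : G) (c : C), c ∈ ℬ k → s * c ∈ Submodule.span F S) :
    (∀ s ∈ S, s = (0:C)) ∨ (∀ z : C, z ∈ Submodule.span F S) := by
  let I : TwoSidedIdeal C := TwoSidedIdeal.mk' (Submodule.span F S : Set C)
      (Submodule.zero_mem _) (fun hx hy => Submodule.add_mem _ hx hy)
      (fun hx => Submodule.neg_mem _ hx)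
      (fun {x y} hy => aux_left_closed ℬ S hL y hy x)
      (fun {x y} hx => aux_right_closed ℬ S hR x hx y)
  have hmem : ∀ x : C, x ∈ I ↔ x ∈ Submodule.span F S := fun x =>
    TwoSidedIdeal.mem_mk' _ _ _ _ _ _ x
  rcases hsimple I (fun x hx g => (hmem _).2
      (Submodule.span_mono (fun t ht => ht.1) (aux_span_comp ℬ S hS ((hmem x).1 hx) g))) with
    h | h
  · left
    intro s hs
    have hsI : s ∈ I := (hmem s).2 (Submodule.subset_span hs)
    rw [h] at hsI
    exact (TwoSidedIdeal.mem_bot C).1 hsI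
  · right
    intro z
    exact (hmem z).1 (h ▸ TwoSidedIdeal.mem_top C)

private lemma aux_annl (hmul : ∀ g h : G, ∀ x ∈ ℬ g, ∀ y ∈ ℬ h, x * y ∈ ℬ (g * h))
    (hC2 : ∃ x y : C, x * y ≠ 0)
    (hsimple : ∀ I : TwoSidedIdeal C,
      (∀ x ∈ I, ∀ g : G, ((DirectSum.decompose ℬ x) g : C) ∈ I) → I = ⊥ ∨ I = ⊤) :
    ∀ a : C, (∀ c : C, a * c = 0) → a = 0 := by
  let I : TwoSidedIdeal C := TwoSidedIdeal.mk' {a : C | ∀ c : C, a * c = 0}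
      (fun c => zero_mul c)
      (fun {x y} hx hy c => by rw [add_mul, hx c, hy c, add_zero])
      (fun {x} hx c => by rw [neg_mul, hx c, neg_zero])
      (fun {x y} hy c => by rw [mul_assoc, hy c, mul_zero])
      (fun {x y} hx c => by rw [mul_assoc, hx (y * c)])
  have hmem : ∀ x : C, x ∈ I ↔ ∀ c : C, x * c = 0 := fun x =>
    TwoSidedIdeal.mem_mk' _ _ _ _ _ _ x
  have hgr : ∀ x ∈ I, ∀ g : G, ((DirectSum.decompose ℬ x) g : C) ∈ I := by
    intro x hx g
    rw [hmem] at hx ⊢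
    intro c
    refine DirectSum.Decomposition.inductionOn ℬ
      (motive := fun c => ((DirectSum.decompose ℬ x) g : C) * c = 0) ?_ ?_ ?_ c
    · simp
    · intro k m
      rw [← aux_mul_right ℬ hmul m.2 x g, hx m, DirectSum.decompose_zero]
      simp
    · intro m m' hm hm'
      rw [mul_add, hm, hm', add_zero]
  rcases hsimple I hgr with h | h
  · intro a ha
    have : a ∈ I := (hmem a).2 ha
    rw [h] at this
    exact (TwoSidedIdeal.mem_bot C).1 this
  · exfalso
    obtain ⟨x, y, hxy⟩ := hC2
    exact hxy (((hmem x).1 (h ▸ TwoSidedIdeal.mem_top C)) y)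

private lemma aux_annr (hmul : ∀ g h : G, ∀ x ∈ ℬ g, ∀ y ∈ ℬ h, x * y ∈ ℬ (g * h))
    (hC2 : ∃ x y : C, x * y ≠ 0)
    (hsimple : ∀ I : TwoSidedIdeal C,
      (∀ x ∈ I, ∀ g : G, ((DirectSum.decompose ℬ x) g : C) ∈ I) → I = ⊥ ∨ I = ⊤) :
    ∀ a : C, (∀ c : C, c * a = 0) → a = 0 := by
  let I : TwoSidedIdeal C := TwoSidedIdeal.mk' {a : C | ∀ c : C, c * a = 0}
      (fun c => mul_zero c)
      (fun {x y} hx hy c => by rw [mul_add, hx c, hy c, add_zero])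
      (fun {x} hx c => by rw [mul_neg, hx c, neg_zero])
      (fun {x y} hy c => by rw [← mul_assoc, hy (c * x)])
      (fun {x y} hx c => by rw [← mul_assoc, hx c, zero_mul])
  have hmem : ∀ x : C, x ∈ I ↔ ∀ c : C, c * x = 0 := fun x =>
    TwoSidedIdeal.mem_mk' _ _ _ _ _ _ x
  have hgr : ∀ x ∈ I, ∀ g : G, ((DirectSum.decompose ℬ x) g : C) ∈ I := by
    intro x hx g
    rw [hmem] at hx ⊢
    intro c
    refine DirectSum.Decomposition.inductionOn ℬ
      (motive := fun c => c * ((DirectSum.decompose ℬ x) g : C) = 0) ?_ ?_ ?_ c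
    · simp
    · intro k m
      rw [← aux_mul_left ℬ hmul m.2 x g, hx m, DirectSum.decompose_zero]
      simp
    · intro m m' hm hm'
      rw [add_mul, hm, hm', add_zero]
  rcases hsimple I hgr with h | h
  · intro a ha
    have : a ∈ I := (hmem a).2 ha
    rw [h] at this
    exact (TwoSidedIdeal.mem_bot C).1 this
  · exfalso
    obtain ⟨x, y, hxy⟩ := hC2
    exact hxy (((hmem y).1 (h ▸ TwoSidedIdeal.mem_top C)) x)

private lemma aux_power [FiniteDimensional F C]
    (hmul : ∀ g h : G, ∀ x ∈ ℬ g, ∀ y ∈ ℬ h, x * y ∈ ℬ (g * h))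
    {h : G} {a b e₀ : C} (ha : a ∈ ℬ h) (hb : b ∈ ℬ h⁻¹) (he₀ : e₀ ∈ ℬ (1 : G))
    (hFe : ∀ w ∈ ℬ (1 : G), ∃ c : F, c • e₀ = w)
    (he2 : e₀ * e₀ = 0) (heq : a * (e₀ * b) = e₀) : e₀ = 0 := by
  classical
  -- A n = a ^ (n+1), B n = b ^ (n+1)
  set A : ℕ → C := fun n => Nat.rec a (fun _ x => x * a) n with hA_def
  set B : ℕ → C := fun n => Nat.rec b (fun _ x => b * x) n with hB_def
  have hA0 : A 0 = a := rfl
  have hAs : ∀ n, A (n + 1) = A n * a := fun n => rfl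
  have hB0 : B 0 = b := rfl
  have hBs : ∀ n, B (n + 1) = b * B n := fun n => rfl
  have hAmem : ∀ n, A n ∈ ℬ (h ^ (n + 1)) := by
    intro n
    induction n with
    | zero => simpa [hA0] using ha
    | succ n ih =>
      rw [hAs n]
      have := hmul _ _ _ ih _ ha
      rwa [← pow_succ] at this
  have hBmem : ∀ n, B n ∈ ℬ ((h ^ (n + 1))⁻¹) := by
    intro n
    induction n with
    | zero => simpa [hB0] using hb
    | succ n ih =>
      rw [hBs n]
      have := hmul _ _ _ hb _ ih
      rwa [show h⁻¹ * (h ^ (n + 1))⁻¹ = (h ^ (n + 1 + 1))⁻¹ by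
        rw [← mul_inv_rev, ← pow_succ]] at this
  have hAB : ∀ n, A n * (e₀ * B n) = e₀ := by
    intro n
    induction n with
    | zero => exact heq
    | succ n ih =>
      rw [hAs n, hBs n]
      calc A n * a * (e₀ * (b * B n)) = A n * (a * (e₀ * b) * B n) := by
            simp only [mul_assoc]
        _ = A n * (e₀ * B n) := by rw [heq]
        _ = e₀ := ih
  have hAadd : ∀ m n, A (m + n + 1) = A m * A n := by
    intro m n
    induction n with
    | zero => rfl
    | succ n ih =>
      have e1 : m + (n + 1) + 1 = (m + n + 1) + 1 := by omega
      rw [e1, hAs (m + n + 1), ih, hAs n, mul_assoc]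
  by_cases hfin : ∃ n : ℕ, h ^ (n + 1) = 1
  · obtain ⟨n, hn⟩ := hfin
    have hAn : A n ∈ ℬ (1 : G) := hn ▸ hAmem n
    obtain ⟨α, hα⟩ := hFe _ hAn
    have hzero : A (n + n + 1) = 0 := by
      rw [hAadd n n, ← hα, smul_mul_assoc, mul_smul_comm, he2, smul_zero, smul_zero]
    have := hAB (n + n + 1)
    rw [hzero, zero_mul] at this
    exact this.symm
  · push_neg at hfin
    by_cases hz : ∃ n, A n = 0
    · obtain ⟨n, hn⟩ := hz
      have := hAB n
      rw [hn, zero_mul] at this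
      exact this.symm
    · exfalso
      push_neg at hz
      have hpow : ∀ i j : ℕ, i < j → h ^ (i + 1) = h ^ (j + 1) → False := by
        intro i j hlt hij
        obtain ⟨d, rfl⟩ : ∃ d, j = i + d + 1 := ⟨j - i - 1, by omega⟩
        apply hfin d
        have e2 : h ^ (i + 1) * h ^ (d + 1) = h ^ (i + 1) * 1 := by
          rw [← pow_add, mul_one, hij]
          congr 1
          omega
        exact mul_left_cancel e2
      have hinj : Function.Injective (fun n : ℕ => h ^ (n + 1)) := by
        intro i j hij
        simp only at hij
        rcases lt_trichotomy i j with hl | he | hl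
        · exact (hpow i j hl hij).elim
        · exact he
        · exact (hpow j i hl hij.symm).elim
      set N := Module.finrank F C with hN
      have hisi : iSupIndep ℬ := (DirectSum.Decomposition.isInternal ℬ).submodule_iSupIndep
      have hind : iSupIndep (fun i : Fin (N + 1) => ℬ (h ^ ((i : ℕ) + 1))) := by
        exact hisi.comp (fun i j hij => Fin.val_injective (by
          have := hinj hij
          omega))
      have hli : LinearIndependent F (fun i : Fin (N + 1) => A i) :=
        hind.linearIndependent _ (fun i => hAmem i) (fun i => hz i)
      have := hli.fintype_card_le_finrank
      rw [Fintype.card_fin] at this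
      omega

end aux
/-- A finite-dimensional graded simple algebra whose identity component is
one-dimensional is a graded division algebra: it has a unit and every nonzero
homogeneous element is invertible. -/
theorem stmt_6 {G : Type*} [Group G] [DecidableEq G] {F : Type*} [Field F]
    {C : Type*} [NonUnitalRing C] [Module F C] [SMulCommClass F C C] [IsScalarTower F C C]
    [FiniteDimensional F C]
    (ℬ : G → Submodule F C) [DirectSum.Decomposition ℬ]
    (hmul : ∀ g h : G, ∀ x ∈ ℬ g, ∀ y ∈ ℬ h, x * y ∈ ℬ (g * h))
    -- `C` is graded simple:
    (hC2 : ∃ x y : C, x * y ≠ 0)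
    (hsimple : ∀ I : TwoSidedIdeal C,
      (∀ x ∈ I, ∀ g : G, ((DirectSum.decompose ℬ x) g : C) ∈ I) → I = ⊥ ∨ I = ⊤)
    -- the identity component is one-dimensional:
    (hdim : Module.finrank F (ℬ (1 : G)) = 1) :
    ∃ u : C, (∀ x : C, u * x = x ∧ x * u = x) ∧
      ∀ g : G, ∀ x ∈ ℬ g, x ≠ 0 → ∃ y : C, x * y = u ∧ y * x = u := by
  classical
  obtain ⟨v, hv0, hvspan⟩ := finrank_eq_one_iff'.mp hdim
  set e₀ : C := (v : C) with he₀def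
  have he₀ : e₀ ∈ ℬ (1 : G) := v.2
  have he₀0 : e₀ ≠ 0 := fun hh => hv0 (Subtype.ext hh)
  have hFe : ∀ w ∈ ℬ (1 : G), ∃ c : F, c • e₀ = w := by
    intro w hw
    obtain ⟨c, hc⟩ := hvspan ⟨w, hw⟩
    exact ⟨c, by simpa using congrArg Subtype.val hc⟩
  have hee : e₀ * e₀ ∈ ℬ (1 : G) := by simpa using hmul 1 1 e₀ he₀ e₀ he₀
  obtain ⟨lam, hlam⟩ := hFe _ hee
  -- Step 1 : `lam ≠ 0`
  have hlam0 : lam ≠ 0 := by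
    intro h0
    rw [h0, zero_smul] at hlam
    have he2 : e₀ * e₀ = 0 := hlam.symm
    set S : Set C :=
      {s | ∃ (h₁ h₂ : G) (a b : C), a ∈ ℬ h₁ ∧ b ∈ ℬ h₂ ∧ s = a * (e₀ * b)} with hS_def
    have hS : ∀ s ∈ S, ∃ g, s ∈ ℬ g := by
      rintro s ⟨h₁, h₂, a, b, ha, hb, rfl⟩
      exact ⟨h₁ * (1 * h₂), hmul _ _ _ ha _ (hmul _ _ _ he₀ _ hb)⟩
    have hL : ∀ s ∈ S, ∀ (k : G) (c : C), c ∈ ℬ k → c * s ∈ Submodule.span F S := by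
      rintro s ⟨h₁, h₂, a, b, ha, hb, rfl⟩ k c hc
      exact Submodule.subset_span
        ⟨k * h₁, h₂, c * a, b, hmul _ _ _ hc _ ha, hb, by rw [mul_assoc]⟩
    have hR : ∀ s ∈ S, ∀ (k : G) (c : C), c ∈ ℬ k → s * c ∈ Submodule.span F S := by
      rintro s ⟨h₁, h₂, a, b, ha, hb, rfl⟩ k c hc
      refine Submodule.subset_span ⟨h₁, h₂ * k, a, b * c, ha, hmul _ _ _ hb _ hc, ?_⟩
      simp only [mul_assoc]
    rcases aux_cases ℬ hmul hsimple S hS hL hR with hbot | htop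
    · have h3a : ∀ (h₁ : G) (a : C), a ∈ ℬ h₁ → ∀ c : C, a * (e₀ * c) = 0 := by
        intro h₁ a ha
        refine DirectSum.Decomposition.inductionOn ℬ (motive := fun c => a * (e₀ * c) = 0) ?_ ?_ ?_
        · simp
        · intro k m; exact hbot _ ⟨h₁, k, a, m, ha, m.2, rfl⟩
        · intro m m' hm hm'; rw [mul_add, mul_add, hm, hm', add_zero]
      have h3 : ∀ a c : C, a * (e₀ * c) = 0 := by
        intro a
        refine DirectSum.Decomposition.inductionOn ℬ
          (motive := fun a => ∀ c : C, a * (e₀ * c) = 0) ?_ ?_ ?_ a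
        · intro c; simp
        · intro k m; exact h3a k m m.2
        · intro m m' hm hm' c; rw [add_mul, hm c, hm' c, add_zero]
      have h4 : ∀ c : C, e₀ * c = 0 := fun c =>
        aux_annr ℬ hmul hC2 hsimple _ (fun d => h3 d c)
      exact he₀0 (aux_annl ℬ hmul hC2 hsimple e₀ h4)
    · have hcomp := aux_span_comp ℬ S hS (htop e₀) 1
      rw [DirectSum.decompose_of_mem_same ℬ he₀] at hcomp
      have hzero : ∀ s ∈ {s | s ∈ S ∧ s ∈ ℬ (1 : G)}, s = (0 : C) := by
        rintro s ⟨⟨h₁, h₂, a, b, ha, hb, rfl⟩, hs1⟩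
        by_cases hcase : h₁ * (1 * h₂) = 1
        · by_contra hne
          obtain ⟨μ, hμ⟩ := hFe _ hs1
          have hμ0 : μ ≠ 0 := by
            rintro rfl; rw [zero_smul] at hμ; exact hne hμ.symm
          have hb2 : b ∈ ℬ h₁⁻¹ := by
            have h2inv : h₂ = h₁⁻¹ := by
              rw [one_mul] at hcase
              exact eq_inv_of_mul_eq_one_right hcase
            rwa [← h2inv]
          have heq : a * (e₀ * (μ⁻¹ • b)) = e₀ := by
            rw [mul_smul_comm, mul_smul_comm, ← hμ, smul_smul, inv_mul_cancel₀ hμ0, one_smul]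
          exact he₀0 (aux_power ℬ hmul ha (Submodule.smul_mem _ _ hb2) he₀ hFe he2 heq)
        · exact aux_ne ℬ (hmul _ _ _ ha _ (hmul _ _ _ he₀ _ hb)) hs1 hcase
      have hbotspan : Submodule.span F {s | s ∈ S ∧ s ∈ ℬ (1 : G)} = ⊥ :=
        Submodule.span_eq_bot.2 hzero
      rw [hbotspan] at hcomp
      exact he₀0 ((Submodule.mem_bot F).1 hcomp)
  -- the idempotent u
  set u : C := lam⁻¹ • e₀ with hu_def
  have hu1 : u ∈ ℬ (1 : G) := Submodule.smul_mem _ _ he₀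
  have hu0 : u ≠ 0 := smul_ne_zero (inv_ne_zero hlam0) he₀0
  have huu : u * u = u := by
    rw [hu_def, smul_mul_assoc, mul_smul_comm, ← hlam, smul_smul, smul_smul]
    congr 1
    field_simp
  have hFu : ∀ w ∈ ℬ (1 : G), ∃ c : F, c • u = w := by
    intro w hw
    obtain ⟨c, hc⟩ := hFe w hw
    refine ⟨c * lam, ?_⟩
    rw [hu_def, smul_smul, mul_assoc, mul_inv_cancel₀ hlam0, mul_one, hc]
  -- Step 2a : `x * u = x` for all `x`
  have hru : ∀ x : C, x * u = x := by
    set S : Set C :=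
      {s | ∃ (h₁ h₂ : G) (x y : C), x ∈ ℬ h₁ ∧ y ∈ ℬ h₂ ∧ s = (x - x * u) * y} with hS_def
    have hxu_mem : ∀ (h₁ : G) (x : C), x ∈ ℬ h₁ → x - x * u ∈ ℬ h₁ := fun h₁ x hx =>
      sub_mem hx (by simpa using hmul _ _ _ hx _ hu1)
    have hS : ∀ s ∈ S, ∃ g, s ∈ ℬ g := by
      rintro s ⟨h₁, h₂, x, y, hx, hy, rfl⟩
      exact ⟨h₁ * h₂, hmul _ _ _ (hxu_mem _ _ hx) _ hy⟩
    have hL : ∀ s ∈ S, ∀ (k : G) (c : C), c ∈ ℬ k → c * s ∈ Submodule.span F S := by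
      rintro s ⟨h₁, h₂, x, y, hx, hy, rfl⟩ k c hc
      refine Submodule.subset_span ⟨k * h₁, h₂, c * x, y, hmul _ _ _ hc _ hx, hy, ?_⟩
      rw [← mul_assoc, mul_sub, mul_assoc c x u]
    have hR : ∀ s ∈ S, ∀ (k : G) (c : C), c ∈ ℬ k → s * c ∈ Submodule.span F S := by
      rintro s ⟨h₁, h₂, x, y, hx, hy, rfl⟩ k c hc
      exact Submodule.subset_span
        ⟨h₁, h₂ * k, x, y * c, hx, hmul _ _ _ hy _ hc, by rw [mul_assoc]⟩
    rcases aux_cases ℬ hmul hsimple S hS hL hR with hbot | htop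
    · have hgen : ∀ (h₁ : G) (x : C), x ∈ ℬ h₁ → ∀ y : C, (x - x * u) * y = 0 := by
        intro h₁ x hx
        refine DirectSum.Decomposition.inductionOn ℬ
          (motive := fun y => (x - x * u) * y = 0) ?_ ?_ ?_
        · simp
        · intro k m; exact hbot _ ⟨h₁, k, x, m, hx, m.2, rfl⟩
        · intro m m' hm hm'; rw [mul_add, hm, hm', add_zero]
      have hall : ∀ x y : C, (x - x * u) * y = 0 := by
        intro x
        refine DirectSum.Decomposition.inductionOn ℬ
          (motive := fun x => ∀ y : C, (x - x * u) * y = 0) ?_ ?_ ?_ x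
        · intro y; simp
        · intro k m; exact hgen k m m.2
        · intro m m' hm hm' y
          have hsplit : m + m' - (m + m') * u = (m - m * u) + (m' - m' * u) := by
            rw [add_mul]; abel
          rw [hsplit, add_mul, hm y, hm' y, add_zero]
      intro x
      have := aux_annl ℬ hmul hC2 hsimple (x - x * u) (fun c => hall x c)
      rw [sub_eq_zero] at this
      exact this.symm
    · exfalso
      have hcomp := aux_span_comp ℬ S hS (htop u) 1
      rw [DirectSum.decompose_of_mem_same ℬ hu1] at hcomp
      have hzero : ∀ s ∈ {s | s ∈ S ∧ s ∈ ℬ (1 : G)}, s = (0 : C) := by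
        rintro s ⟨⟨h₁, h₂, x, y, hx, hy, rfl⟩, hs1⟩
        have hx' : x - x * u ∈ ℬ h₁ := hxu_mem _ _ hx
        have hx'u : (x - x * u) * u = 0 := by
          rw [sub_mul, mul_assoc, huu, sub_self]
        by_cases hcase : h₁ * h₂ = 1
        · by_contra hne
          obtain ⟨μ, hμ⟩ := hFu _ hs1
          have hμ0 : μ ≠ 0 := by
            rintro rfl; rw [zero_smul] at hμ; exact hne hμ.symm
          have h2inv : h₂ = h₁⁻¹ := eq_inv_of_mul_eq_one_right hcase
          have hxy' : (x - x * u) * (μ⁻¹ • y) = u := by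
            rw [mul_smul_comm, ← hμ, smul_smul, inv_mul_cancel₀ hμ0, one_smul]
          have hy'x : (μ⁻¹ • y) * (x - x * u) ∈ ℬ (1 : G) := by
            have := hmul _ _ _ (Submodule.smul_mem _ μ⁻¹ hy) _ hx'
            rwa [h2inv, inv_mul_cancel] at this
          obtain ⟨δ, hδ⟩ := hFu _ hy'x
          apply hu0
          calc u = u * u := huu.symm
            _ = ((x - x * u) * (μ⁻¹ • y)) * ((x - x * u) * (μ⁻¹ • y)) := by rw [hxy']
            _ = (x - x * u) * (((μ⁻¹ • y) * (x - x * u)) * (μ⁻¹ • y)) := by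
                simp only [mul_assoc]
            _ = (x - x * u) * ((δ • u) * (μ⁻¹ • y)) := by rw [hδ]
            _ = (x - x * u) * (δ • (u * (μ⁻¹ • y))) := by rw [smul_mul_assoc δ u (μ⁻¹ • y)]
            _ = (x - x * u) * (δ • ((u * (μ⁻¹ • y)))) := rfl
            _ = 0 := by rw [mul_smul_comm, ← mul_assoc, hx'u, zero_mul, smul_zero]
        · exact aux_ne ℬ (hmul _ _ _ hx' _ hy) hs1 hcase
      have hbotspan : Submodule.span F {s | s ∈ S ∧ s ∈ ℬ (1 : G)} = ⊥ :=
        Submodule.span_eq_bot.2 hzero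
      rw [hbotspan] at hcomp
      exact hu0 ((Submodule.mem_bot F).1 hcomp)
  -- Step 2b : `u * x = x` for all `x`
  have hlu : ∀ x : C, u * x = x := by
    set S : Set C :=
      {s | ∃ (h₁ h₂ : G) (x y : C), x ∈ ℬ h₁ ∧ y ∈ ℬ h₂ ∧ s = x * (y - u * y)} with hS_def
    have huy_mem : ∀ (h₂ : G) (y : C), y ∈ ℬ h₂ → y - u * y ∈ ℬ h₂ := fun h₂ y hy =>
      sub_mem hy (by simpa using hmul _ _ _ hu1 _ hy)
    have hS : ∀ s ∈ S, ∃ g, s ∈ ℬ g := by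
      rintro s ⟨h₁, h₂, x, y, hx, hy, rfl⟩
      exact ⟨h₁ * h₂, hmul _ _ _ hx _ (huy_mem _ _ hy)⟩
    have hL : ∀ s ∈ S, ∀ (k : G) (c : C), c ∈ ℬ k → c * s ∈ Submodule.span F S := by
      rintro s ⟨h₁, h₂, x, y, hx, hy, rfl⟩ k c hc
      exact Submodule.subset_span
        ⟨k * h₁, h₂, c * x, y, hmul _ _ _ hc _ hx, hy, by rw [mul_assoc]⟩
    have hR : ∀ s ∈ S, ∀ (k : G) (c : C), c ∈ ℬ k → s * c ∈ Submodule.span F S := by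
      rintro s ⟨h₁, h₂, x, y, hx, hy, rfl⟩ k c hc
      refine Submodule.subset_span ⟨h₁, h₂ * k, x, y * c, hx, hmul _ _ _ hy _ hc, ?_⟩
      rw [mul_assoc, sub_mul, mul_assoc]
    rcases aux_cases ℬ hmul hsimple S hS hL hR with hbot | htop
    · have hgen : ∀ (h₂ : G) (y : C), y ∈ ℬ h₂ → ∀ x : C, x * (y - u * y) = 0 := by
        intro h₂ y hy
        refine DirectSum.Decomposition.inductionOn ℬ
          (motive := fun x => x * (y - u * y) = 0) ?_ ?_ ?_
        · simp
        · intro k m; exact hbot _ ⟨k, h₂, m, y, m.2, hy, rfl⟩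
        · intro m m' hm hm'; rw [add_mul, hm, hm', add_zero]
      have hall : ∀ y x : C, x * (y - u * y) = 0 := by
        intro y
        refine DirectSum.Decomposition.inductionOn ℬ
          (motive := fun y => ∀ x : C, x * (y - u * y) = 0) ?_ ?_ ?_ y
        · intro x; simp
        · intro k m; exact hgen k m m.2
        · intro m m' hm hm' x
          have hsplit : m + m' - u * (m + m') = (m - u * m) + (m' - u * m') := by
            rw [mul_add]; abel
          rw [hsplit, mul_add, hm x, hm' x, add_zero]
      intro x
      have := aux_annr ℬ hmul hC2 hsimple (x - u * x) (fun c => hall x c)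
      rw [sub_eq_zero] at this
      exact this.symm
    · exfalso
      have hcomp := aux_span_comp ℬ S hS (htop u) 1
      rw [DirectSum.decompose_of_mem_same ℬ hu1] at hcomp
      have hzero : ∀ s ∈ {s | s ∈ S ∧ s ∈ ℬ (1 : G)}, s = (0 : C) := by
        rintro s ⟨⟨h₁, h₂, x, y, hx, hy, rfl⟩, hs1⟩
        have hy' : y - u * y ∈ ℬ h₂ := huy_mem _ _ hy
        have huy' : u * (y - u * y) = 0 := by
          rw [mul_sub, ← mul_assoc, huu, sub_self]
        by_cases hcase : h₁ * h₂ = 1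
        · by_contra hne
          obtain ⟨μ, hμ⟩ := hFu _ hs1
          have hμ0 : μ ≠ 0 := by
            rintro rfl; rw [zero_smul] at hμ; exact hne hμ.symm
          have h2inv : h₂ = h₁⁻¹ := eq_inv_of_mul_eq_one_right hcase
          have hxy' : (μ⁻¹ • x) * (y - u * y) = u := by
            rw [smul_mul_assoc, ← hμ, smul_smul, inv_mul_cancel₀ hμ0, one_smul]
          have hy'x : (y - u * y) * (μ⁻¹ • x) ∈ ℬ (1 : G) := by
            have := hmul _ _ _ hy' _ (Submodule.smul_mem _ μ⁻¹ hx)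
            rwa [h2inv, inv_mul_cancel] at this
          obtain ⟨δ, hδ⟩ := hFu _ hy'x
          apply hu0
          calc u = u * u := huu.symm
            _ = ((μ⁻¹ • x) * (y - u * y)) * ((μ⁻¹ • x) * (y - u * y)) := by rw [hxy']
            _ = (μ⁻¹ • x) * (((y - u * y) * (μ⁻¹ • x)) * (y - u * y)) := by
                simp only [mul_assoc]
            _ = (μ⁻¹ • x) * ((δ • u) * (y - u * y)) := by rw [hδ]
            _ = (μ⁻¹ • x) * (δ • (u * (y - u * y))) := by rw [smul_mul_assoc δ u (y - u * y)]
            _ = 0 := by rw [huy', smul_zero, mul_zero]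
        · exact aux_ne ℬ (hmul _ _ _ hx _ hy') hs1 hcase
      have hbotspan : Submodule.span F {s | s ∈ S ∧ s ∈ ℬ (1 : G)} = ⊥ :=
        Submodule.span_eq_bot.2 hzero
      rw [hbotspan] at hcomp
      exact hu0 ((Submodule.mem_bot F).1 hcomp)
  -- Step 3 : invertibility of nonzero homogeneous elements
  refine ⟨u, fun x => ⟨hlu x, hru x⟩, ?_⟩
  intro g x hx hx0
  set S : Set C :=
    {s | ∃ (h₁ h₂ : G) (a b : C), a ∈ ℬ h₁ ∧ b ∈ ℬ h₂ ∧ s = a * (x * b)} with hS_def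
  have hS : ∀ s ∈ S, ∃ g', s ∈ ℬ g' := by
    rintro s ⟨h₁, h₂, a, b, ha, hb, rfl⟩
    exact ⟨h₁ * (g * h₂), hmul _ _ _ ha _ (hmul _ _ _ hx _ hb)⟩
  have hL : ∀ s ∈ S, ∀ (k : G) (c : C), c ∈ ℬ k → c * s ∈ Submodule.span F S := by
    rintro s ⟨h₁, h₂, a, b, ha, hb, rfl⟩ k c hc
    exact Submodule.subset_span
      ⟨k * h₁, h₂, c * a, b, hmul _ _ _ hc _ ha, hb, by rw [mul_assoc]⟩
  have hR : ∀ s ∈ S, ∀ (k : G) (c : C), c ∈ ℬ k → s * c ∈ Submodule.span F S := by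
    rintro s ⟨h₁, h₂, a, b, ha, hb, rfl⟩ k c hc
    refine Submodule.subset_span ⟨h₁, h₂ * k, a, b * c, ha, hmul _ _ _ hb _ hc, ?_⟩
    simp only [mul_assoc]
  rcases aux_cases ℬ hmul hsimple S hS hL hR with hbot | htop
  · exfalso
    have := hbot _ ⟨1, 1, u, u, hu1, hu1, rfl⟩
    rw [hru x, hlu x] at this
    exact hx0 this
  · have hcomp := aux_span_comp ℬ S hS (htop u) 1
    rw [DirectSum.decompose_of_mem_same ℬ hu1] at hcomp
    have hnz : ¬ (∀ s ∈ {s | s ∈ S ∧ s ∈ ℬ (1 : G)}, s = (0 : C)) := by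
      intro hzero
      have hbotspan : Submodule.span F {s | s ∈ S ∧ s ∈ ℬ (1 : G)} = ⊥ :=
        Submodule.span_eq_bot.2 hzero
      rw [hbotspan] at hcomp
      exact hu0 ((Submodule.mem_bot F).1 hcomp)
    push_neg at hnz
    obtain ⟨s, ⟨⟨h₁, h₂, a, b, ha, hb, rfl⟩, hs1⟩, hsne⟩ := hnz
    obtain ⟨μ, hμ⟩ := hFu _ hs1
    have hμ0 : μ ≠ 0 := by
      rintro rfl; rw [zero_smul] at hμ; exact hsne hμ.symm
    have hkey : (μ⁻¹ • a) * (x * b) = u := by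
      rw [smul_mul_assoc, ← hμ, smul_smul, inv_mul_cancel₀ hμ0, one_smul]
    set a' : C := μ⁻¹ • a with ha'def
    have hsurjL : Function.Surjective (LinearMap.mulLeft F a') := by
      intro c
      exact ⟨(x * b) * c, by rw [LinearMap.mulLeft_apply, ← mul_assoc, hkey, hlu]⟩
    have hinjL := LinearMap.injective_iff_surjective.2 hsurjL
    have h1 : (x * b) * a' = u := by
      apply hinjL
      rw [LinearMap.mulLeft_apply, LinearMap.mulLeft_apply, ← mul_assoc, hkey, hlu, hru]
    have hsurjR : Function.Surjective (LinearMap.mulRight F b) := by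
      intro c
      exact ⟨c * (a' * x), by
        rw [LinearMap.mulRight_apply, mul_assoc c, mul_assoc a', hkey, hru]⟩
    have hinjR := LinearMap.injective_iff_surjective.2 hsurjR
    have h2 : b * (a' * x) = u := by
      apply hinjR
      rw [LinearMap.mulRight_apply, LinearMap.mulRight_apply, mul_assoc b, mul_assoc a',
        hkey, hru, hlu]
    exact ⟨b * a', by rw [← mul_assoc]; exact h1, by rw [mul_assoc]; exact h2⟩
end

section
/- Let R be a finite-dimensional G-graded simple algebra over an arbitrary field. Then the identity component R_e is semiprimitive (its Jacobson radical is zero). -/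
set_option linter.unusedSectionVars false
set_option linter.unnecessarySimpa false

open Pointwise

section PMul
variable {F : Type*} [Field F] {R : Type*} [NonUnitalRing R] [Module F R]
  [SMulCommClass F R R] [IsScalarTower F R R]

/-- product of two submodules of a non-unital algebra -/
def pmul (M N : Submodule F R) : Submodule F R where
  __ := M.toAddSubmonoid * N.toAddSubmonoid
  smul_mem' := fun r a ha ↦ AddSubmonoid.mul_induction_on ha
    (fun m h n h' ↦ by rw [← smul_mul_assoc]; exact AddSubmonoid.mul_mem_mul (M.smul_mem r h) h')
    fun a₁ a₂ h₁ h₂ ↦ by rw [smul_add]; exact (M.toAddSubmonoid * N.toAddSubmonoid).add_mem h₁ h₂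

infixl:70 " ⊙ " => pmul

variable {M N P Q : Submodule F R}

theorem pmul_toAddSubmonoid (M N : Submodule F R) :
    (M ⊙ N).toAddSubmonoid = M.toAddSubmonoid * N.toAddSubmonoid := rfl

theorem pmul_mem_pmul {m n : R} (hm : m ∈ M) (hn : n ∈ N) : m * n ∈ M ⊙ N :=
  AddSubmonoid.mul_mem_mul hm hn

theorem pmul_le : M ⊙ N ≤ P ↔ ∀ m ∈ M, ∀ n ∈ N, m * n ∈ P :=
  AddSubmonoid.mul_le

@[elab_as_elim]
theorem pmul_induction_on {C : R → Prop} {r : R} (hr : r ∈ M ⊙ N)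
    (hm : ∀ m ∈ M, ∀ n ∈ N, C (m * n)) (ha : ∀ x y, C x → C y → C (x + y)) : C r :=
  AddSubmonoid.mul_induction_on hr hm ha

theorem pmul_le_pmul (h1 : M ≤ P) (h2 : N ≤ Q) : M ⊙ N ≤ P ⊙ Q :=
  AddSubmonoid.mul_le_mul h1 h2

@[simp] theorem pmul_bot : M ⊙ (⊥ : Submodule F R) = ⊥ :=
  Submodule.toAddSubmonoid_injective (by
    rw [pmul_toAddSubmonoid]; simpa using AddSubmonoid.mul_bot _)

@[simp] theorem bot_pmul : (⊥ : Submodule F R) ⊙ M = ⊥ :=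
  Submodule.toAddSubmonoid_injective (by
    rw [pmul_toAddSubmonoid]; simpa using AddSubmonoid.bot_mul _)

theorem pmul_assoc (M N P : Submodule F R) : M ⊙ N ⊙ P = M ⊙ (N ⊙ P) :=
  Submodule.toAddSubmonoid_injective (by
    simp only [pmul_toAddSubmonoid]; exact mul_assoc _ _ _)

theorem pmul_sup : M ⊙ (N ⊔ P) = M ⊙ N ⊔ M ⊙ P :=
  Submodule.toAddSubmonoid_injective (by
    simp only [pmul_toAddSubmonoid, Submodule.sup_toAddSubmonoid]
    exact AddSubmonoid.mul_sup)

theorem sup_pmul : (M ⊔ N) ⊙ P = M ⊙ P ⊔ N ⊙ P :=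
  Submodule.toAddSubmonoid_injective (by
    simp only [pmul_toAddSubmonoid, Submodule.sup_toAddSubmonoid]
    exact AddSubmonoid.sup_mul)

/-- `(⨆ A) ⊙ (⨆ B) ≤ C` from bounds on pieces. -/
theorem iSup_pmul_iSup_le {ι κ : Sort*} {A : ι → Submodule F R} {B : κ → Submodule F R}
    {C : Submodule F R} (h : ∀ i j, A i ⊙ B j ≤ C) : (⨆ i, A i) ⊙ (⨆ j, B j) ≤ C := by
  refine pmul_le.2 fun m hm n hn => ?_
  refine Submodule.iSup_induction _ (motive := fun m => m * n ∈ C) hm (fun i x hx => ?_) (by simp) ?_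
  · refine Submodule.iSup_induction _ (motive := fun n => x * n ∈ C) hn
      (fun j y hy => h i j (pmul_mem_pmul hx hy)) (by simp) ?_
    · intro y z hy hz; rw [mul_add]; exact C.add_mem hy hz
  · intro x y hx hy; rw [add_mul]; exact C.add_mem hx hy

theorem iSup_pmul_le {ι : Sort*} {A : ι → Submodule F R} {B C : Submodule F R}
    (h : ∀ i, A i ⊙ B ≤ C) : (⨆ i, A i) ⊙ B ≤ C := by
  have : B = ⨆ _ : Unit, B := by simp
  rw [this]; exact iSup_pmul_iSup_le fun i _ => h i

/-- iterated product: `PP A n` is the product of `n+1` copies of `A`. -/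
def PP (A : Submodule F R) : ℕ → Submodule F R
  | 0 => A
  | n + 1 => PP A n ⊙ A

theorem PP_le_PP {A B : Submodule F R} (h : A ≤ B) : ∀ n, PP A n ≤ PP B n
  | 0 => h
  | n + 1 => pmul_le_pmul (PP_le_PP h n) h

theorem PP_pmul_PP (A : Submodule F R) (a : ℕ) : ∀ b, PP A a ⊙ PP A b = PP A (a + b + 1)
  | 0 => rfl
  | b + 1 => by
      rw [PP, ← pmul_assoc, PP_pmul_PP A a b]; rfl

theorem PP_bot_mono {A : Submodule F R} {n : ℕ} (h : PP A n = ⊥) :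
    ∀ m, n ≤ m → PP A m = ⊥ := by
  intro m hm
  induction m with
  | zero => exact (Nat.le_zero.mp hm) ▸ h
  | succ k ih =>
      rcases Nat.lt_or_ge n (k+1) with h1 | h1
      · have : PP A k = ⊥ := ih (by omega)
        show PP A k ⊙ A = ⊥
        rw [this, bot_pmul]
      · have : n = k + 1 := by omega
        rw [← this]; exact h

end PMul
section Nakayama
variable {F : Type*} [Field F] {R : Type*} [NonUnitalRing R] [Module F R]
  [SMulCommClass F R R] [IsScalarTower F R R]

theorem leftmul_mem {Re I : Submodule F R}
    (hid : ∀ a ∈ Re, ∀ x ∈ I, a * x ∈ I ∧ x * a ∈ I)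
    {y : R} (hy : y ∈ Re) (N : Submodule F R) :
    ∀ w ∈ I ⊙ N, y * w ∈ I ⊙ N := by
  intro w hw
  refine pmul_induction_on hw (fun x hx m hm => ?_) (fun w1 w2 h1 h2 => ?_)
  · rw [← mul_assoc]
    exact pmul_mem_pmul ((hid y hy x hx).1) hm
  · rw [mul_add]; exact (I ⊙ N).add_mem h1 h2

theorem qr_nilpotent [FiniteDimensional F R] (Re I : Submodule F R) (hIRe : I ≤ Re)
    (hid : ∀ a ∈ Re, ∀ x ∈ I, a * x ∈ I ∧ x * a ∈ I)
    (hqr : ∀ x ∈ I, ∃ y ∈ Re, x + y + x * y = 0 ∧ x + y + y * x = 0) :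
    ∃ n : ℕ, PP I n = ⊥ := by
  have hII : I ⊙ I ≤ I := pmul_le.2 fun x hx y hy => (hid x (hIRe hx) y hy).1
  have hPPle : ∀ n, PP I n ≤ I := by
    intro n; induction n with
    | zero => exact le_rfl
    | succ k ih => exact le_trans (pmul_le_pmul ih le_rfl) hII
  -- the chain stabilizes
  have hstab : ∃ n : ℕ, PP I (n + 1) = PP I n := by
    by_contra hc
    push_neg at hc
    have hdec : ∀ n, PP I (n+1) ≤ PP I n := by
      intro n; induction n with
      | zero => exact hII
      | succ k ih => exact pmul_le_pmul ih le_rfl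
    have hlt : ∀ n, Module.finrank F (PP I (n+1)) < Module.finrank F (PP I n) :=
      fun n => Submodule.finrank_lt_finrank_of_lt (lt_of_le_of_ne (hdec n) (hc n))
    have hsum : ∀ n, Module.finrank F (PP I n) + n ≤ Module.finrank F (PP I 0) := by
      intro n; induction n with
      | zero => simp
      | succ k ih => have := hlt k; omega
    have := hsum (Module.finrank F (PP I 0) + 1)
    omega
  obtain ⟨n, hn⟩ := hstab
  refine ⟨n, ?_⟩
  set K := PP I n with hKdef
  have hKI : K ⊙ I = K := hn
  have hKm : ∀ m, n ≤ m → PP I m = K := by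
    intro m hm; induction m with
    | zero =>
        have h0 : n = 0 := Nat.le_zero.mp hm
        subst h0; exact hKdef.symm
    | succ k ih =>
        rcases Nat.lt_or_ge n (k+1) with h1 | h1
        · have : PP I k = K := ih (by omega)
          show PP I k ⊙ I = K
          rw [this, hKI]
        · have : n = k + 1 := by omega
          rw [← this]
  have hKK : K ⊙ K = K := by
    have := PP_pmul_PP I n n
    rw [← hKdef] at this
    rw [this]; exact hKm _ (by omega)
  have hKle : K ≤ I := hPPle n
  -- K is finitely generated
  obtain ⟨s, hs⟩ : K.FG := IsNoetherian.noetherian K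
  -- descent
  classical
  have descent : ∀ s : Finset R, ↑s ⊆ (K : Set R) → K ≤ I ⊙ Submodule.span F ↑s → K = ⊥ := by
    intro s
    induction s using Finset.induction_on with
    | empty =>
        intro _ hle
        rw [Finset.coe_empty, Submodule.span_empty, pmul_bot] at hle
        exact le_bot_iff.mp hle
    | @insert a s' ha ih =>
        intro hsub hle
        rw [Finset.coe_insert, Submodule.span_insert, pmul_sup] at hle
        have haK : a ∈ K := hsub (Finset.mem_coe.mpr (Finset.mem_insert_self a s'))
        -- decompose a
        obtain ⟨v, hv, u, hu, hau⟩ := Submodule.mem_sup.mp (hle haK)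
        have hsingle : ∀ w ∈ I ⊙ (Submodule.span F {a}), ∃ b ∈ I, w = b * a := by
          intro w hw
          refine pmul_induction_on hw (fun x hx m hm => ?_) ?_
          · obtain ⟨c, rfl⟩ := Submodule.mem_span_singleton.mp hm
            exact ⟨c • x, I.smul_mem c hx, by rw [mul_smul_comm, smul_mul_assoc]⟩
          · rintro w1 w2 ⟨b1, hb1, rfl⟩ ⟨b2, hb2, rfl⟩
            exact ⟨b1 + b2, I.add_mem hb1 hb2, by rw [add_mul]⟩
        obtain ⟨b, hb, rfl⟩ := hsingle v hv
        obtain ⟨y, hy, _, h2⟩ := hqr (-b) (I.neg_mem hb)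
        have hyb : y * b = y - b := by
          rw [← sub_eq_zero]
          have h4 : y * b - (y - b) = -(-b + y + y * -b) := by rw [mul_neg]; abel
          rw [h4, h2, neg_zero]
        -- b * a = y * u
        have hba : b * a = y * u := by
          have h3 : y * b * a + y * u = y * a := by rw [mul_assoc, ← mul_add, hau]
          rw [hyb, sub_mul] at h3
          rw [← sub_eq_zero]
          have h4 : b * a - y * u = -((y * a - b * a + y * u) - y * a) := by abel
          rw [h4, h3, sub_self, neg_zero]
        have haIs : a ∈ I ⊙ Submodule.span F (↑s' : Set R) := by
          rw [← hau, hba]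
          exact (I ⊙ _).add_mem (leftmul_mem hid hy _ u hu) hu
        have hKle' : K ≤ I ⊙ Submodule.span F (↑s' : Set R) := by
          intro k hk
          obtain ⟨v', hv', u', hu', hk'⟩ := Submodule.mem_sup.mp (hle hk)
          obtain ⟨b', hb', rfl⟩ := hsingle v' hv'
          rw [← hk']
          exact (I ⊙ _).add_mem (leftmul_mem hid (hIRe hb') _ a haIs) hu'
        exact ih (fun x hx => hsub (Finset.coe_subset.mpr (Finset.subset_insert a s') hx)) hKle'
  refine descent s (by rw [← hs]; exact Submodule.subset_span) ?_
  rw [hs]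
  calc K = K ⊙ K := hKK.symm
  _ ≤ I ⊙ K := pmul_le_pmul hKle le_rfl

end Nakayama
section NilSum
variable {F : Type*} [Field F] {R : Type*} [NonUnitalRing R] [Module F R]
  [SMulCommClass F R R] [IsScalarTower F R R]

theorem pmul_iSup_le {ι : Sort*} {A : ι → Submodule F R} {B C : Submodule F R}
    (h : ∀ i, B ⊙ A i ≤ C) : B ⊙ (⨆ i, A i) ≤ C := by
  have : B = ⨆ _ : Unit, B := by simp
  rw [this]; exact iSup_pmul_iSup_le fun _ i => h i

variable {ι : Type*}

/-- fold a word of submodules onto a seed submodule -/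
def foldA (A : ι → Submodule F R) (M : Submodule F R) (l : List ι) : Submodule F R :=
  l.foldl (fun M j => M ⊙ A j) M

@[simp] theorem foldA_nil (A : ι → Submodule F R) (M : Submodule F R) : foldA A M [] = M := rfl

theorem foldA_cons (A : ι → Submodule F R) (M : Submodule F R) (j : ι) (l : List ι) :
    foldA A M (j :: l) = foldA A (M ⊙ A j) l := rfl

theorem foldA_concat (A : ι → Submodule F R) (M : Submodule F R) (j : ι) (l : List ι) :
    foldA A M (l ++ [j]) = foldA A M l ⊙ A j := by
  simp [foldA, List.foldl_append]

theorem foldA_bot (A : ι → Submodule F R) (l : List ι) : foldA A ⊥ l = ⊥ := by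
  induction l with
  | nil => rfl
  | cons j l ih => rw [foldA_cons, bot_pmul]; exact ih

theorem foldA_le (A : ι → Submodule F R) {M N : Submodule F R} (h : M ≤ N) (l : List ι) :
    foldA A M l ≤ foldA A N l := by
  induction l generalizing M N with
  | nil => exact h
  | cons j l ih => exact ih (pmul_le_pmul h le_rfl)

/-- expansion of powers of a supremum into words -/
theorem PP_iSup_le (A : ι → Submodule F R) :
    ∀ m, PP (⨆ i, A i) m ≤ ⨆ (i : ι) (l : List ι) (_ : l.length = m), foldA A (A i) l := by
  intro m
  induction m with
  | zero =>
      refine iSup_le fun i => le_iSup_of_le i (le_iSup_of_le ([] : List ι) ?_)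
      exact le_iSup_of_le rfl le_rfl
  | succ m ih =>
      show PP (⨆ i, A i) m ⊙ (⨆ i, A i) ≤ _
      refine le_trans (pmul_le_pmul ih le_rfl) ?_
      refine iSup_pmul_le fun i => ?_
      refine iSup_pmul_le fun l => ?_
      refine iSup_pmul_le fun hl => ?_
      refine pmul_iSup_le fun j => ?_
      rw [← foldA_concat]
      refine le_iSup_of_le i (le_iSup_of_le (l ++ [j]) (le_iSup_of_le (by simp [hl]) le_rfl))

theorem sum_count_eq_length [Fintype ι] [DecidableEq ι] (l : List ι) :
    ∑ i : ι, l.count i = l.length := by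
  induction l with
  | nil => simp
  | cons j l ih =>
      simp only [List.count_cons, List.length_cons, Finset.sum_add_distrib, ih]
      congr 1
      simp [beq_iff_eq, Finset.sum_ite_eq]

theorem nilsum [Fintype ι] [DecidableEq ι] (E : Submodule F R) (A : ι → Submodule F R)
    (hE : E ⊙ E ≤ E) (hle : ∀ i, A i ≤ E)
    (hr : ∀ i, A i ⊙ E ≤ A i)
    (hlmul : ∀ i, E ⊙ A i ≤ A i)
    (n : ℕ) (hnil : ∀ i, PP (A i) n = ⊥) :
    PP (⨆ i, A i) (Fintype.card ι * n) = ⊥ := by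
  have hPPE : ∀ (i₀ : ι) (j : ℕ), PP (A i₀) j ⊙ E ≤ PP (A i₀) j := by
    intro i₀ j
    induction j with
    | zero => exact hr i₀
    | succ k ih =>
        show PP (A i₀) k ⊙ A i₀ ⊙ E ≤ _
        rw [pmul_assoc]
        exact le_trans (pmul_le_pmul le_rfl (hr i₀)) le_rfl
  have collapse : ∀ (i₀ : ι) (l : List ι) (M : Submodule F R),
      ((M ≤ E ∧ n + 1 ≤ l.count i₀) ∨
        (∃ j, M ≤ PP (A i₀) j ∧ n + 1 ≤ j + 1 + l.count i₀)) → foldA A M l = ⊥ := by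
    intro i₀ l
    induction l with
    | nil =>
        rintro M (⟨_, hc⟩ | ⟨j, hM, hc⟩)
        · simp at hc
        · have hj : n ≤ j := by simp at hc; omega
          have : PP (A i₀) j = ⊥ := PP_bot_mono (hnil i₀) j hj
          rw [foldA_nil]
          exact le_bot_iff.mp (this ▸ hM)
    | cons g l ih =>
        rintro M (⟨hM, hc⟩ | ⟨j, hM, hc⟩) <;> rw [foldA_cons] <;>
          by_cases hg : g = i₀
        · subst hg
          refine ih _ (Or.inr ⟨0, ?_, ?_⟩)
          · exact le_trans (pmul_le_pmul hM le_rfl) (hlmul g)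
          · rw [List.count_cons_self] at hc; omega
        · refine ih _ (Or.inl ⟨le_trans (pmul_le_pmul hM (hle g)) hE, ?_⟩)
          rw [List.count_cons_of_ne hg] at hc
          exact hc
        · subst hg
          refine ih _ (Or.inr ⟨j + 1, pmul_le_pmul hM le_rfl, ?_⟩)
          rw [List.count_cons_self] at hc; omega
        · refine ih _ (Or.inr ⟨j, le_trans (pmul_le_pmul hM (hle g)) (hPPE i₀ j), ?_⟩)
          rw [List.count_cons_of_ne hg] at hc
          exact hc
  refine le_bot_iff.mp (le_trans (PP_iSup_le A _) ?_)
  refine iSup_le fun i => iSup_le fun l => iSup_le fun hl => ?_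
  -- pigeonhole on the word i :: l
  have hlen : (i :: l).length = Fintype.card ι * n + 1 := by simp [hl]
  have hex : ∃ i₀ : ι, n + 1 ≤ (i :: l).count i₀ := by
    by_contra hc
    push_neg at hc
    have hb : ∑ i₀ : ι, (i :: l).count i₀ ≤ ∑ _i₀ : ι, n :=
      Finset.sum_le_sum (fun i₀ _ => by have := hc i₀; omega)
    rw [sum_count_eq_length, hlen] at hb
    simp only [Finset.sum_const, Finset.card_univ, smul_eq_mul] at hb
    omega
  obtain ⟨i₀, hi₀⟩ := hex
  rw [le_bot_iff]
  by_cases hi : i = i₀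
  · subst hi
    refine collapse i l (A i) (Or.inr ⟨0, le_rfl, ?_⟩)
    rw [List.count_cons_self] at hi₀; omega
  · refine collapse i₀ l (A i) (Or.inl ⟨hle i, ?_⟩)
    rw [List.count_cons_of_ne hi] at hi₀
    exact hi₀

end NilSum
section Graded
variable {G : Type*} [Group G] [DecidableEq G] {F : Type*} [Field F]
  {R : Type*} [NonUnitalRing R] [Module F R] [SMulCommClass F R R] [IsScalarTower F R R]

/-- number of prefixes of `l` (starting at accumulated degree `q`) whose product is `t` -/
def hitcount (t : G) : G → List G → ℕ
  | _, [] => 0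
  | q, (g :: l) => (if q * g = t then 1 else 0) + hitcount t (q * g) l

/-- all prefix products (from `q`) lie in `S` -/
def allS (S : Finset G) : G → List G → Prop
  | _, [] => True
  | q, (g :: l) => (q * g ∈ S) ∧ allS S (q * g) l

/-- chunk-accumulator: `BT ℬ t j` bounds a product that starts in degree `t` and has
passed `j` further returns to degree `t`. -/
def BT (ℬ : G → Submodule F R) (t : G) : ℕ → Submodule F R
  | 0 => ℬ t
  | j + 1 => ℬ t ⊙ PP (ℬ 1) j

variable (ℬ : G → Submodule F R)
  (hmul : ∀ g h : G, ∀ x ∈ ℬ g, ∀ y ∈ ℬ h, x * y ∈ ℬ (g * h))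

include hmul in
theorem bB (g h : G) : ℬ g ⊙ ℬ h ≤ ℬ (g * h) :=
  pmul_le.2 fun x hx y hy => hmul g h x hx y hy

theorem BT_step (t : G) : ∀ j, BT ℬ t j ⊙ ℬ 1 ≤ BT ℬ t (j + 1)
  | 0 => le_rfl
  | j + 1 => by rw [BT, pmul_assoc]; exact le_rfl

theorem BT_bot (t : G) {N : ℕ} (hN : PP (ℬ 1) N = ⊥) :
    ∀ j, N + 1 ≤ j → BT ℬ t j = ⊥ := by
  rintro (_ | j) hj
  · omega
  · show ℬ t ⊙ PP (ℬ 1) j = ⊥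
    rw [PP_bot_mono hN j (by omega), pmul_bot]

theorem hit_sum (S : Finset G) : ∀ (l : List G) (q : G), allS S q l →
    ∑ t ∈ S, hitcount t q l = l.length := by
  intro l
  induction l with
  | nil => simp [hitcount]
  | cons g l ih =>
      intro q hall
      obtain ⟨hmem, hall'⟩ := hall
      show ∑ t ∈ S, ((if q * g = t then 1 else 0) + hitcount t (q * g) l) = l.length + 1
      rw [Finset.sum_add_distrib, ih (q * g) hall', Finset.sum_ite_eq S (q * g) (fun _ => 1)]
      simp [hmem, Nat.add_comm]

include hmul in
theorem notallS_bot (S : Finset G) (hS : ∀ g ∉ S, ℬ g = ⊥) :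
    ∀ (l : List G) (M : Submodule F R) (q : G), M ≤ ℬ q → ¬ allS S q l →
    foldA ℬ M l = ⊥ := by
  intro l
  induction l with
  | nil => intro M q _ h; exact absurd trivial h
  | cons g l ih =>
      intro M q hM hall
      rw [foldA_cons]
      by_cases hmem : q * g ∈ S
      · refine ih _ (q * g) (le_trans (pmul_le_pmul hM le_rfl) (bB ℬ hmul q g)) ?_
        intro h; exact hall ⟨hmem, h⟩
      · have hbot : M ⊙ ℬ g = ⊥ := by
          rw [← le_bot_iff, ← hS _ hmem]
          exact le_trans (pmul_le_pmul hM le_rfl) (bB ℬ hmul q g)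
        rw [hbot, foldA_bot]

include hmul in
theorem graded_collapse {N : ℕ} (hN : PP (ℬ 1) N = ⊥) (t : G) :
    ∀ (l : List G) (M : Submodule F R) (q : G),
    ((M ≤ ℬ q ∧ N + 2 ≤ hitcount t q l) ∨
     (∃ j, M ≤ BT ℬ t j ∧ N + 2 ≤ j + 1 + hitcount t t l ∧ q = t) ∨
     (∃ j, M ≤ BT ℬ t j ⊙ ℬ (t⁻¹ * q) ∧ N + 2 ≤ j + 1 + hitcount t q l)) →
    foldA ℬ M l = ⊥ := by
  intro l
  induction l with
  | nil =>
      rintro M q (⟨_, hc⟩ | ⟨j, hM, hc, hq0⟩ | ⟨j, hM, hc⟩)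
      · simp [hitcount] at hc
      · simp only [hitcount] at hc
        rw [foldA_nil, ← le_bot_iff, ← BT_bot ℬ t hN j (by omega)]
        exact hM
      · simp only [hitcount] at hc
        rw [foldA_nil, ← le_bot_iff]
        refine le_trans hM ?_
        rw [BT_bot ℬ t hN j (by omega), bot_pmul]
  | cons g l ih =>
      rintro M q (⟨hM, hc⟩ | ⟨j, hM, hc, hq0⟩ | ⟨j, hM, hc⟩) <;> rw [foldA_cons]
      · -- state A
        simp only [hitcount] at hc
        by_cases hq : q * g = t
        · refine ih _ (q * g) (Or.inr (Or.inl ⟨0, ?_, ?_, hq⟩))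
          · rw [show BT ℬ t 0 = ℬ t from rfl, ← hq]
            exact le_trans (pmul_le_pmul hM le_rfl) (bB ℬ hmul q g)
          · rw [if_pos hq, hq] at hc; omega
        · refine ih _ (q * g) (Or.inl ⟨le_trans (pmul_le_pmul hM le_rfl) (bB ℬ hmul q g), ?_⟩)
          rw [if_neg hq] at hc; omega
      · -- state B
        simp only [hitcount] at hc
        by_cases hq : q * g = t
        · have ht : t * g = t := hq0 ▸ hq
          have hg1 : g = 1 := mul_left_cancel (a := t) (by rw [mul_one]; exact ht)
          refine ih _ (q * g) (Or.inr (Or.inl ⟨j + 1, ?_, ?_, hq⟩))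
          · rw [hg1]
            exact le_trans (pmul_le_pmul hM le_rfl) (BT_step ℬ t j)
          · rw [if_pos ht, ht] at hc; omega
        · have ht : ¬ (t * g = t) := fun h => hq (by rw [hq0]; exact h)
          refine ih _ (q * g) (Or.inr (Or.inr ⟨j, ?_, ?_⟩))
          · rw [hq0, inv_mul_cancel_left]
            exact pmul_le_pmul hM le_rfl
          · rw [if_neg ht] at hc
            rw [hq0]
            omega
      · -- state C
        simp only [hitcount] at hc
        have hM' : M ⊙ ℬ g ≤ BT ℬ t j ⊙ ℬ (t⁻¹ * (q * g)) := by
          refine le_trans (pmul_le_pmul hM le_rfl) ?_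
          rw [pmul_assoc, ← mul_assoc]
          exact pmul_le_pmul le_rfl (bB ℬ hmul _ g)
        by_cases hq : q * g = t
        · refine ih _ (q * g) (Or.inr (Or.inl ⟨j + 1, ?_, ?_, hq⟩))
          · refine le_trans hM' ?_
            rw [hq, inv_mul_cancel]
            exact BT_step ℬ t j
          · rw [if_pos hq, hq] at hc; omega
        · refine ih _ (q * g) (Or.inr (Or.inr ⟨j, hM', ?_⟩))
          rw [if_neg hq] at hc; omega

include hmul in
theorem graded_nilpotent (S : Finset G) (hS : ∀ g ∉ S, ℬ g = ⊥)
    {N : ℕ} (hN : PP (ℬ 1) N = ⊥) :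
    PP (⨆ g, ℬ g) (S.card * (N + 1)) = ⊥ := by
  refine le_bot_iff.mp (le_trans (PP_iSup_le ℬ _) ?_)
  refine iSup_le fun i => iSup_le fun l => iSup_le fun hl => ?_
  rw [le_bot_iff]
  by_cases hiS : i ∈ S
  case neg =>
    refine le_bot_iff.mp (le_trans (foldA_le ℬ (le_of_eq (hS i hiS)) l) ?_)
    rw [foldA_bot]
  by_cases hall : allS S i l
  case neg => exact notallS_bot ℬ hmul S hS l (ℬ i) i le_rfl hall
  -- pigeonhole
  have hsum : ∑ t ∈ S, ((if i = t then 1 else 0) + hitcount t i l) = S.card * (N + 1) + 1 := by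
    rw [Finset.sum_add_distrib, hit_sum S l i hall, Finset.sum_ite_eq S i (fun _ => 1), hl]
    simp [hiS, Nat.add_comm]
  have hex : ∃ t ∈ S, N + 2 ≤ (if i = t then 1 else 0) + hitcount t i l := by
    by_contra hcon
    push_neg at hcon
    have : ∑ t ∈ S, ((if i = t then 1 else 0) + hitcount t i l) ≤ ∑ _t ∈ S, (N + 1) :=
      Finset.sum_le_sum fun t ht => by have := hcon t ht; omega
    rw [hsum, Finset.sum_const, smul_eq_mul] at this
    omega
  obtain ⟨t, _, hct⟩ := hex
  by_cases hit : i = t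
  · subst hit
    refine graded_collapse ℬ hmul hN i l (ℬ i) i (Or.inr (Or.inl ⟨0, le_rfl, ?_, rfl⟩))
    rw [if_pos rfl] at hct; omega
  · refine graded_collapse ℬ hmul hN t l (ℬ i) i (Or.inl ⟨le_rfl, ?_⟩)
    rw [if_neg hit] at hct; omega

end Graded
section Extract
variable {G : Type*} [Group G] [DecidableEq G] {F : Type*} [Field F]
  {R : Type*} [NonUnitalRing R] [Module F R] [SMulCommClass F R R] [IsScalarTower F R R]
  (ℬ : G → Submodule F R) [DirectSum.Decomposition ℬ]
  (hmul : ∀ g h : G, ∀ x ∈ ℬ g, ∀ y ∈ ℬ h, x * y ∈ ℬ (g * h))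

/-- the degree-`g` component, as a bare element of `R` -/
noncomputable def comp (g : G) : R →+ R where
  toFun z := ((DirectSum.decompose ℬ z) g : R)
  map_zero' := by simp
  map_add' := by intros; simp

theorem comp_apply (g : G) (z : R) : comp ℬ g z = ((DirectSum.decompose ℬ z) g : R) := rfl

theorem comp_of_mem {h g : G} {z : R} (hz : z ∈ ℬ h) :
    comp ℬ g z = z ∨ comp ℬ g z = 0 := by
  by_cases hgh : g = h
  · subst hgh; exact Or.inl (DirectSum.decompose_of_mem_same ℬ hz)
  · exact Or.inr (DirectSum.decompose_of_mem_ne ℬ hz (fun hh => hgh hh.symm))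

theorem comp_mem_of_homog {h g : G} {z : R} (hz : z ∈ ℬ h) {M : Submodule F R}
    (hzM : z ∈ M) : comp ℬ g z ∈ M := by
  rcases comp_of_mem ℬ hz (g := g) with he | he <;> rw [he]
  · exact hzM
  · exact M.zero_mem

include hmul in
/-- components of an element of `⊤ ⊙ I` with `I` of degree `1` -/
theorem extract_TI {I : Submodule F R} (hI : I ≤ ℬ 1) {z : R}
    (hz : z ∈ (⊤ : Submodule F R) ⊙ I) (g : G) : comp ℬ g z ∈ ℬ g ⊙ I := by
  classical
  refine pmul_induction_on (C := fun z => comp ℬ g z ∈ ℬ g ⊙ I) hz ?_ ?_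
  · intro r _ y hy
    have hy1 : y ∈ ℬ 1 := hI hy
    have hry : r * y = ∑ h ∈ (DirectSum.decompose ℬ r).support,
        ((DirectSum.decompose ℬ r h : R) * y) := by
      conv_lhs => rw [← DirectSum.sum_support_decompose ℬ r]
      rw [Finset.sum_mul]
    rw [hry, map_sum]
    refine Submodule.sum_mem _ fun h _ => ?_
    have hterm : (DirectSum.decompose ℬ r h : R) * y ∈ ℬ h := by
      have := hmul h 1 ((DirectSum.decompose ℬ r) h : R) (SetLike.coe_mem _) y hy1
      rwa [mul_one] at this
    by_cases hgh : g = h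
    · subst hgh
      rw [comp_apply, DirectSum.decompose_of_mem_same ℬ hterm]
      exact pmul_mem_pmul (SetLike.coe_mem _) hy
    · rw [comp_apply, DirectSum.decompose_of_mem_ne ℬ hterm (fun hh => hgh hh.symm)]
      exact Submodule.zero_mem _
  · intro x y hx hy
    rw [map_add]; exact Submodule.add_mem _ hx hy

include hmul in
theorem extract_IT {I : Submodule F R} (hI : I ≤ ℬ 1) {z : R}
    (hz : z ∈ I ⊙ (⊤ : Submodule F R)) (g : G) : comp ℬ g z ∈ I ⊙ ℬ g := by
  classical
  refine pmul_induction_on (C := fun z => comp ℬ g z ∈ I ⊙ ℬ g) hz ?_ ?_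
  · intro y hy r _
    have hy1 : y ∈ ℬ 1 := hI hy
    have hry : y * r = ∑ h ∈ (DirectSum.decompose ℬ r).support,
        (y * (DirectSum.decompose ℬ r h : R)) := by
      conv_lhs => rw [← DirectSum.sum_support_decompose ℬ r]
      rw [Finset.mul_sum]
    rw [hry, map_sum]
    refine Submodule.sum_mem _ fun h _ => ?_
    have hterm : y * (DirectSum.decompose ℬ r h : R) ∈ ℬ h := by
      have := hmul 1 h y hy1 ((DirectSum.decompose ℬ r) h : R) (SetLike.coe_mem _)
      rwa [one_mul] at this
    by_cases hgh : g = h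
    · subst hgh
      rw [comp_apply, DirectSum.decompose_of_mem_same ℬ hterm]
      exact pmul_mem_pmul hy (SetLike.coe_mem _)
    · rw [comp_apply, DirectSum.decompose_of_mem_ne ℬ hterm (fun hh => hgh hh.symm)]
      exact Submodule.zero_mem _
  · intro x y hx hy
    rw [map_add]; exact Submodule.add_mem _ hx hy

include hmul in
theorem extract_TIT {I : Submodule F R} (hI : I ≤ ℬ 1) {z : R}
    (hz : z ∈ ((⊤ : Submodule F R) ⊙ I) ⊙ ⊤) (g : G) :
    comp ℬ g z ∈ ⨆ h : G, (ℬ h ⊙ I) ⊙ ℬ (h⁻¹ * g) := by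
  classical
  refine pmul_induction_on
    (C := fun z => comp ℬ g z ∈ ⨆ h : G, (ℬ h ⊙ I) ⊙ ℬ (h⁻¹ * g)) hz ?_ ?_
  · intro p hp r _
    have hpr : p * r = ∑ h ∈ (DirectSum.decompose ℬ p).support,
        ∑ k ∈ (DirectSum.decompose ℬ r).support,
        ((DirectSum.decompose ℬ p h : R) * (DirectSum.decompose ℬ r k : R)) := by
      conv_lhs => rw [← DirectSum.sum_support_decompose ℬ p,
        ← DirectSum.sum_support_decompose ℬ r]
      rw [Finset.sum_mul]
      exact Finset.sum_congr rfl fun h _ => Finset.mul_sum _ _ _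
    rw [hpr, map_sum]
    refine Submodule.sum_mem _ fun h _ => ?_
    rw [map_sum]
    refine Submodule.sum_mem _ fun k _ => ?_
    have hph : (DirectSum.decompose ℬ p h : R) ∈ ℬ h ⊙ I := extract_TI ℬ hmul hI hp h
    have hterm : (DirectSum.decompose ℬ p h : R) * (DirectSum.decompose ℬ r k : R)
        ∈ ℬ (h * k) := hmul h k ((DirectSum.decompose ℬ p) h : R) (SetLike.coe_mem _) ((DirectSum.decompose ℬ r) k : R) (SetLike.coe_mem _)
    by_cases hgh : g = h * k
    · have hk : k = h⁻¹ * g := by rw [hgh, inv_mul_cancel_left]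
      rw [comp_apply, DirectSum.decompose_of_mem_same ℬ (hgh ▸ hterm)]
      refine le_iSup (fun h => (ℬ h ⊙ I) ⊙ ℬ (h⁻¹ * g)) h ?_
      exact pmul_mem_pmul hph (hk ▸ SetLike.coe_mem _)
    · rw [comp_apply, DirectSum.decompose_of_mem_ne ℬ hterm (fun hh => hgh hh.symm)]
      exact Submodule.zero_mem _
  · intro x y hx hy
    rw [map_add]; exact Submodule.add_mem _ hx hy

include hmul in
theorem extract_TT {z : R}
    (hz : z ∈ ((⊤ : Submodule F R) ⊙ ⊤)) (g : G) :
    comp ℬ g z ∈ ((⊤ : Submodule F R) ⊙ ⊤) := by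
  classical
  refine pmul_induction_on (C := fun z => comp ℬ g z ∈ ((⊤ : Submodule F R) ⊙ ⊤)) hz ?_ ?_
  · intro p _ r _
    have hpr : p * r = ∑ h ∈ (DirectSum.decompose ℬ p).support,
        ∑ k ∈ (DirectSum.decompose ℬ r).support,
        ((DirectSum.decompose ℬ p h : R) * (DirectSum.decompose ℬ r k : R)) := by
      conv_lhs => rw [← DirectSum.sum_support_decompose ℬ p,
        ← DirectSum.sum_support_decompose ℬ r]
      rw [Finset.sum_mul]
      exact Finset.sum_congr rfl fun h _ => Finset.mul_sum _ _ _
    rw [hpr, map_sum]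
    refine Submodule.sum_mem _ fun h _ => ?_
    rw [map_sum]
    refine Submodule.sum_mem _ fun k _ => ?_
    have hterm : (DirectSum.decompose ℬ p h : R) * (DirectSum.decompose ℬ r k : R)
        ∈ ℬ (h * k) := hmul h k ((DirectSum.decompose ℬ p) h : R) (SetLike.coe_mem _) ((DirectSum.decompose ℬ r) k : R) (SetLike.coe_mem _)
    exact comp_mem_of_homog ℬ hterm (pmul_mem_pmul trivial trivial)
  · intro x y hx hy
    rw [map_add]; exact Submodule.add_mem _ hx hy

end Extract

/-- The identity component `R_e` of a finite-dimensional graded simple algebra is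
semiprimitive: its Jacobson radical is zero, i.e. every two-sided ideal of `R_e`
consisting of quasi-regular elements is zero. -/
theorem stmt_8 {G : Type*} [Group G] [DecidableEq G] {F : Type*} [Field F]
    {R : Type*} [NonUnitalRing R] [Module F R] [SMulCommClass F R R] [IsScalarTower F R R]
    [FiniteDimensional F R]
    (ℬ : G → Submodule F R) [DirectSum.Decomposition ℬ]
    (hmul : ∀ g h : G, ∀ x ∈ ℬ g, ∀ y ∈ ℬ h, x * y ∈ ℬ (g * h))
    -- `R` is graded simple:
    (hR2 : ∃ x y : R, x * y ≠ 0)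
    (hsimple : ∀ J : TwoSidedIdeal R,
      (∀ x ∈ J, ∀ g : G, ((DirectSum.decompose ℬ x) g : R) ∈ J) → J = ⊥ ∨ J = ⊤) :
    -- `R_e = ℬ 1` is semiprimitive: any two-sided ideal `I` of `R_e` all of whose
    -- elements are quasi-regular (in `R_e`) is zero.
    ∀ I : Submodule F R, I ≤ ℬ (1 : G) →
      (∀ a ∈ ℬ (1 : G), ∀ x ∈ I, a * x ∈ I ∧ x * a ∈ I) →
      (∀ x ∈ I, ∃ y ∈ ℬ (1 : G), x + y + x * y = 0 ∧ x + y + y * x = 0) →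
      I = ⊥ := by
  intro I hIle hId hqr
  classical
  set Js : Submodule F R :=
    I ⊔ (⊤ : Submodule F R) ⊙ I ⊔ I ⊙ (⊤ : Submodule F R)
      ⊔ ((⊤ : Submodule F R) ⊙ I) ⊙ (⊤ : Submodule F R) with hJsdef
  have hle1 : I ≤ Js := le_sup_left.trans (le_sup_left.trans le_sup_left)
  have hle2 : (⊤ : Submodule F R) ⊙ I ≤ Js := le_sup_right.trans (le_sup_left.trans le_sup_left)
  have hle3 : I ⊙ (⊤ : Submodule F R) ≤ Js := le_sup_right.trans le_sup_left
  have hle4 : ((⊤ : Submodule F R) ⊙ I) ⊙ (⊤ : Submodule F R) ≤ Js := le_sup_right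
  have hleftT : ∀ x : R, ∀ z ∈ (⊤ : Submodule F R) ⊙ I, x * z ∈ (⊤ : Submodule F R) ⊙ I := by
    intro x z hz
    refine pmul_induction_on (C := fun z => x * z ∈ (⊤ : Submodule F R) ⊙ I) hz ?_ ?_
    · intro r _ y hy; rw [← mul_assoc]; exact pmul_mem_pmul trivial hy
    · intro a b ha hb; rw [mul_add]; exact Submodule.add_mem _ ha hb
  have hrightT : ∀ x : R, ∀ z ∈ I ⊙ (⊤ : Submodule F R), z * x ∈ I ⊙ (⊤ : Submodule F R) := by
    intro x z hz
    refine pmul_induction_on (C := fun z => z * x ∈ I ⊙ (⊤ : Submodule F R)) hz ?_ ?_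
    · intro y hy r _; rw [mul_assoc]; exact pmul_mem_pmul hy trivial
    · intro a b ha hb; rw [add_mul]; exact Submodule.add_mem _ ha hb
  have hsplit : ∀ z ∈ Js, ∃ w1 ∈ I, ∃ w2 ∈ (⊤ : Submodule F R) ⊙ I,
      ∃ w3 ∈ I ⊙ (⊤ : Submodule F R), ∃ w4 ∈ ((⊤ : Submodule F R) ⊙ I) ⊙ (⊤ : Submodule F R),
      z = w1 + w2 + w3 + w4 := by
    intro z hz
    obtain ⟨u, hu, w4, hw4, rfl⟩ := Submodule.mem_sup.mp hz
    obtain ⟨v, hv, w3, hw3, rfl⟩ := Submodule.mem_sup.mp hu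
    obtain ⟨w1, hw1, w2, hw2, rfl⟩ := Submodule.mem_sup.mp hv
    exact ⟨w1, hw1, w2, hw2, w3, hw3, w4, hw4, rfl⟩
  have hml : ∀ {x y : R}, y ∈ (Js : Set R) → x * y ∈ (Js : Set R) := by
    intro x y hy
    obtain ⟨w1, hw1, w2, hw2, w3, hw3, w4, hw4, rfl⟩ := hsplit y hy
    rw [mul_add, mul_add, mul_add]
    refine Js.add_mem (Js.add_mem (Js.add_mem ?_ ?_) ?_) ?_
    · exact hle2 (pmul_mem_pmul trivial hw1)
    · exact hle2 (hleftT x _ hw2)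
    · refine hle4 ?_
      rw [pmul_assoc]
      exact pmul_mem_pmul trivial hw3
    · refine hle4 ?_
      refine pmul_induction_on
        (C := fun w => x * w ∈ ((⊤ : Submodule F R) ⊙ I) ⊙ (⊤ : Submodule F R)) hw4 ?_ ?_
      · intro p hp r _; rw [← mul_assoc]; exact pmul_mem_pmul (hleftT x p hp) trivial
      · intro a b ha hb; rw [mul_add]; exact Submodule.add_mem _ ha hb
  have hmr : ∀ {x y : R}, x ∈ (Js : Set R) → x * y ∈ (Js : Set R) := by
    intro x y hx
    obtain ⟨w1, hw1, w2, hw2, w3, hw3, w4, hw4, rfl⟩ := hsplit x hx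
    rw [add_mul, add_mul, add_mul]
    refine Js.add_mem (Js.add_mem (Js.add_mem ?_ ?_) ?_) ?_
    · exact hle3 (pmul_mem_pmul hw1 trivial)
    · exact hle4 (pmul_mem_pmul hw2 trivial)
    · exact hle3 (hrightT y _ hw3)
    · refine hle4 ?_
      refine pmul_induction_on
        (C := fun w => w * y ∈ ((⊤ : Submodule F R) ⊙ I) ⊙ (⊤ : Submodule F R)) hw4 ?_ ?_
      · intro p hp r _; rw [mul_assoc]; exact pmul_mem_pmul hp trivial
      · intro a b ha hb; rw [add_mul]; exact Submodule.add_mem _ ha hb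
  set J : TwoSidedIdeal R := TwoSidedIdeal.mk' (Js : Set R) Js.zero_mem
    (fun h1 h2 => Js.add_mem h1 h2) (fun h1 => Js.neg_mem h1)
    (fun h1 => hml h1) (fun h1 => hmr h1) with hJdef
  have hmemJ : ∀ x : R, x ∈ J ↔ x ∈ Js := fun x => TwoSidedIdeal.mem_mk' _ _ _ _ _ _ x
  have hgr : ∀ x ∈ J, ∀ g : G, ((DirectSum.decompose ℬ x) g : R) ∈ J := by
    intro x hx g
    obtain ⟨w1, hw1, w2, hw2, w3, hw3, w4, hw4, rfl⟩ := hsplit x ((hmemJ x).mp hx)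
    rw [hmemJ]
    have hco : ((DirectSum.decompose ℬ (w1 + w2 + w3 + w4)) g : R)
        = comp ℬ g w1 + comp ℬ g w2 + comp ℬ g w3 + comp ℬ g w4 := by
      rw [← comp_apply, map_add, map_add, map_add]
    rw [hco]
    refine Js.add_mem (Js.add_mem (Js.add_mem ?_ ?_) ?_) ?_
    · exact hle1 (comp_mem_of_homog ℬ (hIle hw1) hw1)
    · exact hle2 (pmul_le_pmul le_top le_rfl (extract_TI ℬ hmul hIle hw2 g))
    · exact hle3 (pmul_le_pmul le_rfl le_top (extract_IT ℬ hmul hIle hw3 g))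
    · refine hle4 ?_
      refine (iSup_le fun h => ?_ :
        (⨆ h : G, (ℬ h ⊙ I) ⊙ ℬ (h⁻¹ * g)) ≤ ((⊤ : Submodule F R) ⊙ I) ⊙ ⊤)
        (extract_TIT ℬ hmul hIle hw4 g)
      exact pmul_le_pmul (pmul_le_pmul le_top le_rfl) le_top
  rcases hsimple J hgr with hbot | htop
  · -- J = ⊥ forces I = ⊥
    rw [eq_bot_iff]
    intro x hx
    have hxJ : x ∈ J := (hmemJ x).mpr (hle1 hx)
    rw [hbot] at hxJ
    rw [Submodule.mem_bot]
    exact (TwoSidedIdeal.mem_bot (R := R)).mp hxJ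
  · exfalso
    obtain ⟨n, hn⟩ := qr_nilpotent (ℬ 1) I hIle hId hqr
    have hind : iSupIndep ℬ := (DirectSum.Decomposition.isInternal ℬ).submodule_iSupIndep
    haveI : Fintype ↑{g : G | ℬ g ≠ ⊥} := hind.fintypeNeBotOfFiniteDimensional
    set S : Finset G := {g : G | ℬ g ≠ ⊥}.toFinset with hSdef
    have hS : ∀ g ∉ S, ℬ g = ⊥ := by
      intro g hg
      by_contra hne
      apply hg
      rw [hSdef]
      exact Set.mem_toFinset.mpr hne
    -- basic multiplication facts
    have hRe : ℬ (1 : G) ⊙ ℬ (1 : G) ≤ ℬ 1 := by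
      have := bB ℬ hmul 1 1; rwa [mul_one] at this
    have hReI : ℬ (1 : G) ⊙ I ≤ I := pmul_le.2 fun a ha x hx => (hId a ha x hx).1
    have hIRe : I ⊙ ℬ (1 : G) ≤ I := pmul_le.2 fun x hx a ha => (hId a ha x hx).2
    have hBRe : ∀ g : G, ℬ g ⊙ ℬ (1 : G) ≤ ℬ g := fun g => by
      have := bB ℬ hmul g 1; rwa [mul_one] at this
    have hReB : ∀ g : G, ℬ (1 : G) ⊙ ℬ g ≤ ℬ g := fun g => by
      have := bB ℬ hmul 1 g; rwa [one_mul] at this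
    -- the family of ideals of `ℬ 1`
    set A : Option {g : G // g ∈ S} → Submodule F R :=
      fun i => i.elim I (fun g => (ℬ g.1 ⊙ I) ⊙ ℬ (g.1)⁻¹) with hAdef
    have hAle : ∀ i, A i ≤ ℬ (1 : G) := by
      rintro (_ | ⟨g, hg⟩)
      · exact hIle
      · show (ℬ g ⊙ I) ⊙ ℬ g⁻¹ ≤ ℬ 1
        calc (ℬ g ⊙ I) ⊙ ℬ g⁻¹ ≤ (ℬ g ⊙ ℬ 1) ⊙ ℬ g⁻¹ :=
              pmul_le_pmul (pmul_le_pmul le_rfl hIle) le_rfl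
          _ ≤ ℬ g ⊙ ℬ g⁻¹ := pmul_le_pmul (hBRe g) le_rfl
          _ ≤ ℬ (g * g⁻¹) := bB ℬ hmul g g⁻¹
          _ = ℬ 1 := by rw [mul_inv_cancel]
    have hReA : ∀ i, ℬ (1 : G) ⊙ A i ≤ A i := by
      rintro (_ | ⟨g, hg⟩)
      · exact hReI
      · show ℬ 1 ⊙ ((ℬ g ⊙ I) ⊙ ℬ g⁻¹) ≤ (ℬ g ⊙ I) ⊙ ℬ g⁻¹
        calc ℬ 1 ⊙ ((ℬ g ⊙ I) ⊙ ℬ g⁻¹) = (ℬ 1 ⊙ (ℬ g ⊙ I)) ⊙ ℬ g⁻¹ := (pmul_assoc _ _ _).symm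
          _ = ((ℬ 1 ⊙ ℬ g) ⊙ I) ⊙ ℬ g⁻¹ := by rw [pmul_assoc (ℬ 1) (ℬ g) I]
          _ ≤ (ℬ g ⊙ I) ⊙ ℬ g⁻¹ := pmul_le_pmul (pmul_le_pmul (hReB g) le_rfl) le_rfl
    have hARe : ∀ i, A i ⊙ ℬ (1 : G) ≤ A i := by
      rintro (_ | ⟨g, hg⟩)
      · exact hIRe
      · show ((ℬ g ⊙ I) ⊙ ℬ g⁻¹) ⊙ ℬ 1 ≤ (ℬ g ⊙ I) ⊙ ℬ g⁻¹
        calc ((ℬ g ⊙ I) ⊙ ℬ g⁻¹) ⊙ ℬ 1 = (ℬ g ⊙ I) ⊙ (ℬ g⁻¹ ⊙ ℬ 1) := pmul_assoc _ _ _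
          _ ≤ (ℬ g ⊙ I) ⊙ ℬ g⁻¹ := pmul_le_pmul le_rfl (hBRe g⁻¹)
    have hAnil : ∀ i, PP (A i) n = ⊥ := by
      rintro (_ | ⟨g, hg⟩)
      · exact hn
      · have key : ∀ k, PP (A (some ⟨g, hg⟩)) k ≤ (ℬ g ⊙ PP I k) ⊙ ℬ g⁻¹ := by
          intro k
          induction k with
          | zero => exact le_rfl
          | succ k ih =>
              show PP (A (some ⟨g, hg⟩)) k ⊙ A (some ⟨g, hg⟩) ≤ _
              refine le_trans (pmul_le_pmul ih le_rfl) ?_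
              show ((ℬ g ⊙ PP I k) ⊙ ℬ g⁻¹) ⊙ ((ℬ g ⊙ I) ⊙ ℬ g⁻¹) ≤ _
              calc ((ℬ g ⊙ PP I k) ⊙ ℬ g⁻¹) ⊙ ((ℬ g ⊙ I) ⊙ ℬ g⁻¹)
                  = (ℬ g ⊙ PP I k) ⊙ (ℬ g⁻¹ ⊙ ((ℬ g ⊙ I) ⊙ ℬ g⁻¹)) := pmul_assoc _ _ _
                _ = (ℬ g ⊙ PP I k) ⊙ (((ℬ g⁻¹ ⊙ ℬ g) ⊙ I) ⊙ ℬ g⁻¹) := by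
                    rw [← pmul_assoc (ℬ g⁻¹) (ℬ g ⊙ I) (ℬ g⁻¹), ← pmul_assoc (ℬ g⁻¹) (ℬ g) I]
                _ ≤ (ℬ g ⊙ PP I k) ⊙ ((ℬ 1 ⊙ I) ⊙ ℬ g⁻¹) := by
                    refine pmul_le_pmul le_rfl (pmul_le_pmul (pmul_le_pmul ?_ le_rfl) le_rfl)
                    have := bB ℬ hmul g⁻¹ g; rwa [inv_mul_cancel] at this
                _ ≤ (ℬ g ⊙ PP I k) ⊙ (I ⊙ ℬ g⁻¹) :=
                    pmul_le_pmul le_rfl (pmul_le_pmul hReI le_rfl)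
                _ = ((ℬ g ⊙ PP I k) ⊙ I) ⊙ ℬ g⁻¹ := (pmul_assoc _ _ _).symm
                _ = (ℬ g ⊙ (PP I k ⊙ I)) ⊙ ℬ g⁻¹ := by rw [pmul_assoc (ℬ g) (PP I k) I]
                _ = (ℬ g ⊙ PP I (k + 1)) ⊙ ℬ g⁻¹ := rfl
        refine le_bot_iff.mp ?_
        refine le_trans (key n) ?_
        rw [hn, pmul_bot, bot_pmul]
    have hnil2 := nilsum (ℬ (1 : G)) A hRe hAle hARe hReA n hAnil
    -- every element of `ℬ 1` lies in the sum of the ideals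
    have hResub : ℬ (1 : G) ≤ ⨆ i, A i := by
      intro x hx
      have hxJ : x ∈ J := by rw [htop]; exact TwoSidedIdeal.mem_top (R := R)
      obtain ⟨w1, hw1, w2, hw2, w3, hw3, w4, hw4, hxw⟩ := hsplit x ((hmemJ x).mp hxJ)
      have hxc : x = comp ℬ 1 x := (DirectSum.decompose_of_mem_same ℬ hx).symm
      have hco : comp ℬ (1 : G) x
          = comp ℬ 1 w1 + comp ℬ 1 w2 + comp ℬ 1 w3 + comp ℬ 1 w4 := by
        rw [hxw, map_add, map_add, map_add]
      have hIsub : I ≤ ⨆ i, A i := le_iSup A none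
      rw [hxc, hco]
      refine Submodule.add_mem _ (Submodule.add_mem _ (Submodule.add_mem _ ?_ ?_) ?_) ?_
      · exact hIsub (comp_mem_of_homog ℬ (hIle hw1) hw1)
      · exact hIsub (hReI (extract_TI ℬ hmul hIle hw2 1))
      · exact hIsub (hIRe (extract_IT ℬ hmul hIle hw3 1))
      · refine (iSup_le fun h => ?_ :
          (⨆ h : G, (ℬ h ⊙ I) ⊙ ℬ (h⁻¹ * 1)) ≤ ⨆ i, A i) (extract_TIT ℬ hmul hIle hw4 1)
        by_cases hh : h ∈ S
        · refine le_trans ?_ (le_iSup A (some ⟨h, hh⟩))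
          rw [mul_one]
          exact le_rfl
        · rw [hS h hh, bot_pmul, bot_pmul]
          exact bot_le
    have hRem : PP (ℬ (1 : G)) (Fintype.card (Option {g : G // g ∈ S}) * n) = ⊥ :=
      le_bot_iff.mp (hnil2 ▸ PP_le_PP hResub _)
    have hTnil := graded_nilpotent ℬ hmul S hS hRem
    have hTop : (⨆ g, ℬ g) = (⊤ : Submodule F R) :=
      (DirectSum.Decomposition.isInternal ℬ).submodule_iSup_eq_top
    rw [hTop] at hTnil
    obtain ⟨x0, y0, hxy0⟩ := hR2
    -- the ideal generated by all products
    have hml2 : ∀ {x y : R}, y ∈ ((⊤ : Submodule F R) ⊙ ⊤ : Submodule F R)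
        → x * y ∈ ((⊤ : Submodule F R) ⊙ ⊤ : Submodule F R) := by
      intro x y hy
      refine pmul_induction_on (C := fun y => x * y ∈ ((⊤ : Submodule F R) ⊙ ⊤)) hy ?_ ?_
      · intro a _ b _; rw [← mul_assoc]; exact pmul_mem_pmul trivial trivial
      · intro a b ha hb; rw [mul_add]; exact Submodule.add_mem _ ha hb
    have hmr2 : ∀ {x y : R}, x ∈ ((⊤ : Submodule F R) ⊙ ⊤ : Submodule F R)
        → x * y ∈ ((⊤ : Submodule F R) ⊙ ⊤ : Submodule F R) := by
      intro x y hx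
      refine pmul_induction_on (C := fun x => x * y ∈ ((⊤ : Submodule F R) ⊙ ⊤)) hx ?_ ?_
      · intro a _ b _; rw [mul_assoc]; exact pmul_mem_pmul trivial trivial
      · intro a b ha hb; rw [add_mul]; exact Submodule.add_mem _ ha hb
    set J2 : TwoSidedIdeal R := TwoSidedIdeal.mk'
      (((⊤ : Submodule F R) ⊙ ⊤ : Submodule F R) : Set R)
      (Submodule.zero_mem _) (fun h1 h2 => Submodule.add_mem _ h1 h2)
      (fun h1 => Submodule.neg_mem _ h1) (fun h1 => hml2 h1) (fun h1 => hmr2 h1) with hJ2def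
    have hmemJ2 : ∀ x : R, x ∈ J2 ↔ x ∈ ((⊤ : Submodule F R) ⊙ ⊤ : Submodule F R) :=
      fun x => TwoSidedIdeal.mem_mk' _ _ _ _ _ _ x
    have hgr2 : ∀ x ∈ J2, ∀ g : G, ((DirectSum.decompose ℬ x) g : R) ∈ J2 := by
      intro x hx g
      rw [hmemJ2]
      exact extract_TT ℬ hmul ((hmemJ2 x).mp hx) g
    rcases hsimple J2 hgr2 with h2b | h2t
    · apply hxy0
      have hxyJ : x0 * y0 ∈ J2 := (hmemJ2 _).mpr (pmul_mem_pmul trivial trivial)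
      rw [h2b] at hxyJ
      exact (TwoSidedIdeal.mem_bot (R := R)).mp hxyJ
    · have hTT : ((⊤ : Submodule F R) ⊙ ⊤ : Submodule F R) = ⊤ := by
        refine le_antisymm le_top fun x _ => ?_
        have : x ∈ J2 := by rw [h2t]; exact TwoSidedIdeal.mem_top (R := R)
        exact (hmemJ2 x).mp this
      have hPPtop : ∀ k, PP (⊤ : Submodule F R) k = ⊤ := by
        intro k
        induction k with
        | zero => rfl
        | succ k ih => show PP (⊤ : Submodule F R) k ⊙ ⊤ = ⊤; rw [ih, hTT]
      rw [hPPtop _] at hTnil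
      apply hxy0
      have hx0 : x0 ∈ (⊥ : Submodule F R) := hTnil ▸ Submodule.mem_top
      rw [Submodule.mem_bot] at hx0
      rw [hx0, zero_mul]
end

section
/- The matrix algebra M_k(F^σ[H]) over a twisted group algebra, equipped with the G-grading deg(E_{ij} ⊗ x_h) = a_i^{-1} h a_j for a fixed k-tuple (a_1,...,a_k) ∈ G^k, is a graded simple algebra: it has no nonzero proper graded two-sided ideals. -/
/-- The matrix algebra `M_k(F^σ[H])` over a twisted group algebra, with the `G`-grading
induced by a `k`-tuple `(a_1, ..., a_k) ∈ G^k` via `deg (E_{ij} ⊗ r_h) = a_i⁻¹ h a_j`,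
is graded simple: it has no nonzero proper graded two-sided ideals. Here a `G`-graded
algebra `R` with a homogeneous basis `(E_{ij} ⊗ r_h)` satisfying the multiplication
rules of `M_k(F^σ[H])` is a copy of `M_k(F^σ[H])` with the induced grading. -/
theorem stmt_17 {G : Type*} [Group G] [DecidableEq G] {F : Type*} [Field F]
    {R : Type*} [NonUnitalRing R] [Module F R] [SMulCommClass F R R] [IsScalarTower F R R]
    (ℬ : G → Submodule F R) [DirectSum.Decomposition ℬ]
    (hmul : ∀ g h : G, ∀ x ∈ ℬ g, ∀ y ∈ ℬ h, x * y ∈ ℬ (g * h))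
    (k : ℕ) (hk : 0 < k) (H : Subgroup G) (hH : Finite H)
    (σ : H → H → Fˣ)
    (hσ : ∀ x y z : H, σ x y * σ (x * y) z = σ y z * σ x (y * z))
    (a : Fin k → G) (b : Module.Basis (Fin k × Fin k × H) F R)
    (hbgr : ∀ (i j : Fin k) (h : H), b (i, j, h) ∈ ℬ ((a i)⁻¹ * (h : G) * a j))
    (hbmul : ∀ (i j i' j' : Fin k) (h h' : H),
      b (i, j, h) * b (i', j', h') =
        if j = i' then (σ h h' : F) • b (i, j', h * h') else 0) :
    ∀ J : TwoSidedIdeal R,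
      (∀ x ∈ J, ∀ g : G, ((DirectSum.decompose ℬ x) g : R) ∈ J) → J = ⊥ ∨ J = ⊤ := by
  classical
  have := Fintype.ofFinite H
  intro J hJ
  by_cases hbot : J = ⊥
  · exact Or.inl hbot
  right
  -- find a nonzero element of J
  obtain ⟨x, hxJ, hx0⟩ : ∃ x ∈ J, x ≠ 0 := by
    by_contra hc
    push_neg at hc
    exact hbot (SetLike.ext fun y => by
      simp only [TwoSidedIdeal.mem_bot]
      exact ⟨fun hy => hc y hy, fun hy => hy ▸ J.zero_mem⟩)
  -- find a nonzero homogeneous component of x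
  obtain ⟨g, hg⟩ : ∃ g : G, ((DirectSum.decompose ℬ x) g : R) ≠ 0 := by
    by_contra hc
    push_neg at hc
    apply hx0
    have : DirectSum.decompose ℬ x = 0 :=
      DFinsupp.ext fun g => Subtype.ext (by simpa using hc g)
    have h2 := congrArg (DirectSum.decompose ℬ).symm this
    simpa using h2
  set y : R := ((DirectSum.decompose ℬ x) g : R) with hy
  have hyJ : y ∈ J := hJ x hxJ g
  have hymem : y ∈ ℬ g := ((DirectSum.decompose ℬ x) g).2
  -- key support lemma: coordinates of y vanish off degree g
  have hsupp : ∀ idx : Fin k × Fin k × H,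
      (a idx.1)⁻¹ * (idx.2.2 : G) * a idx.2.1 ≠ g → b.repr y idx = 0 := by
    intro idx hdeg
    set g' : G := (a idx.1)⁻¹ * (idx.2.2 : G) * a idx.2.1 with hg'
    set π : R →ₗ[F] R :=
      (ℬ g').subtype ∘ₗ (DFinsupp.lapply g') ∘ₗ (DirectSum.decomposeLinearEquiv ℬ).toLinearMap
      with hπ
    set φ : R →ₗ[F] F := (Finsupp.lapply idx) ∘ₗ (b.repr : R →ₗ[F] (Fin k × Fin k × H) →₀ F)
      with hφ
    have hcomp : φ ∘ₗ π = φ := by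
      apply b.ext
      rintro ⟨i, j, h⟩
      by_cases hd : (a i)⁻¹ * (h : G) * a j = g'
      · have : π (b (i, j, h)) = b (i, j, h) := by
          simp only [hπ, LinearMap.comp_apply, LinearEquiv.coe_coe,
            DirectSum.decomposeLinearEquiv_apply]
          have := DirectSum.decompose_of_mem_same ℬ (hd ▸ hbgr i j h)
          exact this
        simp [LinearMap.comp_apply, this]
      · have hπ0 : π (b (i, j, h)) = 0 := by
          simp only [hπ, LinearMap.comp_apply, LinearEquiv.coe_coe,
            DirectSum.decomposeLinearEquiv_apply]
          exact DirectSum.decompose_of_mem_ne ℬ (hbgr i j h) hd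
        have hne : (i, j, h) ≠ idx := by
          intro hcon
          apply hd
          rw [← hcon] at hg'
          exact hg'.symm
        simp [LinearMap.comp_apply, hπ0, hφ, Finsupp.lapply_apply,
          Module.Basis.repr_self, Finsupp.single_apply_eq_zero.mpr (fun hcon => absurd hcon.symm
            (by simpa using hne))]
    have hπy : π y = 0 := by
      simp only [hπ, LinearMap.comp_apply, LinearEquiv.coe_coe,
        DirectSum.decomposeLinearEquiv_apply]
      exact DirectSum.decompose_of_mem_ne ℬ hymem (Ne.symm hdeg)
    have := congrArg (fun f : R →ₗ[F] F => f y) hcomp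
    simp only [LinearMap.comp_apply, hπy, map_zero] at this
    simpa [hφ, Finsupp.lapply_apply] using this.symm
  -- find a nonzero coordinate of y
  obtain ⟨idx₀, hc₀⟩ : ∃ idx, b.repr y idx ≠ 0 := by
    by_contra hc
    push_neg at hc
    apply hg
    have : b.repr y = 0 := Finsupp.ext fun idx => hc idx
    have := congrArg b.repr.symm this
    simpa using this
  obtain ⟨i₀, j₀, h₀⟩ := idx₀
  have hdeg₀ : (a i₀)⁻¹ * (h₀ : G) * a j₀ = g := by
    by_contra hc
    exact hc₀ (hsupp _ hc)
  set c₀ : F := b.repr y (i₀, j₀, h₀) with hc₀def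
  -- main claim: every scalar multiple of every basis vector is in J
  have hkey : ∀ (p q : Fin k) (h' : H) (d : F), d • b (p, q, h') ∈ J := by
    intro p q h' d
    set h₁ : H := h' * h₀⁻¹ with hh₁
    set u : F := c₀ * (σ h₁ h₀ : F) * (σ (h₁ * h₀) 1 : F) with hu
    have hu0 : u ≠ 0 := by
      simp only [hu]
      exact mul_ne_zero (mul_ne_zero hc₀ (Units.ne_zero _)) (Units.ne_zero _)
    set e : F := d * u⁻¹ with he
    -- compute (e • b (p, i₀, h₁)) * y * b (j₀, q, 1)
    have hyrepr : ∑ idx : Fin k × Fin k × H, b.repr y idx • b idx = y := b.sum_repr y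
    have hcompute : b (p, i₀, h₁) * y * b (j₀, q, 1) = u • b (p, q, h₁ * h₀) := by
      rw [← hyrepr, Finset.mul_sum, Finset.sum_mul]
      have hsum : ∑ idx : Fin k × Fin k × H,
          b (p, i₀, h₁) * (b.repr y idx • b idx) * b (j₀, q, 1)
          = b (p, i₀, h₁) * (b.repr y (i₀, j₀, h₀) • b (i₀, j₀, h₀)) * b (j₀, q, 1) := by
        apply Finset.sum_eq_single
        · rintro ⟨i, j, h⟩ _ hne
          rw [mul_smul_comm, smul_mul_assoc, hbmul]
          by_cases hi : i₀ = i
          · rw [if_pos hi]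
            by_cases hj : j = j₀
            · -- then h ≠ h₀, so the coordinate vanishes
              have hh : h ≠ h₀ := by
                rintro rfl
                exact hne (by rw [← hi, hj])
              have hz : b.repr y (i, j, h) = 0 := by
                apply hsupp
                show (a i)⁻¹ * (h : G) * a j ≠ g
                rw [← hi, hj, ← hdeg₀]
                intro hcon
                exact hh (Subtype.ext (mul_left_cancel (mul_right_cancel hcon)))
              rw [hz, zero_smul]
            · rw [smul_mul_assoc, hbmul, if_neg hj, smul_zero, smul_zero]
          · rw [if_neg hi, zero_mul, smul_zero]
        · intro hmem
          exact absurd (Finset.mem_univ _) hmem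
      rw [hsum, mul_smul_comm, smul_mul_assoc, hbmul, if_pos rfl, smul_mul_assoc, hbmul,
        if_pos rfl, mul_one, smul_smul, smul_smul]
    have hz : (e • b (p, i₀, h₁)) * y * b (j₀, q, 1) ∈ J :=
      J.mul_mem_right _ _ (J.mul_mem_left _ _ hyJ)
    have : (e • b (p, i₀, h₁)) * y * b (j₀, q, 1) = d • b (p, q, h') := by
      rw [smul_mul_assoc, smul_mul_assoc, hcompute, smul_smul, he,
        mul_assoc, inv_mul_cancel₀ hu0, mul_one]
      congr 1
      simp [hh₁]
    rwa [this] at hz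
  -- conclude J = ⊤
  rw [eq_top_iff]
  intro r _
  rw [← b.sum_repr r]
  exact sum_mem fun idx _ => hkey idx.1 idx.2.1 idx.2.2 _
end

section
/- Let R be a finite-dimensional G-graded algebra over an algebraically closed field F with char F = 0 or char F coprime to the order of every finite subgroup of G. Then R is simple (as an ungraded algebra) if and only if R is graded simple and the center of R equals F. -/
set_option linter.unusedSectionVars false
set_option linter.unusedVariables false
set_option linter.unnecessarySimpa false
set_option maxHeartbeats 3200000

open DirectSum

section Graded
variable {G : Type*} [Group G] [DecidableEq G] {F : Type*} [Field F]
  {R : Type*} [Ring R] [Algebra F R]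
  (ℬ : G → Submodule F R) [DirectSum.Decomposition ℬ]

/-- The degree-`g` component projection, as an `F`-linear map. -/
noncomputable def projB (g : G) : R →ₗ[F] R where
  toFun x := (DirectSum.decompose ℬ x g : R)
  map_add' x y := by simp
  map_smul' c x := by simp [DirectSum.smul_apply]

@[simp] lemma projB_apply (g : G) (x : R) :
    projB ℬ g x = (DirectSum.decompose ℬ x g : R) := rfl

lemma decompose_linear_comm (L : R →ₗ[F] R) (σ : Equiv.Perm G)
    (hL : ∀ k : G, ∀ x ∈ ℬ k, L x ∈ ℬ (σ k)) (x : R) (g : G) :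
    (DirectSum.decompose ℬ (L x) (σ g) : R) = L (DirectSum.decompose ℬ x g) := by
  classical
  have hx : L x = ∑ k ∈ (DirectSum.decompose ℬ x).support,
      L (DirectSum.decompose ℬ x k : R) := by
    rw [← map_sum, DirectSum.sum_support_decompose]
  have : (DirectSum.decompose ℬ (L x) (σ g) : R)
      = ∑ k ∈ (DirectSum.decompose ℬ x).support,
        (DirectSum.decompose ℬ (L (DirectSum.decompose ℬ x k : R)) (σ g) : R) := by
    rw [hx, ← projB_apply, map_sum]
    simp only [projB_apply]
  rw [this]
  have hterm : ∀ k ∈ (DirectSum.decompose ℬ x).support,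
      (DirectSum.decompose ℬ (L (DirectSum.decompose ℬ x k : R)) (σ g) : R)
        = if k = g then L (DirectSum.decompose ℬ x k : R) else 0 := by
    intro k _
    have hk : L (DirectSum.decompose ℬ x k : R) ∈ ℬ (σ k) :=
      hL k _ (SetLike.coe_mem _)
    by_cases h : k = g
    · subst h; simp [DirectSum.decompose_of_mem_same ℬ hk]
    · rw [if_neg h]
      exact DirectSum.decompose_of_mem_ne ℬ hk (fun hc => h (σ.injective hc))
  rw [Finset.sum_congr rfl hterm, Finset.sum_ite_eq' _ g
    (fun k => L (DirectSum.decompose ℬ x k : R))]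
  by_cases hg : g ∈ (DirectSum.decompose ℬ x).support
  · rw [if_pos hg]
  · rw [if_neg hg]
    have : (DirectSum.decompose ℬ x g : R) = 0 := by
      simpa using DFinsupp.notMem_support_iff.mp hg
    rw [this, map_zero]

end Graded

section Graded
variable {G : Type*} [Group G] [DecidableEq G] {F : Type*} [Field F]
  {R : Type*} [Ring R] [Algebra F R]
  (ℬ : G → Submodule F R) [DirectSum.Decomposition ℬ]

lemma span_homog_mul_left
    (hmul : ∀ g h : G, ∀ x ∈ ℬ g, ∀ y ∈ ℬ h, x * y ∈ ℬ (g * h))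
    {z : R} {gz : G} (hz : z ∈ ℬ gz) (r x : R)
    (hx : x ∈ Submodule.span F {t : R | ∃ (a b : R) (ga gb : G),
      a ∈ ℬ ga ∧ b ∈ ℬ gb ∧ t = a * z * b}) :
    r * x ∈ Submodule.span F {t : R | ∃ (a b : R) (ga gb : G),
      a ∈ ℬ ga ∧ b ∈ ℬ gb ∧ t = a * z * b} := by
  classical
  induction hx using Submodule.span_induction with
  | mem t ht =>
    obtain ⟨a, b, ga, gb, ha, hb, rfl⟩ := ht
    have : r * (a * z * b) = ∑ k ∈ (DirectSum.decompose ℬ r).support,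
        ((DirectSum.decompose ℬ r k : R) * a) * z * b := by
      conv_lhs => rw [← DirectSum.sum_support_decompose ℬ r]
      rw [Finset.sum_mul]
      exact Finset.sum_congr rfl fun k _ => by noncomm_ring
    rw [this]
    exact Submodule.sum_mem _ fun k _ => Submodule.subset_span
      ⟨(DirectSum.decompose ℬ r k : R) * a, b, k * ga, gb,
        hmul _ _ _ (SetLike.coe_mem _) _ ha, hb, rfl⟩
  | zero => rw [mul_zero]; exact Submodule.zero_mem _
  | add y w _ _ hy hw => rw [mul_add]; exact Submodule.add_mem _ hy hw
  | smul c y _ hy => rw [mul_smul_comm]; exact Submodule.smul_mem _ _ hy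

lemma span_homog_mul_right
    (hmul : ∀ g h : G, ∀ x ∈ ℬ g, ∀ y ∈ ℬ h, x * y ∈ ℬ (g * h))
    {z : R} {gz : G} (hz : z ∈ ℬ gz) (r x : R)
    (hx : x ∈ Submodule.span F {t : R | ∃ (a b : R) (ga gb : G),
      a ∈ ℬ ga ∧ b ∈ ℬ gb ∧ t = a * z * b}) :
    x * r ∈ Submodule.span F {t : R | ∃ (a b : R) (ga gb : G),
      a ∈ ℬ ga ∧ b ∈ ℬ gb ∧ t = a * z * b} := by
  classical
  induction hx using Submodule.span_induction with
  | mem t ht =>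
    obtain ⟨a, b, ga, gb, ha, hb, rfl⟩ := ht
    have : (a * z * b) * r = ∑ k ∈ (DirectSum.decompose ℬ r).support,
        a * z * (b * (DirectSum.decompose ℬ r k : R)) := by
      conv_lhs => rw [← DirectSum.sum_support_decompose ℬ r]
      rw [Finset.mul_sum]
      exact Finset.sum_congr rfl fun k _ => by noncomm_ring
    rw [this]
    exact Submodule.sum_mem _ fun k _ => Submodule.subset_span
      ⟨a, b * (DirectSum.decompose ℬ r k : R), ga, gb * k,
        ha, hmul _ _ _ hb _ (SetLike.coe_mem _), by noncomm_ring⟩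
  | zero => rw [zero_mul]; exact Submodule.zero_mem _
  | add y w _ _ hy hw => rw [add_mul]; exact Submodule.add_mem _ hy hw
  | smul c y _ hy => rw [smul_mul_assoc]; exact Submodule.smul_mem _ _ hy

/-- Graded simplicity: the two-sided ideal generated by a nonzero homogeneous element
contains `1`. -/
lemma one_mem_span_homog
    (hmul : ∀ g h : G, ∀ x ∈ ℬ g, ∀ y ∈ ℬ h, x * y ∈ ℬ (g * h))
    (hone : (1 : R) ∈ ℬ (1 : G))
    (hgr : ∀ J : TwoSidedIdeal R,
      (∀ x ∈ J, ∀ g : G, ((DirectSum.decompose ℬ x) g : R) ∈ J) → J = ⊥ ∨ J = ⊤)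
    {z : R} {gz : G} (hz : z ∈ ℬ gz) (hz0 : z ≠ 0) :
    (1 : R) ∈ Submodule.span F {t : R | ∃ (a b : R) (ga gb : G),
      a ∈ ℬ ga ∧ b ∈ ℬ gb ∧ t = a * z * b} := by
  classical
  set S : Set R := {t : R | ∃ (a b : R) (ga gb : G),
      a ∈ ℬ ga ∧ b ∈ ℬ gb ∧ t = a * z * b} with hS
  let K : TwoSidedIdeal R := TwoSidedIdeal.mk' (Submodule.span F S)
    (Submodule.zero_mem _) (fun ha hb => Submodule.add_mem _ ha hb)
    (fun ha => Submodule.neg_mem _ ha)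
    (fun {x y} hy => span_homog_mul_left ℬ hmul hz x y hy)
    (fun {x y} hx => span_homog_mul_right ℬ hmul hz y x hx)
  have hmemK : ∀ x : R, x ∈ K ↔ x ∈ Submodule.span F S :=
    fun x => TwoSidedIdeal.mem_mk' _ _ _ _ _ _ x
  have hcomp : ∀ x ∈ K, ∀ g : G, ((DirectSum.decompose ℬ x) g : R) ∈ K := by
    intro x hx g
    rw [hmemK] at hx ⊢
    induction hx using Submodule.span_induction with
    | mem t ht =>
      obtain ⟨a, b, ga, gb, ha, hb, rfl⟩ := ht
      have hhom : a * z * b ∈ ℬ (ga * gz * gb) :=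
        hmul _ _ _ (hmul _ _ _ ha _ hz) _ hb
      by_cases hgg : ga * gz * gb = g
      · subst hgg
        rw [DirectSum.decompose_of_mem_same ℬ hhom]
        exact Submodule.subset_span ⟨a, b, ga, gb, ha, hb, rfl⟩
      · rw [DirectSum.decompose_of_mem_ne ℬ hhom hgg]
        exact Submodule.zero_mem _
    | zero => rw [DirectSum.decompose_zero]; simpa using Submodule.zero_mem _
    | add y w _ _ hy hw =>
      rw [DirectSum.decompose_add]
      simpa using Submodule.add_mem _ hy hw
    | smul c y _ hy =>
      rw [DirectSum.decompose_smul]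
      simpa [DirectSum.smul_apply] using Submodule.smul_mem _ c hy
  rcases hgr K hcomp with hbot | htop
  · exfalso
    have : z ∈ K := by
      rw [hmemK]
      exact Submodule.subset_span ⟨1, 1, 1, 1, hone, hone, by noncomm_ring⟩
    rw [hbot, TwoSidedIdeal.mem_bot] at this
    exact hz0 this
  · have : (1 : R) ∈ K := by rw [htop]; exact TwoSidedIdeal.mem_top R
    rwa [hmemK] at this


/-- kill `f 1` when `f` kills all generators of a span containing 1. -/
lemma map_one_eq_zero_of_span {S : Set R} (h1 : (1 : R) ∈ Submodule.span F S)
    (f : R →ₗ[F] R) (hf : ∀ t ∈ S, f t = 0) : f (1 : R) = 0 := by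
  have : Submodule.span F S ≤ LinearMap.ker f := Submodule.span_le.mpr hf
  exact this h1

lemma exists_nonzero_component {x : R} (hx : x ≠ 0) :
    ∃ g : G, (DirectSum.decompose ℬ x g : R) ≠ 0 := by
  classical
  by_contra h
  push_neg at h
  apply hx
  rw [← DirectSum.sum_support_decompose ℬ x]
  exact Finset.sum_eq_zero fun g _ => h g

lemma exists_graded_idempotent [FiniteDimensional F R]
    (hmul : ∀ g h : G, ∀ x ∈ ℬ g, ∀ y ∈ ℬ h, x * y ∈ ℬ (g * h))
    (hone : (1 : R) ∈ ℬ (1 : G))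
    (hR2 : ∃ x y : R, x * y ≠ 0)
    (hgr : ∀ J : TwoSidedIdeal R,
      (∀ x ∈ J, ∀ g : G, ((DirectSum.decompose ℬ x) g : R) ∈ J) → J = ⊥ ∨ J = ⊤) :
    ∃ e : R, e ∈ ℬ (1 : G) ∧ e * e = e ∧ e ≠ 0 ∧
      (∀ N : Submodule F R, (∀ (r : R), ∀ x ∈ N, r * x ∈ N) →
        (∀ x ∈ N, ∀ g : G, ((DirectSum.decompose ℬ x) g : R) ∈ N) →
        N ≤ LinearMap.range (LinearMap.mulRight F e) → N ≠ ⊥ →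
        N = LinearMap.range (LinearMap.mulRight F e)) := by
  classical
  obtain ⟨x₀, y₀, hxy₀⟩ := hR2
  have : Nontrivial R := nontrivial_of_ne (x₀ * y₀) 0 hxy₀
  -- the family of nonzero graded left ideals
  set 𝒮 : Set (Submodule F R) := {N | (∀ (r : R), ∀ x ∈ N, r * x ∈ N) ∧
    (∀ x ∈ N, ∀ g : G, ((DirectSum.decompose ℬ x) g : R) ∈ N) ∧ N ≠ ⊥} with h𝒮
  have htop : (⊤ : Submodule F R) ∈ 𝒮 :=
    ⟨fun _ _ _ => trivial, fun _ _ _ => trivial, fun h => by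
      exact absurd (h ▸ Submodule.mem_top (x := (1:R))) (by
        rw [Submodule.mem_bot]; exact one_ne_zero)⟩
  set ns : Set ℕ := {n | ∃ N ∈ 𝒮, Module.finrank F N = n} with hns
  have hnsne : ns.Nonempty := ⟨_, ⊤, htop, rfl⟩
  obtain ⟨I, hI𝒮, hIrank⟩ : ∃ N ∈ 𝒮, Module.finrank F N = sInf ns := Nat.sInf_mem hnsne
  obtain ⟨hIleft, hIgr, hIne⟩ := hI𝒮
  have hmin : ∀ N ∈ 𝒮, sInf ns ≤ Module.finrank F N := fun N hN => Nat.sInf_le ⟨N, hN, rfl⟩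
  -- I has two elements with nonzero product
  have hI2 : ∃ x ∈ I, ∃ y ∈ I, x * y ≠ 0 := by
    by_contra h
    push_neg at h
    obtain ⟨x, hxI, hx0⟩ := (Submodule.ne_bot_iff I).mp hIne
    obtain ⟨g, hg⟩ := exists_nonzero_component ℬ hx0
    set z : R := (DirectSum.decompose ℬ x g : R) with hzdef
    have hzI : z ∈ I := hIgr x hxI g
    have h1 : (1 : R) ∈ Submodule.span F {t : R | ∃ (a b : R) (ga gb : G),
        a ∈ ℬ ga ∧ b ∈ ℬ gb ∧ t = a * z * b} :=
      one_mem_span_homog ℬ hmul hone hgr (SetLike.coe_mem _) hg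
    have := map_one_eq_zero_of_span h1 (LinearMap.mulLeft F x) ?_
    · rw [LinearMap.mulLeft_apply, mul_one] at this
      exact hx0 this
    · rintro t ⟨a, b, ga, gb, ha, hb, rfl⟩
      rw [LinearMap.mulLeft_apply]
      have haz : a * z ∈ I := hIleft a z hzI
      have : x * (a * z) = 0 := h x hxI _ haz
      calc x * (a * z * b) = (x * (a * z)) * b := by noncomm_ring
        _ = 0 := by rw [this, zero_mul]
  obtain ⟨x, hxI, y, hyI, hxy⟩ := hI2
  have h2 : ∃ g : G, x * (DirectSum.decompose ℬ y g : R) ≠ 0 := by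
    by_contra h
    push_neg at h
    apply hxy
    conv_lhs => rw [← DirectSum.sum_support_decompose ℬ y]
    rw [Finset.mul_sum]
    exact Finset.sum_eq_zero fun g _ => h g
  obtain ⟨g, hxd⟩ := h2
  set d : R := (DirectSum.decompose ℬ y g : R) with hddef
  have hdI : d ∈ I := hIgr y hyI g
  have hdB : d ∈ ℬ g := SetLike.coe_mem _
  have hd0 : d ≠ 0 := fun h => hxd (by rw [h, mul_zero])
  -- I * d = I
  set Id : Submodule F R := Submodule.map (LinearMap.mulRight F d) I with hIddef
  have hId𝒮 : Id ∈ 𝒮 := by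
    refine ⟨?_, ?_, ?_⟩
    · rintro r t ⟨a, haI, rfl⟩
      exact ⟨r * a, hIleft r a haI, by simp [LinearMap.mulRight_apply, mul_assoc]⟩
    · rintro t ⟨a, haI, rfl⟩ k
      have key := decompose_linear_comm ℬ (LinearMap.mulRight F d) (Equiv.mulRight g)
        (fun k' x' hx' => by simpa using hmul k' g x' hx' d hdB) a (k * g⁻¹)
      have hkg : (Equiv.mulRight g) (k * g⁻¹) = k := by simp
      rw [hkg] at key
      rw [key]
      exact ⟨_, hIgr a haI (k * g⁻¹), rfl⟩
    · rw [Submodule.ne_bot_iff]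
      exact ⟨x * d, ⟨x, hxI, rfl⟩, hxd⟩
  have hIdle : Id ≤ I := by
    rintro t ⟨a, haI, rfl⟩
    exact hIleft a d hdI
  have hIdeq : Id = I := Submodule.eq_of_le_of_finrank_le hIdle
    (le_trans (le_of_eq hIrank) (hmin Id hId𝒮))
  -- the multiplication-by-d map on I is bijective
  have hmapsto : ∀ t ∈ I, LinearMap.mulRight F d t ∈ I := by
    intro t ht
    exact hIleft t d hdI
  set φ : ↥I →ₗ[F] ↥I := (LinearMap.mulRight F d).restrict hmapsto with hφdef
  have hφsurj : Function.Surjective φ := by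
    rintro ⟨w, hwI⟩
    rw [← hIdeq] at hwI
    obtain ⟨a, haI, had⟩ := hwI
    exact ⟨⟨a, haI⟩, Subtype.ext had⟩
  have hφinj : Function.Injective φ := LinearMap.injective_iff_surjective.mpr hφsurj
  -- get the idempotent
  have hdId : d ∈ Id := hIdeq.symm ▸ hdI
  obtain ⟨e, heI, hed⟩ := hdId
  rw [LinearMap.mulRight_apply] at hed
  have hee : e * e = e := by
    have : φ ⟨e * e, hIleft e e heI⟩ = φ ⟨e, heI⟩ := by
      apply Subtype.ext
      simp only [hφdef, LinearMap.restrict_apply, LinearMap.mulRight_apply]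
      rw [mul_assoc, hed]
      exact hed
    exact congrArg Subtype.val (hφinj this)
  have hne : e ≠ 0 := by
    intro h
    rw [h, zero_mul] at hed
    exact hd0 hed.symm
  -- e is homogeneous of degree 1
  have heB : e ∈ ℬ (1 : G) := by
    have key := decompose_linear_comm ℬ (LinearMap.mulRight F d) (Equiv.mulRight g)
      (fun k' x' hx' => by simpa using hmul k' g x' hx' d hdB) e (1 : G)
    have h1g : (Equiv.mulRight g) (1 : G) = g := by simp
    rw [h1g] at key
    simp only [LinearMap.mulRight_apply] at key
    rw [hed, DirectSum.decompose_of_mem_same ℬ hdB] at key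
    have : φ ⟨(DirectSum.decompose ℬ e 1 : R), hIgr e heI 1⟩ = φ ⟨e, heI⟩ := by
      apply Subtype.ext
      simp only [hφdef, LinearMap.restrict_apply, LinearMap.mulRight_apply]
      rw [← key, hed]
    have := congrArg Subtype.val (hφinj this)
    simp only at this
    rw [← this]
    exact SetLike.coe_mem _
  refine ⟨e, heB, hee, hne, ?_⟩
  -- minimality property of Re
  have hReleft : ∀ (r : R), ∀ t ∈ LinearMap.range (LinearMap.mulRight F e), r * t ∈
      LinearMap.range (LinearMap.mulRight F e) := by
    rintro r t ⟨a, rfl⟩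
    exact ⟨r * a, by simp [LinearMap.mulRight_apply, mul_assoc]⟩
  have hRele : LinearMap.range (LinearMap.mulRight F e) ≤ I := by
    rintro t ⟨a, rfl⟩
    exact hIleft a e heI
  have hRegr : ∀ t ∈ LinearMap.range (LinearMap.mulRight F e), ∀ k : G,
      ((DirectSum.decompose ℬ t) k : R) ∈ LinearMap.range (LinearMap.mulRight F e) := by
    rintro t ⟨a, rfl⟩ k
    have key := decompose_linear_comm ℬ (LinearMap.mulRight F e) (Equiv.mulRight (1 : G))
      (fun k' x' hx' => by simpa using hmul k' 1 x' hx' e heB) a k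
    have hk1 : (Equiv.mulRight (1 : G)) k = k := by simp
    rw [hk1] at key
    rw [key]
    exact ⟨_, rfl⟩
  have hRene : LinearMap.range (LinearMap.mulRight F e) ≠ ⊥ := by
    rw [Submodule.ne_bot_iff]
    exact ⟨e, ⟨1, by simp [LinearMap.mulRight_apply]⟩, hne⟩
  have hRe𝒮 : LinearMap.range (LinearMap.mulRight F e) ∈ 𝒮 := ⟨hReleft, hRegr, hRene⟩
  have hRerank : Module.finrank F (LinearMap.range (LinearMap.mulRight F e)) = sInf ns :=
    le_antisymm (hIrank ▸ Submodule.finrank_mono hRele) (hmin _ hRe𝒮)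
  intro N hNleft hNgr hNle hNne
  have hN𝒮 : N ∈ 𝒮 := ⟨hNleft, hNgr, hNne⟩
  exact Submodule.eq_of_le_of_finrank_le hNle (hRerank ▸ hmin N hN𝒮)


/-- The corner subspace `eRe`. -/
noncomputable def DsubM (F : Type*) [Field F] {R : Type*} [Ring R] [Algebra F R] (e : R) :
    Submodule F R :=
  LinearMap.range (LinearMap.mulLeft F e ∘ₗ LinearMap.mulRight F e)

lemma mem_DsubM {F : Type*} [Field F] {R : Type*} [Ring R] [Algebra F R] {e x : R} :
    x ∈ DsubM F e ↔ ∃ r : R, e * (r * e) = x := by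
  simp [DsubM, LinearMap.mem_range, LinearMap.mulLeft_apply, LinearMap.mulRight_apply]

variable {e : R}

lemma DsubM.mul_mem {x y : R} (hx : x ∈ DsubM F e) (hy : y ∈ DsubM F e) :
    x * y ∈ DsubM F e := by
  rw [mem_DsubM] at hx hy ⊢
  obtain ⟨r, rfl⟩ := hx; obtain ⟨t, rfl⟩ := hy
  exact ⟨(r * e) * (e * t), by noncomm_ring⟩

lemma DsubM.e_mul (hee : e * e = e) {x : R} (hx : x ∈ DsubM F e) : e * x = x := by
  rw [mem_DsubM] at hx; obtain ⟨r, rfl⟩ := hx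
  calc e * (e * (r * e)) = (e * e) * (r * e) := by noncomm_ring
    _ = e * (r * e) := by rw [hee]

lemma DsubM.mul_e (hee : e * e = e) {x : R} (hx : x ∈ DsubM F e) : x * e = x := by
  rw [mem_DsubM] at hx; obtain ⟨r, rfl⟩ := hx
  calc (e * (r * e)) * e = e * (r * (e * e)) := by noncomm_ring
    _ = e * (r * e) := by rw [hee]

lemma DsubM.e_mem (hee : e * e = e) : e ∈ DsubM F e :=
  mem_DsubM.mpr ⟨e, by rw [hee, hee]⟩

lemma DsubM.decompose_mem (hmul : ∀ g h : G, ∀ x ∈ ℬ g, ∀ y ∈ ℬ h, x * y ∈ ℬ (g * h))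
    (heB : e ∈ ℬ (1 : G)) {x : R} (hx : x ∈ DsubM F e) (g : G) :
    (DirectSum.decompose ℬ x g : R) ∈ DsubM F e := by
  rw [mem_DsubM] at hx; obtain ⟨r, rfl⟩ := hx
  have key := decompose_linear_comm ℬ (LinearMap.mulLeft F e ∘ₗ LinearMap.mulRight F e)
    (Equiv.refl G) (fun k x' hx' => by
      have h1 : x' * e ∈ ℬ (k * 1) := hmul k 1 x' hx' e heB
      rw [mul_one] at h1
      have h2 : e * (x' * e) ∈ ℬ (1 * k) := hmul 1 k e heB _ h1
      rw [one_mul] at h2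
      simpa using h2) r g
  simp only [Equiv.refl_apply, LinearMap.comp_apply, LinearMap.mulLeft_apply,
    LinearMap.mulRight_apply] at key
  rw [key]
  exact ⟨((DirectSum.decompose ℬ) r) g, rfl⟩

/-- Left multiplication on the corner, as a linear map into endomorphisms. -/
noncomputable def lmulD (F : Type*) [Field F] {R : Type*} [Ring R] [Algebra F R] (e : R) :
    R →ₗ[F] Module.End F ↥(DsubM F e) where
  toFun d :=
    { toFun := fun x => ⟨e * (d * ↑x) * e, mem_DsubM.mpr ⟨d * ↑x, by noncomm_ring⟩⟩
      map_add' := fun x y => by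
        apply Subtype.ext
        simp only [Submodule.coe_add]
        noncomm_ring
      map_smul' := fun c x => by
        apply Subtype.ext
        simp only [SetLike.val_smul, RingHom.id_apply]
        simp only [mul_smul_comm, smul_mul_assoc] }
  map_add' d₁ d₂ := by
    apply LinearMap.ext; intro x
    apply Subtype.ext
    simp only [LinearMap.coe_mk, AddHom.coe_mk, LinearMap.add_apply, Submodule.coe_add]
    noncomm_ring
  map_smul' c d := by
    apply LinearMap.ext; intro x
    apply Subtype.ext
    simp only [LinearMap.coe_mk, AddHom.coe_mk, RingHom.id_apply, LinearMap.smul_apply,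
      SetLike.val_smul]
    simp only [mul_smul_comm, smul_mul_assoc]

lemma lmulD_apply (hee : e * e = e) {d : R} (hd : d ∈ DsubM F e) (x : ↥(DsubM F e)) :
    (↑(lmulD F e d x) : R) = d * ↑x := by
  have hdx : d * ↑x ∈ DsubM F e := DsubM.mul_mem hd x.2
  show e * (d * ↑x) * e = d * ↑x
  rw [DsubM.e_mul hee hdx]
  exact DsubM.mul_e hee hdx

/-- trace form functional on the corner -/
noncomputable def tauD (F : Type*) [Field F] {R : Type*} [Ring R] [Algebra F R] (e : R) :
    R →ₗ[F] F :=
  (LinearMap.trace F ↥(DsubM F e)) ∘ₗ lmulD F e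


section Main

variable [FiniteDimensional F R]
  (hmul : ∀ g h : G, ∀ x ∈ ℬ g, ∀ y ∈ ℬ h, x * y ∈ ℬ (g * h))
  (hone : (1 : R) ∈ ℬ (1 : G))
  (heB : e ∈ ℬ (1 : G)) (hee : e * e = e) (hne : e ≠ 0)
  (hImin : ∀ N : Submodule F R, (∀ (r : R), ∀ x ∈ N, r * x ∈ N) →
      (∀ x ∈ N, ∀ g : G, ((DirectSum.decompose ℬ x) g : R) ∈ N) →
      N ≤ LinearMap.range (LinearMap.mulRight F e) → N ≠ ⊥ →
      N = LinearMap.range (LinearMap.mulRight F e))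

include hmul heB hee hImin in
lemma corner_linv {g : G} {d : R} (hd : d ∈ DsubM F e) (hdB : d ∈ ℬ g) (hd0 : d ≠ 0) :
    ∃ d', (d' ∈ DsubM F e ∧ d' ∈ ℬ g⁻¹) ∧ d' * d = e := by
  classical
  set Rd : Submodule F R := LinearMap.range (LinearMap.mulRight F d) with hRd
  have hRdleft : ∀ (r : R), ∀ x ∈ Rd, r * x ∈ Rd := by
    rintro r x ⟨a, rfl⟩
    exact ⟨r * a, by simp [LinearMap.mulRight_apply, mul_assoc]⟩
  have hRdgr : ∀ x ∈ Rd, ∀ k : G, ((DirectSum.decompose ℬ x) k : R) ∈ Rd := by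
    rintro x ⟨a, rfl⟩ k
    have key := decompose_linear_comm ℬ (LinearMap.mulRight F d) (Equiv.mulRight g)
      (fun k' x' hx' => by simpa using hmul k' g x' hx' d hdB) a (k * g⁻¹)
    have hkg : (Equiv.mulRight g) (k * g⁻¹) = k := by simp
    rw [hkg] at key
    rw [key]
    exact ⟨_, rfl⟩
  have hRdle : Rd ≤ LinearMap.range (LinearMap.mulRight F e) := by
    rintro x ⟨a, rfl⟩
    refine ⟨a * d, ?_⟩
    simp only [LinearMap.mulRight_apply]
    rw [mul_assoc, DsubM.mul_e hee hd]
  have hRdne : Rd ≠ ⊥ := by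
    rw [Submodule.ne_bot_iff]
    exact ⟨d, ⟨1, by simp [LinearMap.mulRight_apply]⟩, hd0⟩
  have heq : Rd = LinearMap.range (LinearMap.mulRight F e) :=
    hImin Rd hRdleft hRdgr hRdle hRdne
  have heRd : e ∈ Rd := by
    rw [heq]
    exact ⟨1, by simp [LinearMap.mulRight_apply]⟩
  obtain ⟨r, hrd⟩ := heRd
  rw [LinearMap.mulRight_apply] at hrd
  -- take the homogeneous component of degree g⁻¹
  have key := decompose_linear_comm ℬ (LinearMap.mulRight F d) (Equiv.mulRight g)
    (fun k' x' hx' => by simpa using hmul k' g x' hx' d hdB) r g⁻¹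
  have h1 : (Equiv.mulRight g) g⁻¹ = 1 := by simp
  simp only [LinearMap.mulRight_apply] at key
  rw [h1, hrd, DirectSum.decompose_of_mem_same ℬ heB] at key
  set r₁ : R := (DirectSum.decompose ℬ r g⁻¹ : R) with hr₁
  have hr₁B : r₁ ∈ ℬ g⁻¹ := SetLike.coe_mem _
  refine ⟨e * (r₁ * e), ⟨mem_DsubM.mpr ⟨r₁, rfl⟩, ?_⟩, ?_⟩
  · have h2 : r₁ * e ∈ ℬ (g⁻¹ * 1) := hmul _ _ _ hr₁B _ heB
    rw [mul_one] at h2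
    have h3 : e * (r₁ * e) ∈ ℬ (1 * g⁻¹) := hmul _ _ _ heB _ h2
    rwa [one_mul] at h3
  · have hed : e * d = d := DsubM.e_mul hee hd
    calc (e * (r₁ * e)) * d = e * (r₁ * (e * d)) := by noncomm_ring
      _ = e * (r₁ * d) := by rw [hed]
      _ = e * e := by rw [← key]
      _ = e := hee

include hmul heB hee hImin in
lemma corner_inv {g : G} {d : R} (hd : d ∈ DsubM F e) (hdB : d ∈ ℬ g) (hd0 : d ≠ 0) :
    ∃ d', (d' ∈ DsubM F e ∧ d' ∈ ℬ g⁻¹) ∧ d' * d = e ∧ d * d' = e := by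
  have hne' : e ≠ 0 := by
    intro h
    obtain ⟨d', hd', hd'e⟩ := corner_linv ℬ hmul heB hee hImin hd hdB hd0
    -- e = 0 makes everything in the corner zero
    have : d = 0 := by
      have := DsubM.e_mul hee hd
      rw [h, zero_mul] at this
      exact this.symm
    exact hd0 this
  obtain ⟨d', ⟨hd'D, hd'B⟩, hd'd⟩ := corner_linv ℬ hmul heB hee hImin hd hdB hd0
  have hd'0 : d' ≠ 0 := by
    intro h
    rw [h, zero_mul] at hd'd
    exact hne' hd'd.symm
  obtain ⟨d'', ⟨hd''D, hd''B⟩, hd''d'⟩ := corner_linv ℬ hmul heB hee hImin hd'D hd'B hd'0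
  have hdd'' : d'' = d := by
    calc d'' = d'' * e := (DsubM.mul_e hee hd''D).symm
      _ = d'' * (d' * d) := by rw [hd'd]
      _ = (d'' * d') * d := by noncomm_ring
      _ = e * d := by rw [hd''d']
      _ = d := DsubM.e_mul hee hd
  exact ⟨d', ⟨hd'D, hd'B⟩, hd'd, by rw [← hdd'']; exact hd''d'⟩

include hmul heB hee hne hImin in
lemma corner_scalar [IsAlgClosed F] {d : R} (hd : d ∈ DsubM F e) (hdB : d ∈ ℬ (1 : G)) :
    ∃ c : F, d = c • e := by
  have hnontriv : Nontrivial ↥(DsubM F e) :=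
    ⟨⟨⟨e, DsubM.e_mem hee⟩, 0, fun h => hne (by simpa using congrArg Subtype.val h)⟩⟩
  obtain ⟨μ, hμ⟩ := Module.End.exists_eigenvalue (lmulD F e d)
  obtain ⟨v, hv⟩ := hμ.exists_hasEigenvector
  have hveq : d * (↑v : R) = μ • (↑v : R) := by
    have := congrArg Subtype.val hv.apply_eq_smul
    rwa [lmulD_apply hee hd] at this
  set w : R := d - μ • e with hw
  have hwD : w ∈ DsubM F e := Submodule.sub_mem _ hd (Submodule.smul_mem _ _ (DsubM.e_mem hee))
  have hwB : w ∈ ℬ (1 : G) := Submodule.sub_mem _ hdB (Submodule.smul_mem _ _ heB)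
  by_cases hw0 : w = 0
  · exact ⟨μ, by rwa [sub_eq_zero] at hw0⟩
  · exfalso
    obtain ⟨d', ⟨hd'D, hd'B⟩, hd'w⟩ := corner_linv ℬ hmul heB hee hImin hwD hwB hw0
    have hwv : w * (↑v : R) = 0 := by
      rw [hw, sub_mul, hveq, smul_mul_assoc, DsubM.e_mul hee v.2, sub_self]
    have : (↑v : R) = 0 := by
      calc (↑v : R) = e * ↑v := (DsubM.e_mul hee v.2).symm
        _ = (d' * w) * ↑v := by rw [hd'w]
        _ = d' * (w * ↑v) := by noncomm_ring
        _ = 0 := by rw [hwv, mul_zero]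
    exact hv.right (by exact_mod_cast Subtype.ext this)

end Main

theorem graded_backward [FiniteDimensional F R] [IsAlgClosed F]
    (hmul : ∀ g h : G, ∀ x ∈ ℬ g, ∀ y ∈ ℬ h, x * y ∈ ℬ (g * h))
    (hone : (1 : R) ∈ ℬ (1 : G))
    (hchar : ringChar F = 0 ∨
      ∀ H : Subgroup G, Finite H → Nat.Coprime (ringChar F) (Nat.card H))
    (hR2 : ∃ x y : R, x * y ≠ 0)
    (hgr : ∀ J : TwoSidedIdeal R,
      (∀ x ∈ J, ∀ g : G, ((DirectSum.decompose ℬ x) g : R) ∈ J) → J = ⊥ ∨ J = ⊤)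
    (hZ : Subalgebra.center F R = ⊥)
    (J : TwoSidedIdeal R) : J = ⊥ ∨ J = ⊤ := by
  classical
  obtain ⟨x₀, y₀, hxy₀⟩ := hR2
  have hRnt : Nontrivial R := nontrivial_of_ne (x₀ * y₀) 0 hxy₀
  obtain ⟨e, heB, hee, hne, hImin⟩ :=
    exists_graded_idempotent ℬ hmul hone ⟨x₀, y₀, hxy₀⟩ hgr
  set D : Submodule F R := DsubM F e with hD
  -- the support of the corner
  set Hp : G → Prop := fun g => ∃ x : R, x ∈ D ∧ x ∈ ℬ g ∧ x ≠ 0 with hHp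
  have hHone : Hp 1 := ⟨e, DsubM.e_mem hee, heB, hne⟩
  have hHmul : ∀ {a b : G}, Hp a → Hp b → Hp (a * b) := by
    rintro a b ⟨x, hxD, hxB, hx0⟩ ⟨y, hyD, hyB, hy0⟩
    obtain ⟨x', ⟨hx'D, hx'B⟩, hx'x, hxx'⟩ := corner_inv ℬ hmul heB hee hImin hxD hxB hx0
    obtain ⟨y', ⟨hy'D, hy'B⟩, hy'y, hyy'⟩ := corner_inv ℬ hmul heB hee hImin hyD hyB hy0
    refine ⟨x * y, DsubM.mul_mem hxD hyD, hmul _ _ _ hxB _ hyB, ?_⟩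
    intro h0
    have hy : y = 0 := by
      calc y = e * y := (DsubM.e_mul hee hyD).symm
        _ = (x' * x) * y := by rw [hx'x]
        _ = x' * (x * y) := by noncomm_ring
        _ = 0 := by rw [h0, mul_zero]
    exact hy0 hy
  have hHinv : ∀ {a : G}, Hp a → Hp a⁻¹ := by
    rintro a ⟨x, hxD, hxB, hx0⟩
    obtain ⟨x', ⟨hx'D, hx'B⟩, hx'x, hxx'⟩ := corner_inv ℬ hmul heB hee hImin hxD hxB hx0
    refine ⟨x', hx'D, hx'B, ?_⟩
    intro h0
    rw [h0, zero_mul] at hx'x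
    exact hne hx'x.symm
  set Hsub : Subgroup G :=
    { carrier := {g | Hp g}
      one_mem' := hHone
      mul_mem' := fun ha hb => hHmul ha hb
      inv_mem' := fun ha => hHinv ha } with hHsub
  have hHsubmem : ∀ g : G, g ∈ Hsub ↔ Hp g := fun g => Iff.rfl
  -- homogeneous units u g and their inverses s g
  have huex : ∀ g : G, ∃ x : R, (Hp g → (x ∈ D ∧ x ∈ ℬ g ∧ x ≠ 0)) ∧ (g = 1 → x = e) := by
    intro g
    by_cases hg1 : g = 1
    · exact ⟨e, fun _ => ⟨DsubM.e_mem hee, hg1 ▸ heB, hne⟩, fun _ => rfl⟩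
    · by_cases hg : Hp g
      · obtain ⟨x, hx⟩ := hg
        exact ⟨x, fun _ => hx, fun h => absurd h hg1⟩
      · exact ⟨0, fun h => absurd h hg, fun h => absurd h hg1⟩
  choose u hu hu1 using huex
  have hue : u 1 = e := hu1 1 rfl
  have hsex : ∀ g : G, ∃ x : R, Hp g →
      ((x ∈ D ∧ x ∈ ℬ g⁻¹) ∧ x * u g = e ∧ u g * x = e) := by
    intro g
    by_cases hg : Hp g
    · obtain ⟨huD, huB, hu0⟩ := hu g hg
      obtain ⟨x', hx'⟩ := corner_inv ℬ hmul heB hee hImin huD huB hu0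
      exact ⟨x', fun _ => hx'⟩
    · exact ⟨0, fun h => absurd h hg⟩
  choose s hs using hsex
  -- one-dimensionality of the components of the corner
  have hK3 : ∀ k : G, Hp k → ∀ x : R, x ∈ D → x ∈ ℬ k → ∃ c : F, x = c • u k := by
    intro k hk x hxD hxB
    by_cases hx0 : x = 0
    · exact ⟨0, by rw [hx0, zero_smul]⟩
    obtain ⟨⟨hsD, hsB⟩, hsu, hus⟩ := hs k hk
    obtain ⟨huD, huB, hu0⟩ := hu k hk
    have hxsD : x * s k ∈ D := DsubM.mul_mem hxD hsD
    have hxsB : x * s k ∈ ℬ (1 : G) := by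
      have := hmul k k⁻¹ x hxB (s k) hsB
      rwa [mul_inv_cancel] at this
    obtain ⟨c, hc⟩ := corner_scalar ℬ hmul heB hee hne hImin hxsD hxsB
    refine ⟨c, ?_⟩
    calc x = x * e := (DsubM.mul_e hee hxD).symm
      _ = x * (s k * u k) := by rw [hsu]
      _ = (x * s k) * u k := by noncomm_ring
      _ = (c • e) * u k := by rw [hc]
      _ = c • (e * u k) := by rw [smul_mul_assoc]
      _ = c • u k := by rw [DsubM.e_mul hee huD]
  -- linear independence of the units, finiteness of the support
  have hli : LinearIndependent F (fun h : ↥Hsub => u ↑h) := by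
    rw [linearIndependent_iff']
    intro t c hsum i hit
    have happ := congrArg (fun w => (DirectSum.decompose ℬ w (↑i : G) : R)) hsum
    simp only at happ
    rw [DirectSum.decompose_zero] at happ
    have hz : (0 : ⨁ g, ℬ g) (↑i : G) = 0 := rfl
    rw [show ((0 : ⨁ g, ℬ g) (↑i : G) : R) = 0 from rfl] at happ
    have hsum2 : (DirectSum.decompose ℬ (∑ j ∈ t, c j • u ↑j) (↑i : G) : R)
        = ∑ j ∈ t, c j • (DirectSum.decompose ℬ (u ↑j) (↑i : G) : R) := by
      rw [DirectSum.decompose_sum]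
      simp only [DirectSum.decompose_smul]
      rw [DFinsupp.finset_sum_apply]
      push_cast
      rfl
    rw [hsum2] at happ
    have hterm : ∀ j ∈ t, c j • (DirectSum.decompose ℬ (u ↑j) (↑i : G) : R)
        = if j = i then c j • u ↑j else 0 := by
      intro j _
      obtain ⟨hjD, hjB, hj0⟩ := hu ↑j j.2
      by_cases hji : j = i
      · subst hji
        rw [if_pos rfl, DirectSum.decompose_of_mem_same ℬ hjB]
      · rw [if_neg hji, DirectSum.decompose_of_mem_ne ℬ hjB
          (fun hc => hji (Subtype.ext hc)), smul_zero]
    rw [Finset.sum_congr rfl hterm, Finset.sum_ite_eq' t i (fun j => c j • u ↑j),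
      if_pos hit] at happ
    obtain ⟨_, _, hi0⟩ := hu ↑i i.2
    rcases smul_eq_zero.mp happ with h | h
    · exact h
    · exact absurd h hi0
  have hHfin : Finite ↥Hsub := hli.finite
  have hHfintype : Fintype ↥Hsub := Fintype.ofFinite _
  set n : ℕ := Nat.card ↥Hsub with hn
  have hnpos : 0 < n := Nat.card_pos
  have hn0 : (n : F) ≠ 0 := by
    rcases hchar with h0 | hcop
    · have : CharP F 0 := h0 ▸ ringChar.charP F
      have : CharZero F := CharP.charP_to_charZero F
      exact Nat.cast_ne_zero.mpr hnpos.ne'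
    · intro hcast
      have hdvd : ringChar F ∣ n := (CharP.cast_eq_zero_iff F (ringChar F) n).mp hcast
      have h1 : ringChar F = 1 := (hcop Hsub hHfin).eq_one_of_dvd hdvd
      exact CharP.char_ne_one F (ringChar F) h1
  -- basis of the corner indexed by the support subgroup
  set v : ↥Hsub → ↥D := fun h => ⟨u ↑h, (hu ↑h h.2).1⟩ with hv
  have hvli : LinearIndependent F v := by
    apply LinearIndependent.of_comp D.subtype
    exact hli
  have hspan : ⊤ ≤ Submodule.span F (Set.range v) := by
    rintro ⟨x, hxD⟩ _
    have hxsum : (⟨x, hxD⟩ : ↥D) = ∑ k ∈ (DirectSum.decompose ℬ x).support,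
        (⟨(DirectSum.decompose ℬ x k : R), DsubM.decompose_mem ℬ hmul heB hxD k⟩ : ↥D) := by
      apply Subtype.ext
      push_cast
      exact (DirectSum.sum_support_decompose ℬ x).symm
    rw [hxsum]
    apply Submodule.sum_mem
    intro k hk
    by_cases hkH : Hp k
    · obtain ⟨c, hc⟩ := hK3 k hkH _ (DsubM.decompose_mem ℬ hmul heB hxD k) (SetLike.coe_mem _)
      have heq : (⟨(DirectSum.decompose ℬ x k : R),
          DsubM.decompose_mem ℬ hmul heB hxD k⟩ : ↥D) = c • v ⟨k, hkH⟩ := by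
        apply Subtype.ext
        simpa using hc
      rw [heq]
      exact Submodule.smul_mem _ _ (Submodule.subset_span ⟨⟨k, hkH⟩, rfl⟩)
    · have h0 : (DirectSum.decompose ℬ x k : R) = 0 := by
        by_contra h0
        exact hkH ⟨_, DsubM.decompose_mem ℬ hmul heB hxD k, SetLike.coe_mem _, h0⟩
      have heq : (⟨(DirectSum.decompose ℬ x k : R),
          DsubM.decompose_mem ℬ hmul heB hxD k⟩ : ↥D) = 0 := Subtype.ext (by simpa using h0)
      rw [heq]
      exact Submodule.zero_mem _
  set b : Module.Basis ↥Hsub F ↥D := Module.Basis.mk hvli hspan with hb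
  have hbapply : ∀ h : ↥Hsub, (↑(b h) : R) = u ↑h := by
    intro h
    rw [hb, Module.Basis.mk_apply]
  set τ : R →ₗ[F] F := tauD F e with hτ
  have hτdef : ∀ x : R, τ x = LinearMap.trace F ↥D (lmulD F e x) := fun _ => rfl
  -- τ vanishes on homogeneous elements of nontrivial degree
  have hτhom : ∀ k : G, k ≠ 1 → ∀ x : R, x ∈ D → x ∈ ℬ k → τ x = 0 := by
    intro k hk1 x hxD hxB
    rw [hτdef, LinearMap.trace_eq_matrix_trace F b, Matrix.trace]
    apply Finset.sum_eq_zero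
    intro h _
    rw [Matrix.diag_apply, LinearMap.toMatrix_apply]
    obtain ⟨hhD, hhB, hh0⟩ := hu ↑h h.2
    have happly : (↑(lmulD F e x (b h)) : R) = x * u ↑h := by
      rw [lmulD_apply hee hxD, hbapply]
    have hmem : x * u ↑h ∈ D := DsubM.mul_mem hxD hhD
    have hmemB : x * u ↑h ∈ ℬ (k * ↑h) := hmul _ _ _ hxB _ hhB
    by_cases hkh : Hp (k * ↑h)
    · obtain ⟨c, hc⟩ := hK3 _ hkh _ hmem hmemB
      have hkhH : (k * ↑h : G) ∈ Hsub := hkh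
      have heq : lmulD F e x (b h) = c • b ⟨k * ↑h, hkhH⟩ := by
        apply Subtype.ext
        rw [happly, hc]
        simp only [SetLike.val_smul]
        rw [hbapply]
      rw [heq, map_smul, Module.Basis.repr_self]
      have hneq : (⟨k * ↑h, hkhH⟩ : ↥Hsub) ≠ h := by
        intro hcon
        apply hk1
        have := congrArg Subtype.val hcon
        simpa using this
      simp [Finsupp.single_apply, hneq]
    · have hx0 : x * u ↑h = 0 := by
        by_contra h0
        exact hkh ⟨_, hmem, hmemB, h0⟩
      have heq : lmulD F e x (b h) = 0 := Subtype.ext (by rw [happly, hx0]; rfl)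
      rw [heq]
      simp
  have hτe : τ e = (n : F) := by
    have hid : lmulD F e e = LinearMap.id := by
      apply LinearMap.ext; intro x
      apply Subtype.ext
      rw [lmulD_apply hee (DsubM.e_mem hee)]
      exact DsubM.e_mul hee x.2
    rw [hτdef, hid]
    have : LinearMap.trace F ↥D LinearMap.id = (Module.finrank F ↥D : F) :=
      LinearMap.trace_id F ↥D
    rw [this, Module.finrank_eq_card_basis b, hn, Nat.card_eq_fintype_card]
  -- nondegeneracy of the trace form on the corner
  have hK4 : ∀ w : R, w ∈ D → (∀ x : R, x ∈ D → τ (w * x) = 0) → w = 0 := by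
    intro w hwD hw
    rw [← DirectSum.sum_support_decompose ℬ w]
    apply Finset.sum_eq_zero
    intro k hk
    have hwkD : (DirectSum.decompose ℬ w k : R) ∈ D := DsubM.decompose_mem ℬ hmul heB hwD k
    by_cases hkH : Hp k
    · obtain ⟨⟨hsD, hsB⟩, hsu, hus⟩ := hs k hkH
      obtain ⟨huD, huB, hu0⟩ := hu k hkH
      have hts : τ (w * s k) = 0 := hw (s k) hsD
      have hexp : w * s k = ∑ j ∈ (DirectSum.decompose ℬ w).support,
          (DirectSum.decompose ℬ w j : R) * s k := by
        conv_lhs => rw [← DirectSum.sum_support_decompose ℬ w]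
        rw [Finset.sum_mul]
      rw [hexp, map_sum] at hts
      have hterm : ∀ j ∈ (DirectSum.decompose ℬ w).support,
          τ ((DirectSum.decompose ℬ w j : R) * s k)
            = if j = k then τ ((DirectSum.decompose ℬ w j : R) * s k) else 0 := by
        intro j _
        by_cases hjk : j = k
        · rw [if_pos hjk]
        · rw [if_neg hjk]
          have hjD : (DirectSum.decompose ℬ w j : R) * s k ∈ D :=
            DsubM.mul_mem (DsubM.decompose_mem ℬ hmul heB hwD j) hsD
          have hjB : (DirectSum.decompose ℬ w j : R) * s k ∈ ℬ (j * k⁻¹) :=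
            hmul _ _ _ (SetLike.coe_mem _) _ hsB
          have hjk1 : j * k⁻¹ ≠ 1 := fun hcon => hjk (by
            rwa [mul_inv_eq_one] at hcon)
          exact hτhom _ hjk1 _ hjD hjB
      rw [Finset.sum_congr rfl hterm,
        Finset.sum_ite_eq' _ k (fun j => τ ((DirectSum.decompose ℬ w j : R) * s k)),
        if_pos hk] at hts
      obtain ⟨c, hc⟩ := hK3 k hkH _ hwkD (SetLike.coe_mem _)
      rw [hc, smul_mul_assoc, map_smul, hus, smul_eq_mul, hτe] at hts
      rcases mul_eq_zero.mp hts with h | h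
      · rw [hc, h, zero_smul]
      · exact absurd h hn0
    · by_contra h0
      exact hkH ⟨_, hwkD, SetLike.coe_mem _, h0⟩
  -- no square-zero two-sided ideals
  have hdagger : ∀ W : TwoSidedIdeal R, (∀ x ∈ W, ∀ y ∈ W, x * y = 0) → ∀ x ∈ W, x = 0 := by
    intro W hW
    have hcorner0 : ∀ w ∈ W, e * w * e = 0 := by
      intro w hw
      have hwD : e * w * e ∈ D := mem_DsubM.mpr ⟨w, by noncomm_ring⟩
      apply hK4 _ hwD
      intro x hxD
      have hyW : (e * w * e) * x ∈ W :=
        W.mul_mem_right _ _ (W.mul_mem_right _ _ (W.mul_mem_left _ _ hw))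
      have hyD : (e * w * e) * x ∈ D := DsubM.mul_mem hwD hxD
      have hyy : ((e * w * e) * x) * ((e * w * e) * x) = 0 := hW _ hyW _ hyW
      have hnil : IsNilpotent (lmulD F e ((e * w * e) * x)) := by
        refine ⟨2, ?_⟩
        apply LinearMap.ext; intro x'
        apply Subtype.ext
        have h2 : ((lmulD F e ((e * w * e) * x)) ^ 2) x'
            = lmulD F e ((e * w * e) * x) (lmulD F e ((e * w * e) * x) x') := by
          rw [pow_two]; rfl
        rw [h2, lmulD_apply hee hyD, lmulD_apply hee hyD, ← mul_assoc, hyy, zero_mul]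
        rfl
      have hniltr : IsNilpotent (τ ((e * w * e) * x)) := by
        rw [hτdef]
        exact LinearMap.isNilpotent_trace_of_isNilpotent hnil
      exact hniltr.eq_zero
    have hWe : ∀ w ∈ W, e * w = 0 := by
      intro w hw
      have h1span := one_mem_span_homog ℬ hmul hone hgr heB hne
      have hz := map_one_eq_zero_of_span h1span (LinearMap.mulLeft F (e * w)) ?_
      · rw [LinearMap.mulLeft_apply, mul_one] at hz
        exact hz
      · rintro t ⟨a, b2, ga, gb, ha, hb, rfl⟩
        rw [LinearMap.mulLeft_apply]
        have hwa : w * a ∈ W := W.mul_mem_right _ _ hw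
        calc (e * w) * (a * e * b2) = (e * (w * a) * e) * b2 := by noncomm_ring
          _ = 0 := by rw [hcorner0 _ hwa, zero_mul]
    intro x hx
    have h1span := one_mem_span_homog ℬ hmul hone hgr heB hne
    have hz := map_one_eq_zero_of_span h1span (LinearMap.mulRight F x) ?_
    · rw [LinearMap.mulRight_apply, one_mul] at hz
      exact hz
    · rintro t ⟨a, b2, ga, gb, ha, hb, rfl⟩
      rw [LinearMap.mulRight_apply]
      have hbx : b2 * x ∈ W := W.mul_mem_left _ _ hx
      calc (a * e * b2) * x = a * (e * (b2 * x)) := by noncomm_ring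
        _ = 0 := by rw [hWe _ hbx, mul_zero]
  -- Maschke averaging adapted to the two-sided ideal J
  set P : Submodule F R :=
    { carrier := {t : R | ∃ j ∈ J, e * j = t}
      add_mem' := by
        rintro t t' ⟨j, hj, rfl⟩ ⟨j', hj', rfl⟩
        exact ⟨j + j', J.add_mem hj hj', by rw [mul_add]⟩
      zero_mem' := ⟨0, J.zero_mem, by rw [mul_zero]⟩
      smul_mem' := by
        rintro c t ⟨j, hj, rfl⟩
        refine ⟨c • j, ?_, mul_smul_comm c e j⟩
        rw [Algebra.smul_def]
        exact J.mul_mem_left _ _ hj } with hP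
  have hPmem : ∀ t : R, t ∈ P ↔ ∃ j ∈ J, e * j = t := fun t => Iff.rfl
  set V : Submodule F R := LinearMap.range (LinearMap.mulLeft F e) with hV
  have hVmem : ∀ t : R, t ∈ V ↔ ∃ r : R, e * r = t := by
    intro t
    simp [hV, LinearMap.mem_range, LinearMap.mulLeft_apply]
  have hPJ : ∀ t ∈ P, t ∈ J := by
    rintro t ⟨j, hj, rfl⟩
    exact J.mul_mem_left _ _ hj
  have hDP : ∀ d ∈ D, ∀ t ∈ P, d * t ∈ P := by
    rintro d hd t ⟨j, hj, rfl⟩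
    refine ⟨d * j, J.mul_mem_left _ _ hj, ?_⟩
    calc e * (d * j) = (e * d) * j := by rw [mul_assoc]
      _ = d * j := by rw [DsubM.e_mul hee hd]
      _ = (d * e) * j := by rw [DsubM.mul_e hee hd]
      _ = d * (e * j) := by rw [mul_assoc]
  have heP : ∀ t ∈ P, e * t = t := by
    rintro t ⟨j, hj, rfl⟩
    rw [← mul_assoc, hee]
  have hPV : ∀ t ∈ P, t ∈ V := by
    rintro t ⟨j, hj, rfl⟩
    exact (hVmem _).mpr ⟨j, rfl⟩
  have heV : ∀ m ∈ V, e * m = m := by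
    intro m hm
    obtain ⟨r, rfl⟩ := (hVmem m).mp hm
    rw [← mul_assoc, hee]
  obtain ⟨C, hC⟩ := Submodule.exists_isCompl P
  set p : R →ₗ[F] R := P.subtype ∘ₗ Submodule.linearProjOfIsCompl P C hC with hp
  have hp1 : ∀ m : R, p m ∈ P := fun m => (Submodule.linearProjOfIsCompl P C hC m).2
  have hp2 : ∀ m ∈ P, p m = m := by
    intro m hm
    have := Submodule.linearProjOfIsCompl_apply_left hC ⟨m, hm⟩
    exact congrArg Subtype.val this
  set π : R →ₗ[F] R := (n : F)⁻¹ •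
      ∑ h : ↥Hsub, (LinearMap.mulLeft F (u ↑h)) ∘ₗ p ∘ₗ (LinearMap.mulLeft F (s ↑h)) with hπ
  have hπapp : ∀ m : R, π m = (n : F)⁻¹ • ∑ h : ↥Hsub, u ↑h * p (s ↑h * m) := by
    intro m
    rw [hπ]
    simp [LinearMap.sum_apply]
  have hπP : ∀ m : R, π m ∈ P := by
    intro m
    rw [hπapp]
    exact Submodule.smul_mem _ _ (Submodule.sum_mem _ fun h _ =>
      hDP _ (hu ↑h h.2).1 _ (hp1 _))
  have hπid : ∀ m ∈ P, π m = m := by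
    intro m hm
    rw [hπapp]
    have hterm : ∀ h : ↥Hsub, u ↑h * p (s ↑h * m) = m := by
      intro h
      obtain ⟨⟨hsD, hsB⟩, hsu, hus⟩ := hs ↑h h.2
      have hsm : s ↑h * m ∈ P := hDP _ hsD _ hm
      rw [hp2 _ hsm, ← mul_assoc, hus]
      exact heP _ hm
    rw [Finset.sum_congr rfl (fun h _ => hterm h), Finset.sum_const, Finset.card_univ,
      ← Nat.card_eq_fintype_card, ← hn, ← Nat.cast_smul_eq_nsmul F n m, smul_smul,
      inv_mul_cancel₀ hn0, one_smul]
  have hπcomm : ∀ g : G, Hp g → ∀ m : R, π (u g * m) = u g * π m := by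
    intro g hg m
    rw [hπapp, hπapp, mul_smul_comm]
    congr 1
    rw [Finset.mul_sum]
    set gH : ↥Hsub := ⟨g, hg⟩ with hgH
    apply Fintype.sum_equiv (Equiv.mulLeft gH⁻¹)
    intro x
    -- set k := the target index
    obtain ⟨k, hkH⟩ : ∃ k : G, Hp k ∧ (↑((Equiv.mulLeft gH⁻¹) x) : G) = k ∧ ↑x = g * k := by
      refine ⟨↑(gH⁻¹ * x), (gH⁻¹ * x).2, rfl, ?_⟩
      show ↑x = g * ↑(gH⁻¹ * x)
      have : (gH * (gH⁻¹ * x) : ↥Hsub) = x := by group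
      calc (↑x : G) = ↑(gH * (gH⁻¹ * x)) := by rw [this]
        _ = g * ↑(gH⁻¹ * x) := rfl
    obtain ⟨hk, hcoe, hxgk⟩ := hkH
    rw [hcoe, hxgk]
    -- now show: u (g*k) * p (s (g*k) * (u g * m)) = u g * (u k * p (s k * m))
    have hgk : Hp (g * k) := hHmul hg hk
    obtain ⟨hukD, hukB, huk0⟩ := hu k hk
    obtain ⟨hugD, hugB, hug0⟩ := hu g hg
    obtain ⟨hugkD, hugkB, hugk0⟩ := hu (g * k) hgk
    obtain ⟨⟨hskD, hskB⟩, hsku, huks⟩ := hs k hk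
    obtain ⟨⟨hsgkD, hsgkB⟩, hsgku, hugks⟩ := hs (g * k) hgk
    have hkinv : Hp k⁻¹ := hHinv hk
    -- the cocycle scalar
    have hAD : s (g * k) * u g ∈ D := DsubM.mul_mem hsgkD hugD
    have hAB : s (g * k) * u g ∈ ℬ k⁻¹ := by
      have := hmul _ _ _ hsgkB _ hugB
      rwa [show (g * k)⁻¹ * g = k⁻¹ by group] at this
    obtain ⟨c₁, hc₁⟩ := hK3 k⁻¹ hkinv _ hAD hAB
    have hsk' : s k ∈ ℬ k⁻¹ := hskB
    obtain ⟨c₂, hc₂⟩ := hK3 k⁻¹ hkinv (s k) hskD hsk'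
    have hsk0 : s k ≠ 0 := by
      intro h0
      rw [h0, zero_mul] at hsku
      exact hne hsku.symm
    have hc₂0 : c₂ ≠ 0 := by
      intro h0
      rw [h0, zero_smul] at hc₂
      exact hsk0 hc₂
    set c : F := c₁ * c₂⁻¹ with hc
    have hA : s (g * k) * u g = c • s k := by
      rw [hc₂, hc₁, smul_smul, hc, mul_assoc, inv_mul_cancel₀ hc₂0, mul_one]
    have hB : u g * u k = c • u (g * k) := by
      have hug : u g = c • (u (g * k) * s k) := by
        calc u g = e * u g := (DsubM.e_mul hee hugD).symm
          _ = (u (g * k) * s (g * k)) * u g := by rw [hugks]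
          _ = u (g * k) * (s (g * k) * u g) := by rw [mul_assoc]
          _ = u (g * k) * (c • s k) := by rw [hA]
          _ = c • (u (g * k) * s k) := by rw [mul_smul_comm]
      calc u g * u k = (c • (u (g * k) * s k)) * u k := by rw [← hug]
        _ = c • (u (g * k) * (s k * u k)) := by rw [smul_mul_assoc, mul_assoc]
        _ = c • (u (g * k) * e) := by rw [hsku]
        _ = c • u (g * k) := by rw [DsubM.mul_e hee hugkD]
    calc u (g * k) * p (s (g * k) * (u g * m))
        = u (g * k) * p ((s (g * k) * u g) * m) := by rw [mul_assoc]
      _ = u (g * k) * p ((c • s k) * m) := by rw [hA]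
      _ = u (g * k) * (c • p (s k * m)) := by rw [smul_mul_assoc, map_smul]
      _ = c • (u (g * k) * p (s k * m)) := by rw [mul_smul_comm]
      _ = (c • u (g * k)) * p (s k * m) := by rw [smul_mul_assoc]
      _ = (u g * u k) * p (s k * m) := by rw [← hB]
      _ = u g * (u k * p (s k * m)) := by rw [mul_assoc]
  set Q : Submodule F R := LinearMap.ker π ⊓ V with hQ
  have hQker : ∀ q ∈ Q, π q = 0 := fun q hq => LinearMap.mem_ker.mp hq.1
  have hQV : ∀ q ∈ Q, q ∈ V := fun q hq => hq.2
  have hPQ0 : ∀ m : R, m ∈ P → m ∈ Q → m = 0 := by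
    intro m hmP hmQ
    rw [← hπid m hmP]
    exact hQker m hmQ
  have hVsplit : ∀ m ∈ V, ∃ p₀ ∈ P, ∃ q₀ ∈ Q, m = p₀ + q₀ := by
    intro m hm
    refine ⟨π m, hπP m, m - π m, Submodule.mem_inf.mpr
      ⟨?_, Submodule.sub_mem _ hm (hPV _ (hπP m))⟩, by abel⟩
    rw [LinearMap.mem_ker, map_sub, hπid _ (hπP m), sub_self]
  have hDQ : ∀ d ∈ D, ∀ q ∈ Q, d * q ∈ Q := by
    intro d hd q hq
    have hexp : d * q = ∑ k ∈ (DirectSum.decompose ℬ d).support,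
        (DirectSum.decompose ℬ d k : R) * q := by
      conv_lhs => rw [← DirectSum.sum_support_decompose ℬ d]
      rw [Finset.sum_mul]
    rw [hexp]
    apply Submodule.sum_mem
    intro k hk
    have hdkD : (DirectSum.decompose ℬ d k : R) ∈ D := DsubM.decompose_mem ℬ hmul heB hd k
    by_cases hkH : Hp k
    · obtain ⟨c, hc⟩ := hK3 k hkH _ hdkD (SetLike.coe_mem _)
      rw [hc, smul_mul_assoc]
      apply Submodule.smul_mem
      obtain ⟨hukD, hukB, huk0⟩ := hu k hkH
      refine Submodule.mem_inf.mpr ⟨?_, ?_⟩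
      · rw [LinearMap.mem_ker, hπcomm k hkH q, hQker q hq, mul_zero]
      · refine (hVmem _).mpr ⟨u k * q, ?_⟩
        rw [← mul_assoc, DsubM.e_mul hee hukD]
    · have h0 : (DirectSum.decompose ℬ d k : R) = 0 := by
        by_contra h0
        exact hkH ⟨_, hdkD, SetLike.coe_mem _, h0⟩
      rw [h0, zero_mul]
      exact Submodule.zero_mem _
  set J' : Submodule R R := Submodule.span R ((Q : Set R)) with hJ'
  have hJ'Q : ∀ y ∈ J', ∀ r : R, e * (r * y) ∈ Q := by
    intro y hy
    induction hy using Submodule.span_induction with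
    | mem q hq =>
      intro r
      have hd : e * (r * e) ∈ D := mem_DsubM.mpr ⟨r, rfl⟩
      have heq : e * (r * q) = (e * (r * e)) * q := by
        have h1 : (e * (r * e)) * q = e * (r * (e * q)) := by noncomm_ring
        rw [h1, heV q (hQV q hq)]
      rw [heq]
      exact hDQ _ hd _ hq
    | zero =>
      intro r
      rw [mul_zero, mul_zero]
      exact Submodule.zero_mem _
    | add x y _ _ hx hy =>
      intro r
      have heq : e * (r * (x + y)) = e * (r * x) + e * (r * y) := by noncomm_ring
      rw [heq]
      exact Submodule.add_mem _ (hx r) (hy r)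
    | smul r' x _ hx =>
      intro r
      have heq : e * (r * (r' • x)) = e * ((r * r') * x) := by
        rw [smul_eq_mul]
        noncomm_ring
      rw [heq]
      exact hx (r * r')
  have hJinter : ∀ z : R, z ∈ J → z ∈ J' → z = 0 := by
    intro z hzJ hzJ'
    have h1span := one_mem_span_homog ℬ hmul hone hgr heB hne
    have hzval := map_one_eq_zero_of_span h1span (LinearMap.mulRight F z) ?_
    · rwa [LinearMap.mulRight_apply, one_mul] at hzval
    · rintro t ⟨a, b2, ga, gb, ha, hb, rfl⟩
      rw [LinearMap.mulRight_apply]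
      have hbz : e * (b2 * z) = 0 := by
        apply hPQ0
        · exact ⟨b2 * z, J.mul_mem_left _ _ hzJ, rfl⟩
        · exact hJ'Q z hzJ' b2
      calc (a * e * b2) * z = a * (e * (b2 * z)) := by noncomm_ring
        _ = 0 := by rw [hbz, mul_zero]
  have hJ'A : ∀ y ∈ J', ∀ j ∈ J, j * y = 0 := by
    intro y hy j hj
    apply hJinter
    · exact J.mul_mem_right _ _ hj
    · have : j • y ∈ J' := Submodule.smul_mem _ j hy
      rwa [smul_eq_mul] at this
  have hJA0 : ∀ z : R, z ∈ J → (∀ j ∈ J, j * z = 0) → z = 0 := by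
    intro z hz hz2
    set W : TwoSidedIdeal R := TwoSidedIdeal.mk'
      {t : R | t ∈ J ∧ ∀ j ∈ J, j * t = 0}
      ⟨J.zero_mem, fun j _ => mul_zero j⟩
      (fun {t t'} ht ht' => ⟨J.add_mem ht.1 ht'.1, fun j hj => by
        rw [mul_add, ht.2 j hj, ht'.2 j hj, add_zero]⟩)
      (fun {t} ht => ⟨J.neg_mem ht.1, fun j hj => by rw [mul_neg, ht.2 j hj, neg_zero]⟩)
      (fun {x y} hy => ⟨J.mul_mem_left _ _ hy.1, fun j hj => by
        rw [← mul_assoc]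
        exact hy.2 _ (J.mul_mem_right _ _ hj)⟩)
      (fun {x y} hx => ⟨J.mul_mem_right _ _ hx.1, fun j hj => by
        rw [← mul_assoc, hx.2 j hj, zero_mul]⟩) with hW
    have hWmem : ∀ t : R, t ∈ W ↔ (t ∈ J ∧ ∀ j ∈ J, j * t = 0) :=
      fun t => TwoSidedIdeal.mem_mk' _ _ _ _ _ _ t
    have hpair : ∀ x ∈ W, ∀ y ∈ W, x * y = 0 := by
      intro x hx y hy
      exact ((hWmem y).mp hy).2 x ((hWmem x).mp hx).1
    exact hdagger W hpair z ((hWmem z).mpr ⟨hz, hz2⟩)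
  -- split 1 = c + a
  have h1split : ∃ c₀ : R, c₀ ∈ J ∧ ∃ y : R, y ∈ J' ∧ (1 : R) = c₀ + y := by
    have h1span := one_mem_span_homog ℬ hmul hone hgr heB hne
    have key : ∀ x : R, x ∈ Submodule.span F {t : R | ∃ (a b : R) (ga gb : G),
        a ∈ ℬ ga ∧ b ∈ ℬ gb ∧ t = a * e * b} →
        ∃ c₀ : R, c₀ ∈ J ∧ ∃ y : R, y ∈ J' ∧ x = c₀ + y := by
      intro x hx
      induction hx using Submodule.span_induction with
      | mem t ht =>
        obtain ⟨a0, b0, ga, gb, ha0, hb0, rfl⟩ := ht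
        have hb0V : e * b0 ∈ V := (hVmem _).mpr ⟨b0, rfl⟩
        obtain ⟨p₀, hp₀, q₀, hq₀, hsplit⟩ := hVsplit _ hb0V
        refine ⟨a0 * p₀, J.mul_mem_left _ _ (hPJ _ hp₀), a0 * q₀, ?_, ?_⟩
        · have : a0 • q₀ ∈ J' := Submodule.smul_mem _ a0 (Submodule.subset_span hq₀)
          rwa [smul_eq_mul] at this
        · calc a0 * e * b0 = a0 * (e * b0) := by rw [mul_assoc]
            _ = a0 * (p₀ + q₀) := by rw [← hsplit]
            _ = a0 * p₀ + a0 * q₀ := by rw [mul_add]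
      | zero => exact ⟨0, J.zero_mem, 0, Submodule.zero_mem _, by rw [add_zero]⟩
      | add x y _ _ hx hy =>
        obtain ⟨cx, hcx, yx, hyx, hex⟩ := hx
        obtain ⟨cy, hcy, yy, hyy, hey⟩ := hy
        exact ⟨cx + cy, J.add_mem hcx hcy, yx + yy, Submodule.add_mem _ hyx hyy, by
          rw [hex, hey]; abel⟩
      | smul cf x _ hx =>
        obtain ⟨cx, hcx, yx, hyx, hex⟩ := hx
        refine ⟨cf • cx, ?_, cf • yx, ?_, by rw [hex, smul_add]⟩
        · rw [Algebra.smul_def]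
          exact J.mul_mem_left _ _ hcx
        · rw [Algebra.smul_def, ← smul_eq_mul]
          exact Submodule.smul_mem _ _ hyx
    exact key 1 h1span
  obtain ⟨c₀, hc₀J, a, haJ', h1eq⟩ := h1split
  have hxa0 : ∀ x ∈ J, x * a = 0 := fun x hx => hJ'A a haJ' x hx
  have h_xc : ∀ x ∈ J, x * c₀ = x := by
    intro x hx
    have hxx : x * 1 = x * c₀ + x * a := by rw [h1eq, mul_add]
    rw [mul_one, hxa0 x hx, add_zero] at hxx
    exact hxx.symm
  have h_ax : ∀ x ∈ J, a * x = 0 := by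
    intro x hx
    apply hJA0
    · exact J.mul_mem_left _ _ hx
    · intro j hj
      rw [← mul_assoc, hJ'A a haJ' j hj, zero_mul]
  have h_cx : ∀ x ∈ J, c₀ * x = x := by
    intro x hx
    have hxx : 1 * x = c₀ * x + a * x := by rw [h1eq, add_mul]
    rw [one_mul, h_ax x hx, add_zero] at hxx
    exact hxx.symm
  have hcentral : ∀ r : R, c₀ * r = r * c₀ := by
    intro r
    have hr : r = r * c₀ + r * a := by
      calc r = r * 1 := (mul_one r).symm
        _ = r * (c₀ + a) := by rw [← h1eq]
        _ = r * c₀ + r * a := by rw [mul_add]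
    have h2 : c₀ * (r * c₀) = r * c₀ := h_cx _ (J.mul_mem_left _ _ hc₀J)
    have h3 : c₀ * (r * a) = 0 := by
      rw [← mul_assoc]
      exact hxa0 _ (J.mul_mem_right _ _ hc₀J)
    calc c₀ * r = c₀ * (r * c₀ + r * a) := by rw [← hr]
      _ = c₀ * (r * c₀) + c₀ * (r * a) := by rw [mul_add]
      _ = r * c₀ + 0 := by rw [h2, h3]
      _ = r * c₀ := by rw [add_zero]
  have hcc : c₀ * c₀ = c₀ := h_xc c₀ hc₀J
  have hcenter : c₀ ∈ Subalgebra.center F R :=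
    Subalgebra.mem_center_iff.mpr (fun r => (hcentral r).symm)
  rw [hZ, Algebra.mem_bot] at hcenter
  obtain ⟨lam, hlam⟩ := hcenter
  have hinj : Function.Injective (algebraMap F R) := RingHom.injective _
  have hlam2 : lam * lam = lam := by
    apply hinj
    rw [map_mul, hlam, hcc]
  have hlam01 : lam = 0 ∨ lam = 1 := by
    have hfac : lam * (lam - 1) = 0 := by rw [mul_sub, mul_one, hlam2, sub_self]
    rcases mul_eq_zero.mp hfac with h | h
    · exact Or.inl h
    · exact Or.inr (sub_eq_zero.mp h)
  rcases hlam01 with h0 | h1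
  · left
    apply SetLike.ext
    intro x
    rw [TwoSidedIdeal.mem_bot]
    constructor
    · intro hx
      have hxx := h_xc x hx
      rw [← hlam, h0, map_zero, mul_zero] at hxx
      exact hxx.symm
    · rintro rfl
      exact J.zero_mem
  · right
    apply SetLike.ext
    intro x
    simp only [TwoSidedIdeal.mem_top, iff_true]
    have h1J : (1 : R) ∈ J := by
      rw [← hlam, h1, map_one] at hc₀J
      exact hc₀J
    have hxx := J.mul_mem_left x 1 h1J
    rwa [mul_one] at hxx



end Graded

section Fwd
variable {F : Type*} [Field F] [IsAlgClosed F]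
  {R : Type*} [Ring R] [Algebra F R] [FiniteDimensional F R]

lemma center_eq_bot_of_simple
    (hR2 : ∃ x y : R, x * y ≠ 0)
    (hs : ∀ J : TwoSidedIdeal R, J = ⊥ ∨ J = ⊤) :
    Subalgebra.center F R = ⊥ := by
  classical
  obtain ⟨x₀, y₀, hxy₀⟩ := hR2
  have hRnt : Nontrivial R := nontrivial_of_ne (x₀ * y₀) 0 hxy₀
  apply le_antisymm ?_ bot_le
  intro z hz
  rw [Subalgebra.mem_center_iff] at hz
  obtain ⟨μ, hμ⟩ := Module.End.exists_eigenvalue (LinearMap.mulLeft F z)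
  obtain ⟨vv, hvv⟩ := hμ.exists_hasEigenvector
  have hveq : z * vv = μ • vv := by
    have := hvv.apply_eq_smul
    rwa [LinearMap.mulLeft_apply] at this
  set w : R := z - algebraMap F R μ with hw
  have hwc : ∀ r : R, w * r = r * w := by
    intro r
    rw [hw, sub_mul, mul_sub, hz r]
    congr 1
    rw [Algebra.commutes]
  set Ann : TwoSidedIdeal R := TwoSidedIdeal.mk' {t : R | w * t = 0}
    (mul_zero w)
    (fun {t t'} ht ht' => by
      rw [Set.mem_setOf_eq] at ht ht' ⊢
      rw [mul_add, ht, ht', add_zero])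
    (fun {t} ht => by
      rw [Set.mem_setOf_eq] at ht ⊢
      rw [mul_neg, ht, neg_zero])
    (fun {x y} hy => by
      rw [Set.mem_setOf_eq] at hy ⊢
      calc w * (x * y) = (w * x) * y := by rw [mul_assoc]
        _ = (x * w) * y := by rw [hwc x]
        _ = x * (w * y) := by rw [mul_assoc]
        _ = 0 := by rw [hy, mul_zero])
    (fun {x y} hx => by
      rw [Set.mem_setOf_eq] at hx ⊢
      rw [← mul_assoc, hx, zero_mul]) with hAnn
  have hAnnmem : ∀ t : R, t ∈ Ann ↔ w * t = 0 :=
    fun t => TwoSidedIdeal.mem_mk' _ _ _ _ _ _ t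
  have hvAnn : vv ∈ Ann := by
    rw [hAnnmem, hw, sub_mul, hveq, Algebra.smul_def, sub_self]
  rcases hs Ann with hbot | htop
  · exfalso
    rw [hbot, TwoSidedIdeal.mem_bot] at hvAnn
    exact hvv.right hvAnn
  · have h1 : (1 : R) ∈ Ann := by
      rw [htop]
      exact TwoSidedIdeal.mem_top R
    rw [hAnnmem, mul_one, hw, sub_eq_zero] at h1
    rw [Algebra.mem_bot]
    exact ⟨μ, h1.symm⟩


end Fwd

/-- Under the standing characteristic assumption, a finite-dimensional `G`-graded
algebra over an algebraically closed field is simple (as an ungraded algebra) if and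
only if it is graded simple and its center equals `F`. -/
theorem stmt_19 {G : Type*} [Group G] [DecidableEq G] {F : Type*} [Field F] [IsAlgClosed F]
    {R : Type*} [Ring R] [Algebra F R] [FiniteDimensional F R]
    (ℬ : G → Submodule F R) [DirectSum.Decomposition ℬ]
    (hmul : ∀ g h : G, ∀ x ∈ ℬ g, ∀ y ∈ ℬ h, x * y ∈ ℬ (g * h))
    (hone : (1 : R) ∈ ℬ (1 : G))
    -- `char F = 0` or `char F` is coprime to the order of every finite subgroup of `G`:
    (hchar : ringChar F = 0 ∨
      ∀ H : Subgroup G, Finite H → Nat.Coprime (ringChar F) (Nat.card H)) :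
    -- `R` is simple ...
    ((∃ x y : R, x * y ≠ 0) ∧ ∀ J : TwoSidedIdeal R, J = ⊥ ∨ J = ⊤) ↔
      -- ... iff `R` is graded simple and the center of `R` equals `F`:
      ((∃ x y : R, x * y ≠ 0) ∧
        (∀ J : TwoSidedIdeal R,
          (∀ x ∈ J, ∀ g : G, ((DirectSum.decompose ℬ x) g : R) ∈ J) → J = ⊥ ∨ J = ⊤)) ∧
      Subalgebra.center F R = ⊥ := by
  constructor
  · rintro ⟨hR2, hs⟩
    exact ⟨⟨hR2, fun J _ => hs J⟩, center_eq_bot_of_simple hR2 hs⟩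
  · rintro ⟨⟨hR2, hgr⟩, hZ⟩
    exact ⟨hR2, fun J => graded_backward ℬ hmul hone hchar hR2 hgr hZ J⟩
end
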